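/- arXiv:1508.07230 — 8 statements merged into one kernel-verified Lean document; each statement's English description precedes it below -/
import Mathlib

section
/- With γ := (2 − 1/ln 2)⁻¹, there exist a constant C > 0 and a threshold x₀ > 0 such that for all x ≥ x₀, P(Z ≤ −x) ≥ exp(−exp(γ·x + ln(ln x) + C)). (Lower bound of Theorem 1(i): left tail of the limiting Quicksort distribution.) -/
open MeasureTheory ProbabilityTheory Real

private lemma g_bound' {δ u : ℝ} (hδ0 : 0 < δ) (hδ : δ ≤ 1/4) (hu : |u - 1/2| ≤ δ) :
    2*u*Real.log u + 2*(1-u)*Real.log (1-u) + 1 ≤ 1 - 2*Real.log 2 + 8*δ^2 := by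
  have hu1 : 1/4 ≤ u := by have := abs_le.1 hu; linarith [this.1]
  have hu2 : u ≤ 3/4 := by have := abs_le.1 hu; linarith [this.2]
  have h2u : (0:ℝ) < 2*u := by linarith
  have h2v : (0:ℝ) < 2*(1-u) := by linarith
  have e1 : Real.log u = Real.log (2*u) - Real.log 2 := by
    rw [Real.log_mul (by norm_num) (by linarith)]; ring
  have e2 : Real.log (1-u) = Real.log (2*(1-u)) - Real.log 2 := by
    rw [Real.log_mul (by norm_num) (by linarith)]; ring
  have b1 : Real.log (2*u) ≤ 2*u - 1 := Real.log_le_sub_one_of_pos h2u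
  have b2 : Real.log (2*(1-u)) ≤ 2*(1-u) - 1 := Real.log_le_sub_one_of_pos h2v
  have m1 : 2*u*Real.log (2*u) ≤ 2*u*(2*u-1) := by nlinarith
  have m2 : 2*(1-u)*Real.log (2*(1-u)) ≤ 2*(1-u)*(2*(1-u)-1) := by nlinarith
  have hs : (2*u-1)^2 ≤ (2*δ)^2 := by
    have h : |2*u-1| ≤ 2*δ := by
      have h2 : |2*(u - 1/2)| ≤ 2*δ := by
        rw [abs_mul]; simp [abs_of_nonneg]; linarith [hu]
      convert h2 using 2; ring
    nlinarith [abs_nonneg (2*u-1), sq_abs (2*u-1)]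
  rw [e1, e2]
  nlinarith

private lemma exponent_bound {l b γ x K₀ L : ℝ} {n : ℕ}
    (hl1 : (0.6931471803:ℝ) < l) (hl2 : l < 0.6931471808)
    (hb : b = 2*l - 1) (hγ : γ = l/b) (hx : 100 ≤ x) (hK₀ : 0 ≤ K₀)
    (hlogx : 1 ≤ Real.log x)
    (hLval : L = Real.log x - l + K₀)
    (hn : (n:ℝ) < x / (b - 8*(1/x)^2) + 1) :
    ((n:ℝ)+1) * l + Real.log L ≤ γ * x + Real.log (Real.log x) + (K₀ + 4) := by
  have hx0 : (0:ℝ) < x := by linarith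
  have hb1 : (0.38:ℝ) < b := by rw [hb]; linarith
  have hδsq : 8*(1/x)^2 ≤ 0.001 := by
    have h : (1/x) ≤ 0.01 := by rw [div_le_iff₀ hx0]; linarith
    have h0 : (0:ℝ) ≤ (1/x) := by positivity
    nlinarith
  have hapos : (0:ℝ) < b - 8*(1/x)^2 := by linarith
  have hγb : γ * b = l := by rw [hγ]; field_simp
  have hγpos : 0 < γ := by rw [hγ]; positivity
  have hγlt : γ < 1.9 := by rw [hγ, div_lt_iff₀ (by linarith)]; nlinarith
  -- part 1 : (x/a) * l ≤ γ x + 1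
  have h2 : (x / (b - 8*(1/x)^2)) * l ≤ γ*x + 1 := by
    rw [div_mul_eq_mul_div, div_le_iff₀ hapos]
    have e1 : γ * x * (b - 8*(1/x)^2) = l*x - 8*γ/x := by
      field_simp
      linear_combination x^2 * hγb
    have h8 : 8*γ/x ≤ 0.16 := by
      rw [div_le_iff₀ hx0]; nlinarith
    nlinarith
  have h1 : ((n:ℝ)+1) * l ≤ (x / (b - 8*(1/x)^2)) * l + 2*l :=
    calc ((n:ℝ)+1) * l ≤ (x / (b - 8*(1/x)^2) + 2) * l := by
          apply mul_le_mul_of_nonneg_right (by linarith) (by linarith)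
      _ = (x / (b - 8*(1/x)^2)) * l + 2*l := by ring
  -- part 2 : log L ≤ log log x + K₀
  have hApos : (0:ℝ) < Real.log x := by linarith
  have hLle : L ≤ Real.log x + K₀ := by rw [hLval]; linarith
  have hLpos : 0 < L := by rw [hLval]; linarith
  have p1 : Real.log L ≤ Real.log (Real.log x + K₀) := Real.log_le_log hLpos hLle
  have hfac : Real.log x + K₀ = Real.log x * (1 + K₀ / Real.log x) := by field_simp
  have p2 : Real.log (Real.log x * (1 + K₀ / Real.log x))
      = Real.log (Real.log x) + Real.log (1 + K₀/Real.log x) :=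
    Real.log_mul (ne_of_gt hApos) (ne_of_gt (by positivity))
  have p3 : Real.log (1 + K₀/Real.log x) ≤ K₀/Real.log x := by
    have := Real.log_le_sub_one_of_pos (show (0:ℝ) < 1 + K₀/Real.log x by positivity)
    linarith
  have p4 : K₀ / Real.log x ≤ K₀ := by
    rw [div_le_iff₀ hApos]; nlinarith
  rw [hfac] at p1
  rw [p2] at p1
  linarith

set_option maxHeartbeats 1000000 in
/-- Lower bound of Theorem 1(i) (left tail of the limiting Quicksort
distribution): with `γ := (2 - 1/ln 2)⁻¹`, there are `C > 0` and `x₀ > 0` such that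
for all `x ≥ x₀`, `P(Z ≤ -x) ≥ exp(-exp(γ·x + ln ln x + C))`. -/
theorem quicksort_left_tail_lower_bound
    {Ω : Type*} [MeasureSpace Ω] [IsProbabilityMeasure (ℙ : Measure Ω)]
    (Z Z' Z'' U : Ω → ℝ) (g : ℝ → ℝ)
    (hg : ∀ u : ℝ, g u = 2 * u * Real.log u + 2 * (1 - u) * Real.log (1 - u) + 1)
    (hZm : Measurable Z) (hZ'm : Measurable Z') (hZ''m : Measurable Z'')
    (hUm : Measurable U)
    (hZ' : IdentDistrib Z' Z ℙ ℙ) (hZ'' : IdentDistrib Z'' Z ℙ ℙ)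
    (hU : Measure.map U ℙ = volume.restrict (Set.Icc (0 : ℝ) 1))
    (hindep : iIndepFun (β := fun _ : Fin 3 => ℝ) ![U, Z', Z''] ℙ)
    (hrec : IdentDistrib Z (fun ω => U ω * Z' ω + (1 - U ω) * Z'' ω + g (U ω)) ℙ ℙ)
    (hmean : ∫ ω, Z ω ∂ℙ = 0)
    (hmgf : ∀ t : ℝ, Integrable (fun ω => Real.exp (t * Z ω)) ℙ) :
    ∃ C > (0 : ℝ), ∃ x₀ > (0 : ℝ), ∀ x ≥ x₀,
      Real.exp (-Real.exp ((2 - 1 / Real.log 2)⁻¹ * x + Real.log (Real.log x) + C))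
        ≤ (ℙ {ω | Z ω ≤ -x}).toReal := by
  -- notation
  set l : ℝ := Real.log 2 with hl
  have hl1 : (0.6931471803:ℝ) < l := Real.log_two_gt_d9
  have hl2 : l < 0.6931471808 := Real.log_two_lt_d9
  set b : ℝ := 2 * l - 1 with hb
  have hb1 : (0.38:ℝ) < b := by rw [hb]; linarith
  have hb2 : b < 0.39 := by rw [hb]; linarith
  -- the tail function
  set f : ℝ → ℝ := fun t => (ℙ {ω | Z ω ≤ -t}).toReal with hf
  have hfin : ∀ s : Set Ω, ℙ s ≠ ⊤ := fun s => measure_ne_top ℙ s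
  have f_nonneg : ∀ t, 0 ≤ f t := fun t => ENNReal.toReal_nonneg
  have f_le_one : ∀ t, f t ≤ 1 := by
    intro t
    rw [hf]
    have := prob_le_one (μ := (ℙ : Measure Ω)) (s := {ω | Z ω ≤ -t})
    calc (ℙ {ω | Z ω ≤ -t}).toReal ≤ (1 : ENNReal).toReal :=
          ENNReal.toReal_mono (by simp) this
      _ = 1 := by simp
  have f_mono : ∀ s t : ℝ, s ≤ t → f t ≤ f s := by
    intro s t hst
    apply ENNReal.toReal_mono (hfin _)
    apply measure_mono
    intro ω hω
    simp only [Set.mem_setOf_eq] at *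
    linarith
  -- Z is integrable
  have hZint : Integrable Z ℙ := by
    have h1 := hmgf 1
    have h2 := hmgf (-1)
    simp only [one_mul, neg_one_mul] at h1 h2
    refine (h1.add h2).mono' hZm.aestronglyMeasurable ?_
    filter_upwards with ω
    have e1 := Real.add_one_le_exp (Z ω)
    have e2 := Real.add_one_le_exp (-Z ω)
    have p1 := (Real.exp_pos (Z ω)).le
    have p2 := (Real.exp_pos (-Z ω)).le
    rw [Real.norm_eq_abs, abs_le]
    constructor <;> simp only [Pi.add_apply] <;> nlinarith [abs_nonneg (Z ω)]
  -- positivity of the base probability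
  have hp0 : 0 < f 0 := by
    rw [hf]
    have hne : ℙ {ω | Z ω ≤ -(0:ℝ)} ≠ 0 := by
      intro h0
      have hpos : ∀ᵐ ω ∂ℙ, 0 < Z ω := by
        rw [ae_iff]
        convert h0 using 2
        ext ω
        simp
      have hZ0 : Z =ᵐ[ℙ] 0 := by
        rw [← MeasureTheory.integral_eq_zero_iff_of_nonneg_ae
          (hpos.mono fun ω h => h.le) hZint]
        exact hmean
      have : ∀ᵐ ω ∂ℙ, 0 < Z ω ∧ Z ω = 0 := hpos.and hZ0
      obtain ⟨ω, h1, h2⟩ := this.exists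
      rw [h2] at h1; exact lt_irrefl 0 h1
    simp only []
    exact ENNReal.toReal_pos hne (hfin _)
  set p₀ : ℝ := f 0 with hp₀def
  -- the recursive step inequality
  have step : ∀ δ x : ℝ, 0 < δ → δ ≤ 1/4 →
      2*δ * f (x - (b - 8*δ^2)) * f (x - (b - 8*δ^2)) ≤ f x := by
    intro δ x hδ0 hδ
    set y : ℝ := x - (b - 8*δ^2) with hy
    set I : Set ℝ := Set.Icc (1/2-δ) (1/2+δ) with hI
    have hprod := hindep.measure_inter_preimage_eq_mul (S := Finset.univ)
      (sets := ![I, Set.Iic (-y), Set.Iic (-y)])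
      (fun i _ => by fin_cases i <;> simp [I])
    have hset : (⋂ i ∈ Finset.univ, (![U, Z', Z''] i) ⁻¹' (![I, Set.Iic (-y), Set.Iic (-y)] i))
        = U ⁻¹' I ∩ Z' ⁻¹' Set.Iic (-y) ∩ Z'' ⁻¹' Set.Iic (-y) := by
      ext ω
      simp [Set.mem_iInter, Fin.forall_fin_succ, Set.mem_inter_iff]
      tauto
    rw [hset, Fin.prod_univ_three] at hprod
    simp only [Matrix.cons_val_zero, Matrix.cons_val_one, Matrix.head_cons,
      Matrix.cons_val_two, Matrix.tail_cons] at hprod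
    have hUI : ℙ (U ⁻¹' I) = ENNReal.ofReal (2*δ) := by
      have hmI : MeasurableSet I := measurableSet_Icc
      rw [← Measure.map_apply hUm hmI, hU, Measure.restrict_apply hmI]
      have hsub : I ∩ Set.Icc (0:ℝ) 1 = I := by
        apply Set.inter_eq_self_of_subset_left
        intro u hu
        simp only [I, Set.mem_Icc] at hu ⊢
        constructor <;> linarith [hu.1, hu.2]
      rw [hsub, hI, Real.volume_Icc]
      norm_num
      ring_nf
      rw [ENNReal.ofReal_mul hδ0.le, ENNReal.ofReal_ofNat]
    have hZ'eq : ℙ (Z' ⁻¹' Set.Iic (-y)) = ℙ {ω | Z ω ≤ -y} :=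
      hZ'.measure_mem_eq measurableSet_Iic
    have hZ''eq : ℙ (Z'' ⁻¹' Set.Iic (-y)) = ℙ {ω | Z ω ≤ -y} :=
      hZ''.measure_mem_eq measurableSet_Iic
    have hincl : U ⁻¹' I ∩ Z' ⁻¹' Set.Iic (-y) ∩ Z'' ⁻¹' Set.Iic (-y)
        ⊆ (fun ω => U ω * Z' ω + (1 - U ω) * Z'' ω + g (U ω)) ⁻¹' Set.Iic (-x) := by
      rintro ω ⟨⟨hu, h1⟩, h2⟩
      simp only [Set.mem_preimage, Set.mem_Iic] at h1 h2 ⊢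
      simp only [I, Set.mem_preimage, Set.mem_Icc] at hu
      have hu0 : (0:ℝ) ≤ U ω := by linarith [hu.1]
      have hu1 : (0:ℝ) ≤ 1 - U ω := by linarith [hu.2]
      have habs : |U ω - 1/2| ≤ δ := abs_le.2 ⟨by linarith [hu.1], by linarith [hu.2]⟩
      have hgb : g (U ω) ≤ 1 - 2*l + 8*δ^2 := by
        rw [hg]; exact g_bound' hδ0 hδ habs
      have m1 : U ω * Z' ω ≤ U ω * (-y) := mul_le_mul_of_nonneg_left h1 hu0
      have m2 : (1 - U ω) * Z'' ω ≤ (1 - U ω) * (-y) := mul_le_mul_of_nonneg_left h2 hu1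
      have hyx : y = x - (b - 8*δ^2) := hy
      rw [hb] at hyx
      nlinarith
    have hrecx : ℙ {ω | Z ω ≤ -x}
        = ℙ ((fun ω => U ω * Z' ω + (1 - U ω) * Z'' ω + g (U ω)) ⁻¹' Set.Iic (-x)) :=
      hrec.measure_mem_eq measurableSet_Iic
    have key : ENNReal.ofReal (2*δ) * ℙ {ω | Z ω ≤ -y} * ℙ {ω | Z ω ≤ -y}
        ≤ ℙ {ω | Z ω ≤ -x} := by
      rw [hrecx]
      calc ENNReal.ofReal (2*δ) * ℙ {ω | Z ω ≤ -y} * ℙ {ω | Z ω ≤ -y}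
          = ℙ (U ⁻¹' I ∩ Z' ⁻¹' Set.Iic (-y) ∩ Z'' ⁻¹' Set.Iic (-y)) := by
            rw [hprod, hUI, hZ'eq, hZ''eq]
        _ ≤ _ := measure_mono hincl
    have := ENNReal.toReal_mono (hfin _) key
    rw [ENNReal.toReal_mul, ENNReal.toReal_mul, ENNReal.toReal_ofReal (by linarith)] at this
    exact this
  -- iterate the step
  have iter : ∀ δ : ℝ, 0 < δ → δ ≤ 1/4 → ∀ n : ℕ,
      (2*δ*p₀)^(2^(n+1)) ≤ f ((n:ℝ) * (b - 8*δ^2)) := by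
    intro δ hδ0 hδ n
    set q : ℝ := 2*δ*p₀ with hq
    have hq0 : 0 < q := by positivity
    have hq2δ : q ≤ 2*δ := by
      nlinarith [f_le_one 0]
    have hq1 : q ≤ 1 := by linarith
    have main : ∀ n : ℕ, q^(2^(n+1) - 1) ≤ f ((n:ℝ) * (b - 8*δ^2)) := by
      intro n
      induction n with
      | zero =>
        simp only [Nat.cast_zero, zero_mul, pow_one]
        calc q^(2^(0+1) - 1) = q := by norm_num
          _ ≤ p₀ := by nlinarith
          _ = f 0 := rfl
      | succ n ih =>
        have hstep := step δ ((n+1:ℕ) * (b - 8*δ^2)) hδ0 hδ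
        have harg : ((n+1:ℕ):ℝ) * (b - 8*δ^2) - (b - 8*δ^2) = (n:ℝ) * (b - 8*δ^2) := by
          push_cast; ring
        rw [harg] at hstep
        have hchain : q^(2^(n+2) - 1) ≤ 2*δ * f ((n:ℝ)*(b - 8*δ^2)) * f ((n:ℝ)*(b - 8*δ^2)) := by
          have hfn := f_nonneg ((n:ℝ)*(b - 8*δ^2))
          have hpow : q^(2^(n+2) - 1) = q * (q^(2^(n+1) - 1))^2 := by
            have h1 : 1 ≤ 2^(n+1) := Nat.one_le_two_pow
            have h2 : 2^(n+2) = 2 * 2^(n+1) := by rw [pow_succ]; ring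
            have hexp : 2^(n+2) - 1 = (2^(n+1) - 1) * 2 + 1 := by omega
            rw [hexp, pow_succ, pow_mul]
            ring
          rw [hpow]
          have h1 : 0 ≤ q^(2^(n+1)-1) := pow_nonneg hq0.le _
          have hsq : (q^(2^(n+1)-1))^2 ≤ (f ((n:ℝ)*(b - 8*δ^2)))^2 :=
            pow_le_pow_left₀ h1 ih 2
          calc q * (q^(2^(n+1)-1))^2 ≤ (2*δ) * (f ((n:ℝ)*(b - 8*δ^2)))^2 :=
                mul_le_mul hq2δ hsq (by positivity) (by linarith)
            _ = 2*δ * f ((n:ℝ)*(b - 8*δ^2)) * f ((n:ℝ)*(b - 8*δ^2)) := by ring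
        calc q^(2^(n+1+1) - 1) ≤ 2*δ * f ((n:ℝ)*(b-8*δ^2)) * f ((n:ℝ)*(b-8*δ^2)) := hchain
          _ ≤ f (((n+1:ℕ):ℝ) * (b - 8*δ^2)) := hstep
    calc q^(2^(n+1)) ≤ q^(2^(n+1) - 1) :=
          pow_le_pow_of_le_one hq0.le hq1 (Nat.sub_le _ _)
      _ ≤ f ((n:ℝ) * (b - 8*δ^2)) := main n
  -- now the asymptotic analysis
  set K₀ : ℝ := -Real.log p₀ with hK₀
  have hK₀0 : 0 ≤ K₀ := by
    rw [hK₀]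
    simp only [neg_nonneg]
    exact Real.log_nonpos (f_nonneg 0) (f_le_one 0)
  have hγ : (2 - 1/l)⁻¹ = l / b := by
    rw [hb]
    have : l ≠ 0 := by linarith
    have : 2*l - 1 ≠ 0 := by linarith
    field_simp
  set γ : ℝ := l / b with hγdef
  have hγpos : 0 < γ := by positivity
  have hγlt : γ < 1.9 := by
    rw [hγdef, div_lt_iff₀ (by linarith)]; nlinarith
  refine ⟨K₀ + 4, by linarith, 100, by norm_num, ?_⟩
  intro x hx
  have hx0 : (0:ℝ) < x := by linarith
  -- choose δ = 1/x
  set δ : ℝ := 1/x with hδdef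
  have hδ0 : 0 < δ := by positivity
  have hδ14 : δ ≤ 1/4 := by
    rw [hδdef, div_le_div_iff₀ hx0 (by norm_num)]; linarith
  set a : ℝ := b - 8*δ^2 with ha
  have hδle : δ ≤ 0.01 := by
    rw [hδdef, div_le_iff₀ hx0]; linarith
  have hδsq : 8*δ^2 ≤ 0.001 := by
    have h := mul_le_mul hδle hδle hδ0.le (by norm_num : (0:ℝ) ≤ 0.01)
    rw [sq]; linarith
  have hδnn : (0:ℝ) ≤ 8*δ^2 := by positivity
  have ha1 : 0.37 < a := by rw [ha]; linarith
  have ha2 : a < 0.39 := by rw [ha]; linarith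
  have hapos : 0 < a := by linarith
  set n : ℕ := ⌈x / a⌉₊ with hn
  have hxa0 : 0 ≤ x / a := div_nonneg hx0.le hapos.le
  have hn1 : x ≤ (n:ℝ) * a := by
    rw [hn]
    have h := Nat.le_ceil (x / a)
    calc x = (x / a) * a := (div_mul_cancel₀ _ (ne_of_gt hapos)).symm
      _ ≤ (⌈x/a⌉₊ : ℝ) * a := mul_le_mul_of_nonneg_right h hapos.le
  have hn2 : (n:ℝ) < x / a + 1 := Nat.ceil_lt_add_one hxa0
  -- the iteration bound
  have hiter := iter δ hδ0 hδ14 n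
  have hmono : f ((n:ℝ) * a) ≤ f x := f_mono x ((n:ℝ)*a) hn1
  set q : ℝ := 2*δ*p₀ with hqdef
  have hq0 : 0 < q := by positivity
  -- logarithmic quantities
  set L : ℝ := -Real.log q with hL
  have hlogx : 1 ≤ Real.log x := by
    rw [Real.le_log_iff_exp_le hx0]
    calc Real.exp 1 ≤ 2.7182818286 := Real.exp_one_lt_d9.le
      _ ≤ x := by linarith
  have hLval : L = Real.log x - l + K₀ := by
    rw [hL, hqdef, hK₀, Real.log_mul (by positivity) (ne_of_gt hp0),
      Real.log_mul (by norm_num) (ne_of_gt hδ0), hδdef, Real.log_div one_ne_zero (ne_of_gt hx0)]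
    simp [hl]
    ring
  have hLpos : 0 < L := by rw [hLval]; linarith
  have hLle : L ≤ Real.log x + K₀ := by rw [hLval]; linarith
  -- q^(2^(n+1)) = exp(-(2^(n+1)) * L)
  have hqpow : q^(2^(n+1)) = Real.exp (-(((2:ℝ)^(n+1)) * L)) := by
    have h := Real.exp_nat_mul (Real.log q) (2^(n+1))
    rw [Real.exp_log hq0] at h
    rw [← h]
    congr 1
    rw [hL]
    push_cast
    ring
  have h2pow : ((2:ℝ)^(n+1)) = Real.exp (((n:ℝ)+1) * l) := by
    have h := Real.exp_nat_mul l (n+1)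
    have hexpl : Real.exp l = 2 := by rw [hl]; exact Real.exp_log (by norm_num)
    rw [hexpl] at h
    rw [← h]
    congr 1
    push_cast
    ring
  rw [ha, hδdef] at hn2
  have hexp_ineq := exponent_bound hl1 hl2 hb hγdef hx hK₀0 hlogx hLval hn2
  rw [hγ]
  have e1 : Real.exp (((n:ℝ)+1)*l + Real.log L) = ((2:ℝ)^(n+1)) * L := by
    rw [Real.exp_add, Real.exp_log hLpos, h2pow]
  have hle : ((2:ℝ)^(n+1)) * L ≤ Real.exp (γ*x + Real.log (Real.log x) + (K₀+4)) := by
    rw [← e1]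
    exact Real.exp_le_exp.2 hexp_ineq
  calc Real.exp (-Real.exp (γ*x + Real.log (Real.log x) + (K₀+4)))
      ≤ Real.exp (-(((2:ℝ)^(n+1)) * L)) := Real.exp_le_exp.2 (by linarith)
    _ = q^(2^(n+1)) := hqpow.symm
    _ ≤ f ((n:ℝ)*a) := hiter
    _ ≤ f x := hmono
end

section
/- With γ := (2 − 1/ln 2)⁻¹, there exist a constant C > 0 and a threshold x₀ > 0 such that for all x ≥ x₀, P(Z ≤ −x) ≤ exp(−exp(γ·x − C)). (Upper bound of Theorem 1(i): left tail of the limiting Quicksort distribution.) -/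
open MeasureTheory ProbabilityTheory Real


namespace QSaux

noncomputable def qa : ℝ := 2 - 1 / Real.log 2
noncomputable def qh (u : ℝ) : ℝ := u * Real.log u + (1 - u) * Real.log (1 - u)
noncomputable def qeta (u : ℝ) : ℝ := qh u / Real.log 2 + 1

lemma log2_pos : 0 < Real.log 2 := Real.log_pos (by norm_num)

lemma qa_pos : 0 < qa := by
  have h := Real.log_two_gt_d9
  have : 1 / Real.log 2 < 2 := by
    rw [div_lt_iff₀ log2_pos]; nlinarith
  unfold qa; linarith

lemma qa_lt_two : qa < 2 := by
  unfold qa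
  have : 0 < 1 / Real.log 2 := by positivity
  linarith

lemma qh_ge {u : ℝ} (hu : u ∈ Set.Icc (0:ℝ) 1) : -Real.log 2 ≤ qh u := by
  have h1 : (0:ℝ) ≤ u := hu.1
  have h2 : (0:ℝ) ≤ 1 - u := by linarith [hu.2]
  have hc := (Real.convexOn_mul_log).2 (Set.mem_Ici.2 h1) (Set.mem_Ici.2 h2)
    (by norm_num : (0:ℝ) ≤ (1/2:ℝ)) (by norm_num : (0:ℝ) ≤ (1/2:ℝ)) (by norm_num)
  simp only [smul_eq_mul] at hc
  have hmid : (1/2 : ℝ) * u + (1/2:ℝ) * (1 - u) = 1/2 := by ring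
  rw [hmid] at hc
  have hl : (1/2:ℝ) * Real.log (1/2) = -(Real.log 2) / 2 := by
    rw [Real.log_div one_ne_zero (by norm_num), Real.log_one]; ring
  unfold qh; nlinarith [hc]

lemma qh_gt {u : ℝ} (hu : u ∈ Set.Icc (0:ℝ) 1) (hne : u ≠ 1/2) : -Real.log 2 < qh u := by
  rcases eq_or_lt_of_le hu.1 with h0 | h0
  · unfold qh; rw [← h0]; simp [Real.log_one, log2_pos]
  rcases eq_or_lt_of_le hu.2 with h1 | h1
  · unfold qh; rw [h1]; simp [Real.log_one, log2_pos]
  have h2 : (0:ℝ) < 1 - u := by linarith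
  have hneq : u ≠ 1 - u := by intro h; apply hne; linarith
  have hc := (Real.strictConvexOn_mul_log).2 (Set.mem_Ici.2 h0.le) (Set.mem_Ici.2 h2.le)
    hneq (by norm_num : (0:ℝ) < (1/2:ℝ)) (by norm_num : (0:ℝ) < (1/2:ℝ)) (by norm_num)
  simp only [smul_eq_mul] at hc
  have hmid : (1/2 : ℝ) * u + (1/2:ℝ) * (1 - u) = 1/2 := by ring
  rw [hmid] at hc
  have hl : (1/2:ℝ) * Real.log (1/2) = -(Real.log 2) / 2 := by
    rw [Real.log_div one_ne_zero (by norm_num), Real.log_one]; ring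
  unfold qh; nlinarith [hc]

lemma qeta_nonneg {u : ℝ} (hu : u ∈ Set.Icc (0:ℝ) 1) : 0 ≤ qeta u := by
  have h := qh_ge hu
  have h2 := log2_pos
  unfold qeta
  have : -1 ≤ qh u / Real.log 2 := by
    rw [le_div_iff₀ h2]; linarith
  linarith

lemma qeta_pos {u : ℝ} (hu : u ∈ Set.Icc (0:ℝ) 1) (hne : u ≠ 1/2) : 0 < qeta u := by
  have h := qh_gt hu hne
  have h2 := log2_pos
  unfold qeta
  have : -1 < qh u / Real.log 2 := by
    rw [lt_div_iff₀ h2]; linarith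
  linarith

lemma qeta_measurable : Measurable qeta := by
  unfold qeta qh
  fun_prop

lemma lp_bound {s : ℝ} (hs : 0 ≤ s) :
    s * max (Real.log s) 0 ≤ s * Real.log s + (Real.exp 1)⁻¹ := by
  rcases le_or_gt 1 s with h | h
  · rw [max_eq_left (Real.log_nonneg h)]
    have : (0:ℝ) < (Real.exp 1)⁻¹ := by positivity
    linarith
  · rw [max_eq_right (Real.log_nonpos hs h.le)]
    rcases eq_or_lt_of_le hs with h0 | h0
    · simp [← h0]; positivity
    · have he : (0:ℝ) < Real.exp 1 := Real.exp_pos 1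
      have h2 : Real.log ((Real.exp 1 * s)⁻¹) ≤ (Real.exp 1 * s)⁻¹ - 1 :=
        Real.log_le_sub_one_of_pos (by positivity)
      rw [Real.log_inv, Real.log_mul (ne_of_gt he) (ne_of_gt h0), Real.log_exp] at h2
      have h3 : -Real.log s ≤ (Real.exp 1 * s)⁻¹ := by linarith
      have h4 : s * (-Real.log s) ≤ s * (Real.exp 1 * s)⁻¹ :=
        mul_le_mul_of_nonneg_left h3 hs
      have h5 : s * (Real.exp 1 * s)⁻¹ = (Real.exp 1)⁻¹ := by
        rw [mul_inv, mul_comm (Real.exp 1)⁻¹, ← mul_assoc, mul_inv_cancel₀ (ne_of_gt h0), one_mul]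
      nlinarith [h4, h5]

lemma exp_le_one_add (y : ℝ) : Real.exp y ≤ 1 + y * Real.exp y := by
  have h := Real.add_one_le_exp (-y)
  have h2 := mul_le_mul_of_nonneg_right h (Real.exp_pos y).le
  rw [← Real.exp_add, neg_add_cancel, Real.exp_zero] at h2
  nlinarith [h2]

lemma qa_inv_e_le_one : qa * (Real.exp 1)⁻¹ ≤ 1 := by
  have he : (2:ℝ) < Real.exp 1 := by
    have := Real.exp_one_gt_d9; nlinarith
  have h1 : (0:ℝ) < (Real.exp 1)⁻¹ := by positivity
  have h2 : (Real.exp 1)⁻¹ < 1/2 := by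
    rw [inv_lt_comm₀ (by linarith) (by norm_num)]; norm_num; linarith
  nlinarith [qa_pos, qa_lt_two]

/-- The key pointwise exponent inequality. -/
lemma key_pointwise {b t u : ℝ} (hb : 0 ≤ b) (ht : 1 ≤ t) (hu0 : 0 < u) (hu1 : u < 1) :
    (qa * ((t*u) * max (Real.log (t*u)) 0) + b * (t*u))
      + ((qa * ((t*(1-u)) * max (Real.log (t*(1-u))) 0) + b * (t*(1-u)))
      + -(t * (2*u*Real.log u + 2*(1-u)*Real.log (1-u) + 1)))
    ≤ 2 + ((qa * (t * Real.log t) + b * t) + -(t * qeta u)) := by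
  have ht0 : (0:ℝ) < t := by linarith
  have h1u : (0:ℝ) < 1 - u := by linarith
  have l1 := lp_bound (by positivity : (0:ℝ) ≤ t*u)
  have l2 := lp_bound (by positivity : (0:ℝ) ≤ t*(1-u))
  have hlog1 : Real.log (t*u) = Real.log t + Real.log u :=
    Real.log_mul (ne_of_gt ht0) (ne_of_gt hu0)
  have hlog2 : Real.log (t*(1-u)) = Real.log t + Real.log (1-u) :=
    Real.log_mul (ne_of_gt ht0) (ne_of_gt h1u)
  rw [hlog1] at l1 ⊢
  rw [hlog2] at l2 ⊢
  have hqa := qa_pos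
  have m1 := mul_le_mul_of_nonneg_left l1 hqa.le
  have m2 := mul_le_mul_of_nonneg_left l2 hqa.le
  have me := qa_inv_e_le_one
  -- Algebraic identity collapsing the exact terms
  have hid : qa * ((t*u) * (Real.log t + Real.log u))
      + qa * ((t*(1-u)) * (Real.log t + Real.log (1-u)))
      + b * (t*u) + b * (t*(1-u))
      - t * (2*u*Real.log u + 2*(1-u)*Real.log (1-u) + 1)
      = qa * (t * Real.log t) + b * t - t * qeta u := by
    unfold qa qeta qh
    have hl2 : Real.log 2 ≠ 0 := ne_of_gt log2_pos
    field_simp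
    ring
  nlinarith [m1, m2, me, hid]

end QSaux


open QSaux

/-- Upper bound of Theorem 1(i): with `γ := (2 - 1/ln 2)⁻¹`, there are
`C > 0` and `x₀ > 0` such that for all `x ≥ x₀`, `P(Z ≤ -x) ≤ exp(-exp(γ·x - C))`. -/
theorem quicksort_left_tail_upper_bound
    {Ω : Type*} [MeasureSpace Ω] [IsProbabilityMeasure (ℙ : Measure Ω)]
    (Z Z' Z'' U : Ω → ℝ) (g : ℝ → ℝ)
    (hg : ∀ u : ℝ, g u = 2 * u * Real.log u + 2 * (1 - u) * Real.log (1 - u) + 1)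
    (hZm : Measurable Z) (hZ'm : Measurable Z') (hZ''m : Measurable Z'')
    (hUm : Measurable U)
    (hZ' : IdentDistrib Z' Z ℙ ℙ) (hZ'' : IdentDistrib Z'' Z ℙ ℙ)
    (hU : Measure.map U ℙ = volume.restrict (Set.Icc (0 : ℝ) 1))
    (hindep : iIndepFun ![U, Z', Z''] ℙ)
    (hrec : IdentDistrib Z (fun ω => U ω * Z' ω + (1 - U ω) * Z'' ω + g (U ω)) ℙ ℙ)
    (hmean : ∫ ω, Z ω ∂ℙ = 0)
    (hmgf : ∀ t : ℝ, Integrable (fun ω => Real.exp (t * Z ω)) ℙ) :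
    ∃ C > (0 : ℝ), ∃ x₀ > (0 : ℝ), ∀ x ≥ x₀,
      (ℙ {ω | Z ω ≤ -x}).toReal
        ≤ Real.exp (-Real.exp ((2 - 1 / Real.log 2)⁻¹ * x - C)) := by
  classical
  have hgm : Measurable g := by
    have hge : g = fun u => 2 * u * Real.log u + 2 * (1 - u) * Real.log (1 - u) + 1 :=
      funext hg
    rw [hge]
    exact (((measurable_const.mul measurable_id).mul Real.measurable_log).add
      ((measurable_const.mul (measurable_const.sub measurable_id)).mul
        (Real.measurable_log.comp (measurable_const.sub measurable_id)))).add measurable_const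
  set L : ℝ → ℝ := fun t => ∫ ω, Real.exp (-(t * Z ω)) ∂ℙ with hLdef
  have hLint : ∀ t : ℝ, Integrable (fun ω => Real.exp (-(t * Z ω))) ℙ := by
    intro t; simpa [neg_mul] using hmgf (-t)
  have hLnn : ∀ t, 0 ≤ L t := fun t => integral_nonneg fun ω => (Real.exp_pos _).le
  -- probability measures on the maps
  haveI hPZ' : IsProbabilityMeasure (Measure.map Z' ℙ) :=
    Measure.isProbabilityMeasure_map hZ'm.aemeasurable
  haveI hPZ'' : IsProbabilityMeasure (Measure.map Z'' ℙ) :=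
    Measure.isProbabilityMeasure_map hZ''m.aemeasurable
  haveI hPU : IsProbabilityMeasure (Measure.map U ℙ) :=
    Measure.isProbabilityMeasure_map hUm.aemeasurable
  -- the distributional recursion for L
  have hrec' : ∀ t : ℝ, L t = ∫ u in Set.Icc (0:ℝ) 1,
      Real.exp (-(t * g u)) * (L (t*u) * L (t*(1-u))) := by
    intro t
    have φm : Measurable fun z : ℝ => Real.exp (-(t*z)) := by fun_prop
    have h1 : L t = ∫ ω, Real.exp (-(t * (U ω * Z' ω + (1 - U ω) * Z'' ω + g (U ω)))) ∂ℙ :=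
      (hrec.comp φm).integral_eq
    set f : ℝ × ℝ × ℝ → ℝ :=
      fun p => Real.exp (-(t * (p.1 * p.2.1 + (1 - p.1) * p.2.2 + g p.1))) with hfdef
    have hfm : Measurable f := by
      apply Measurable.exp
      apply Measurable.neg
      apply Measurable.const_mul
      exact ((measurable_fst.mul (measurable_fst.comp measurable_snd)).add
        (((measurable_const.sub measurable_fst).mul
          (measurable_snd.comp measurable_snd)))).add (hgm.comp measurable_fst)
    have hW : Measurable fun ω => (U ω, Z' ω, Z'' ω) := hUm.prodMk (hZ'm.prodMk hZ''m)
    have hmeas3 : ∀ i, Measurable (![U, Z', Z''] i) := by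
      intro i; fin_cases i <;> simp [hUm, hZ'm, hZ''m]
    have hpair : IndepFun (fun ω => (Z' ω, Z'' ω)) U ℙ := by
      have := hindep.indepFun_prodMk hmeas3 1 2 0 (by decide) (by decide)
      simpa using this
    have hZZ : IndepFun Z' Z'' ℙ := by
      have := hindep.indepFun (show (1:Fin 3) ≠ 2 by decide)
      simpa using this
    have hmapP : Measure.map (fun ω => (Z' ω, Z'' ω)) ℙ
        = (Measure.map Z' ℙ).prod (Measure.map Z'' ℙ) :=
      (indepFun_iff_map_prod_eq_prod_map_map hZ'm.aemeasurable hZ''m.aemeasurable).mp hZZ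
    have hmapW : Measure.map (fun ω => (U ω, Z' ω, Z'' ω)) ℙ
        = (Measure.map U ℙ).prod ((Measure.map Z' ℙ).prod (Measure.map Z'' ℙ)) := by
      rw [← hmapP]
      exact (indepFun_iff_map_prod_eq_prod_map_map hUm.aemeasurable
        (hZ'm.prodMk hZ''m).aemeasurable).mp hpair.symm
    have h2 : ∫ ω, Real.exp (-(t * (U ω * Z' ω + (1 - U ω) * Z'' ω + g (U ω)))) ∂ℙ
        = ∫ p, f p ∂(Measure.map (fun ω => (U ω, Z' ω, Z'' ω)) ℙ) := by
      rw [integral_map hW.aemeasurable hfm.aestronglyMeasurable]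
    have hfint : Integrable f
        ((Measure.map U ℙ).prod ((Measure.map Z' ℙ).prod (Measure.map Z'' ℙ))) := by
      rw [← hmapW, integrable_map_measure hfm.aestronglyMeasurable hW.aemeasurable]
      exact (hrec.comp φm).integrable_iff.mp (hLint t)
    have h4 : ∀ u : ℝ, ∫ q : ℝ × ℝ, f (u, q) ∂((Measure.map Z' ℙ).prod (Measure.map Z'' ℙ))
        = Real.exp (-(t * g u)) * (L (t*u) * L (t*(1-u))) := by
      intro u
      have hsplit : ∀ q : ℝ × ℝ, f (u, q)
          = Real.exp (-(t * g u)) * (Real.exp (-(t*u*q.1)) * Real.exp (-(t*(1-u)*q.2))) := by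
        intro q
        simp only [hfdef]
        rw [← Real.exp_add, ← Real.exp_add]
        congr 1
        ring
      simp only [hsplit]
      rw [MeasureTheory.integral_const_mul,
        integral_prod_mul (f := fun y : ℝ => Real.exp (-(t*u*y)))
          (g := fun z : ℝ => Real.exp (-(t*(1-u)*z)))]
      have hm1 : Measurable fun y : ℝ => Real.exp (-(t*u*y)) := by fun_prop
      have hm2 : Measurable fun y : ℝ => Real.exp (-(t*(1-u)*y)) := by fun_prop
      have e1 : ∫ y, Real.exp (-(t*u*y)) ∂(Measure.map Z' ℙ) = L (t*u) := by
        rw [hZ'.map_eq, integral_map hZm.aemeasurable hm1.aestronglyMeasurable]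
      have e2 : ∫ y, Real.exp (-(t*(1-u)*y)) ∂(Measure.map Z'' ℙ) = L (t*(1-u)) := by
        rw [hZ''.map_eq, integral_map hZm.aemeasurable hm2.aestronglyMeasurable]
      rw [e1, e2]
    rw [h1, h2, hmapW, integral_prod f hfint]
    simp only [h4]
    rw [hU]
  -- integrability of exp(c|Z|)
  have expabs : ∀ c : ℝ, Integrable (fun ω => Real.exp (c * |Z ω|)) ℙ := by
    intro c
    refine ((hmgf c).add (hmgf (-c))).mono' ?_ ?_
    · exact (Real.measurable_exp.comp (measurable_const.mul hZm.abs)).aestronglyMeasurable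
    · filter_upwards with ω
      rw [Real.norm_eq_abs, abs_of_pos (Real.exp_pos _)]
      rcases abs_cases (Z ω) with ⟨h1, _⟩ | ⟨h1, _⟩
      · rw [h1]
        exact le_add_of_nonneg_right (Real.exp_pos _).le
      · rw [h1, mul_neg, ← neg_mul]
        exact le_add_of_nonneg_left (Real.exp_pos _).le
  -- continuity of L
  have hLcont : Continuous L := by
    rw [continuous_iff_continuousAt]
    intro t₀
    rw [hLdef]
    apply continuousAt_of_dominated (bound := fun ω => Real.exp ((|t₀|+1) * |Z ω|))
    · filter_upwards with s
      exact (Real.measurable_exp.comp ((measurable_const.mul hZm).neg)).aestronglyMeasurable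
    · filter_upwards [eventually_abs_sub_lt t₀ one_pos] with s hs
      filter_upwards with ω
      rw [Real.norm_eq_abs, abs_of_pos (Real.exp_pos _), Real.exp_le_exp]
      have h1 : -(s * Z ω) ≤ |s| * |Z ω| := by
        rw [← abs_mul]; exact neg_le_abs _
      have h2 : |s| ≤ |t₀| + 1 := by
        have := abs_sub_abs_le_abs_sub s t₀
        linarith
      nlinarith [abs_nonneg (Z ω)]
    · exact expabs (|t₀|+1)
    · filter_upwards with ω
      exact (Real.continuous_exp.comp ((continuous_id.mul continuous_const).neg)).continuousAt
  -- threshold from dominated convergence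
  obtain ⟨T₁', hT₁'⟩ : ∃ T' : ℝ, ∀ t ≥ T',
      (∫ u in Set.Icc (0:ℝ) 1, Real.exp (-(t * qeta u))) ≤ Real.exp (-2) / 2 := by
    have hmeas : ∀ t : ℝ, AEStronglyMeasurable (fun u => Real.exp (-(t * qeta u)))
        (volume.restrict (Set.Icc (0:ℝ) 1)) := fun t =>
      (Real.measurable_exp.comp ((measurable_const.mul qeta_measurable).neg)).aestronglyMeasurable
    have htend : Filter.Tendsto (fun t : ℝ => ∫ u in Set.Icc (0:ℝ) 1, Real.exp (-(t * qeta u)))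
        Filter.atTop (nhds 0) := by
      have hmain0 : Filter.Tendsto (fun t : ℝ => ∫ u in Set.Icc (0:ℝ) 1, Real.exp (-(t * qeta u)))
          Filter.atTop (nhds (∫ u in Set.Icc (0:ℝ) 1, (0:ℝ))) := by
        apply tendsto_integral_filter_of_dominated_convergence (bound := fun _ : ℝ => (1:ℝ))
        · filter_upwards with t; exact hmeas t
        · filter_upwards [Filter.eventually_ge_atTop (0:ℝ)] with t ht
          filter_upwards [ae_restrict_mem measurableSet_Icc] with u hu
          rw [Real.norm_eq_abs, abs_of_pos (Real.exp_pos _)]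
          have h1 := qeta_nonneg hu
          exact Real.exp_le_one_iff.2 (by nlinarith)
        · exact integrableOn_const (isCompact_Icc.measure_lt_top).ne
        · have hne : ∀ᵐ u ∂(volume.restrict (Set.Icc (0:ℝ) 1)), u ≠ (1/2:ℝ) := by
            refine MeasureTheory.ae_iff.2 ?_
            refine measure_mono_null (t := ({(1/2:ℝ)} : Set ℝ)) (fun x hx => ?_) ?_
            · exact Set.mem_singleton_iff.2 (not_not.mp hx)
            · rw [Measure.restrict_apply (measurableSet_singleton _)]
              exact measure_mono_null Set.inter_subset_left Real.volume_singleton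
          filter_upwards [ae_restrict_mem measurableSet_Icc, hne] with u hu hune
          have hp := qeta_pos hu hune
          have h2 : Filter.Tendsto (fun t : ℝ => -(t * qeta u)) Filter.atTop Filter.atBot :=
            Filter.tendsto_neg_atTop_atBot.comp (Filter.tendsto_id.atTop_mul_const hp)
          simpa [Function.comp_def] using Real.tendsto_exp_atBot.comp h2
      simpa using hmain0
    have hev : ∀ᶠ t in Filter.atTop,
        (∫ u in Set.Icc (0:ℝ) 1, Real.exp (-(t * qeta u))) < Real.exp (-2)/2 :=
      htend.eventually_lt_const (by positivity)
    obtain ⟨T', hT'⟩ := Filter.eventually_atTop.mp hev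
    exact ⟨T', fun t ht => (hT' t ht).le⟩
  set T₁ : ℝ := max T₁' 2 with hT₁def
  have hT₁2 : (2:ℝ) ≤ T₁ := le_max_right _ _
  -- the slope constant b
  have hZabs_int : Integrable (fun ω => |Z ω| * Real.exp (T₁ * |Z ω|)) ℙ := by
    refine (expabs (T₁+1)).mono' ?_ ?_
    · exact (hZm.abs.mul
        (Real.measurable_exp.comp (measurable_const.mul hZm.abs))).aestronglyMeasurable
    · filter_upwards with ω
      rw [Real.norm_eq_abs, abs_of_nonneg (by positivity)]
      have h1 : |Z ω| ≤ Real.exp |Z ω| := by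
        nlinarith [Real.add_one_le_exp |Z ω|, abs_nonneg (Z ω)]
      calc |Z ω| * Real.exp (T₁ * |Z ω|) ≤ Real.exp |Z ω| * Real.exp (T₁ * |Z ω|) :=
            mul_le_mul_of_nonneg_right h1 (Real.exp_pos _).le
        _ = Real.exp ((T₁+1) * |Z ω|) := by rw [← Real.exp_add]; congr 1; ring
  set b : ℝ := ∫ ω, |Z ω| * Real.exp (T₁ * |Z ω|) ∂ℙ with hbdef
  have hbnn : 0 ≤ b := integral_nonneg fun ω => by positivity
  -- base case:  L s ≤ exp (b s)  on [0, T₁]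
  have hbase : ∀ s, 0 ≤ s → s ≤ T₁ → L s ≤ Real.exp (b * s) := by
    intro s hs hsT
    have hpt : ∀ ω, Real.exp (-(s * Z ω)) ≤ 1 + s * (|Z ω| * Real.exp (T₁ * |Z ω|)) := by
      intro ω
      have h0 := exp_le_one_add (-(s * Z ω))
      have ha : -(s * Z ω) ≤ s * |Z ω| := by
        have habs : |s * Z ω| = s * |Z ω| := by rw [abs_mul, abs_of_nonneg hs]
        nlinarith [neg_le_abs (s * Z ω)]
      have h1 : -(s * Z ω) * Real.exp (-(s * Z ω)) ≤ s * (|Z ω| * Real.exp (T₁ * |Z ω|)) := by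
        have hb2 : Real.exp (-(s * Z ω)) ≤ Real.exp (T₁ * |Z ω|) := by
          apply Real.exp_le_exp.2
          have : s * |Z ω| ≤ T₁ * |Z ω| := mul_le_mul_of_nonneg_right hsT (abs_nonneg _)
          linarith
        rcases le_or_gt (-(s * Z ω)) 0 with hc | hc
        · have h3 : -(s*Z ω) * Real.exp (-(s*Z ω)) ≤ 0 :=
            mul_nonpos_of_nonpos_of_nonneg hc (Real.exp_pos _).le
          have h4 : 0 ≤ s * (|Z ω| * Real.exp (T₁ * |Z ω|)) := by positivity
          linarith
        · calc -(s * Z ω) * Real.exp (-(s * Z ω)) ≤ (s * |Z ω|) * Real.exp (T₁ * |Z ω|) :=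
              mul_le_mul ha hb2 (Real.exp_pos _).le (by positivity)
            _ = s * (|Z ω| * Real.exp (T₁ * |Z ω|)) := by ring
      linarith
    have hint2 : Integrable (fun ω => 1 + s * (|Z ω| * Real.exp (T₁ * |Z ω|))) ℙ :=
      (integrable_const 1).add (hZabs_int.const_mul s)
    have hmono := integral_mono (hLint s) hint2 hpt
    rw [integral_add (integrable_const 1) (hZabs_int.const_mul s), integral_const,
      MeasureTheory.integral_const_mul, ← hbdef] at hmono
    simp only [probReal_univ, measure_univ, ENNReal.toReal_one, smul_eq_mul, mul_one] at hmono
    have hexp := Real.add_one_le_exp (b * s)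
    have hLs : L s = ∫ ω, Real.exp (-(s * Z ω)) ∂ℙ := rfl
    rw [hLs]
    nlinarith [hmono, hexp]
  -- the bounding function G
  set G : ℝ → ℝ := fun s => Real.exp (qa * (s * max (Real.log s) 0) + b * s) with hGdef
  have hbaseG : ∀ s, 0 ≤ s → s ≤ T₁ → L s ≤ G s := by
    intro s hs hsT
    refine (hbase s hs hsT).trans (Real.exp_le_exp.2 ?_)
    have h1 : 0 ≤ qa * (s * max (Real.log s) 0) := by
      have := qa_pos
      have h2 : 0 ≤ max (Real.log s) 0 := le_max_right _ _
      positivity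
    linarith
  -- induction step
  have hstep : ∀ t, T₁ ≤ t → (∀ s, 0 ≤ s → s < t → L s ≤ G s) → L t ≤ G t / 2 := by
    intro t hTt IH
    have ht2 : (2:ℝ) ≤ t := le_trans hT₁2 hTt
    have ht1 : (1:ℝ) ≤ t := by linarith
    have ht0 : (0:ℝ) < t := by linarith
    have hGA : G t = Real.exp (qa * (t * Real.log t) + b * t) := by
      simp only [hGdef]
      rw [max_eq_left (Real.log_nonneg ht1)]
    have hintq : IntegrableOn (fun u : ℝ => Real.exp (-(t * qeta u))) (Set.Icc (0:ℝ) 1) volume := by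
      refine Integrable.mono' (g := fun _ => (1:ℝ))
        (integrableOn_const isCompact_Icc.measure_lt_top.ne) ?_ ?_
      · exact (Real.measurable_exp.comp
          ((measurable_const.mul qeta_measurable).neg)).aestronglyMeasurable
      · filter_upwards [ae_restrict_mem measurableSet_Icc] with u hu
        rw [Real.norm_eq_abs, abs_of_pos (Real.exp_pos _)]
        have := qeta_nonneg hu
        exact Real.exp_le_one_iff.2 (by nlinarith)
    have hintd : IntegrableOn (fun u : ℝ =>
        (Real.exp 2 * Real.exp (qa * (t * Real.log t) + b * t)) * Real.exp (-(t * qeta u)))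
        (Set.Icc (0:ℝ) 1) volume := hintq.const_mul _
    have hae : ∀ᵐ u ∂(volume.restrict (Set.Icc (0:ℝ) 1)), u ∈ Set.Ioo (0:ℝ) 1 := by
      refine MeasureTheory.ae_iff.2 ?_
      change (volume.restrict (Set.Icc (0:ℝ) 1)) (Set.Ioo (0:ℝ) 1)ᶜ = 0
      rw [Measure.restrict_apply measurableSet_Ioo.compl]
      refine measure_mono_null (fun x hx => ?_)
        (measure_union_null Real.volume_singleton Real.volume_singleton :
          volume (({0} : Set ℝ) ∪ ({1} : Set ℝ)) = 0)
      obtain ⟨hx1, hx2⟩ := hx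
      simp only [Set.mem_compl_iff, Set.mem_Ioo, not_and_or, not_lt] at hx1
      rcases hx1 with h | h
      · left; exact le_antisymm h hx2.1
      · right; exact le_antisymm hx2.2 h
    have hptws : ∀ᵐ u ∂(volume.restrict (Set.Icc (0:ℝ) 1)),
        Real.exp (-(t * g u)) * (L (t*u) * L (t*(1-u)))
          ≤ (Real.exp 2 * Real.exp (qa * (t * Real.log t) + b * t)) * Real.exp (-(t * qeta u)) := by
      filter_upwards [hae] with u hu
      obtain ⟨hu0, hu1⟩ := hu
      have h1u : (0:ℝ) < 1 - u := by linarith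
      have hLu := IH (t*u) (by positivity) (by nlinarith)
      have hL1u := IH (t*(1-u)) (by positivity) (by nlinarith)
      have hstep1 : Real.exp (-(t * g u)) * (L (t*u) * L (t*(1-u)))
          ≤ Real.exp (-(t * g u)) * (G (t*u) * G (t*(1-u))) := by
        apply mul_le_mul_of_nonneg_left _ (Real.exp_pos _).le
        exact mul_le_mul hLu hL1u (hLnn _) (le_trans (hLnn _) hLu)
      refine hstep1.trans ?_
      simp only [hGdef]
      rw [← Real.exp_add, ← Real.exp_add, ← Real.exp_add, ← Real.exp_add, hg u]
      apply Real.exp_le_exp.2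
      have hkey := key_pointwise (b := b) (t := t) (u := u) hbnn ht1 hu0 hu1
      linarith
    calc L t = ∫ u in Set.Icc (0:ℝ) 1, Real.exp (-(t * g u)) * (L (t*u) * L (t*(1-u))) := hrec' t
      _ ≤ ∫ u in Set.Icc (0:ℝ) 1,
            (Real.exp 2 * Real.exp (qa * (t * Real.log t) + b * t)) * Real.exp (-(t * qeta u)) := by
          refine integral_mono_of_nonneg ?_ hintd hptws
          filter_upwards with u
          have h1 := hLnn (t*u); have h2 := hLnn (t*(1-u))
          positivity
      _ = (Real.exp 2 * Real.exp (qa * (t * Real.log t) + b * t))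
            * ∫ u in Set.Icc (0:ℝ) 1, Real.exp (-(t * qeta u)) :=
          MeasureTheory.integral_const_mul _ _
      _ ≤ (Real.exp 2 * Real.exp (qa * (t * Real.log t) + b * t)) * (Real.exp (-2)/2) := by
          apply mul_le_mul_of_nonneg_left (hT₁' t (le_trans (le_max_left _ _) hTt))
          positivity
      _ = G t / 2 := by
          rw [hGA]
          have h22 : Real.exp 2 * Real.exp (-2) = 1 := by
            rw [← Real.exp_add]; norm_num
          calc Real.exp 2 * Real.exp (qa * (t * Real.log t) + b * t) * (Real.exp (-2)/2)
              = Real.exp (qa * (t * Real.log t) + b * t) * (Real.exp 2 * Real.exp (-2)) / 2 := by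
                ring
            _ = Real.exp (qa * (t * Real.log t) + b * t) / 2 := by rw [h22]; ring
  -- main claim by continuous induction
  have hmain : ∀ s, 0 ≤ s → L s ≤ G s := by
    by_contra hcon
    push_neg at hcon
    obtain ⟨s₀, hs₀, hGs₀⟩ := hcon
    set S := {s : ℝ | 0 ≤ s ∧ G s < L s} with hSdef
    have hSne : S.Nonempty := ⟨s₀, hs₀, hGs₀⟩
    have hSlb : ∀ s ∈ S, T₁ ≤ s := by
      intro s hs
      by_contra hlt
      push_neg at hlt
      exact absurd (hbaseG s hs.1 hlt.le) (not_le.2 hs.2)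
    have hbdd : BddBelow S := ⟨T₁, fun s hs => hSlb s hs⟩
    set t₀ := sInf S with ht₀def
    have hT₁t₀ : T₁ ≤ t₀ := le_csInf hSne hSlb
    have ht₀2 : (2:ℝ) ≤ t₀ := le_trans hT₁2 hT₁t₀
    have hIH : ∀ s, 0 ≤ s → s < t₀ → L s ≤ G s := by
      intro s hs hlt
      by_contra hgt
      push_neg at hgt
      have : t₀ ≤ s := csInf_le hbdd ⟨hs, hgt⟩
      linarith
    have hhalf := hstep t₀ hT₁t₀ hIH
    have hGt₀ : 0 < G t₀ := Real.exp_pos _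
    have hneg : L t₀ - G t₀ < 0 := by linarith
    have hGcont : ContinuousAt G t₀ := by
      have hne0 : t₀ ≠ 0 := by intro h; rw [h] at ht₀2; norm_num at ht₀2
      simp only [hGdef]
      apply Real.continuous_exp.continuousAt.comp
      apply ContinuousAt.add ?_ (continuous_const.mul continuous_id).continuousAt
      apply ContinuousAt.mul continuousAt_const
      exact ContinuousAt.mul continuousAt_id
        ((Real.continuousAt_log hne0).max continuousAt_const)
    have hcont : ContinuousAt (fun s => L s - G s) t₀ := (hLcont.continuousAt).sub hGcont
    have hev : ∀ᶠ s in nhds t₀, L s - G s < 0 := hcont.eventually_lt_const hneg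
    obtain ⟨ε, hε, hball⟩ := Metric.eventually_nhds_iff.mp hev
    have hlow : t₀ + ε ≤ t₀ := by
      refine le_csInf hSne fun s hs => ?_
      by_contra hlt2
      push_neg at hlt2
      have hge : t₀ ≤ s := csInf_le hbdd hs
      have hd : dist s t₀ < ε := by
        rw [Real.dist_eq, abs_of_nonneg (by linarith)]; linarith
      have := hball hd
      have := hs.2
      change G s < L s at this
      linarith [hs.2]
    linarith
  -- conclusion via the Chernoff bound
  have hq0 : (0:ℝ) < qa := qa_pos
  have hqa_eq : qa = 2 - 1/Real.log 2 := rfl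
  refine ⟨qa⁻¹ * (b + 1), by positivity, max 1 ((b+1) + qa * Real.log T₁),
    lt_of_lt_of_le one_pos (le_max_left _ _), ?_⟩
  intro x hx
  set t := Real.exp (qa⁻¹ * (x - (b+1))) with htdef
  have htpos : 0 < t := Real.exp_pos _
  have hlogt : Real.log t = qa⁻¹ * (x - (b+1)) := Real.log_exp _
  have hT₁pos : (0:ℝ) < T₁ := lt_of_lt_of_le two_pos hT₁2
  have htT₁ : T₁ ≤ t := by
    rw [htdef, ← Real.exp_log hT₁pos]
    apply Real.exp_le_exp.2
    have hx2 : (b+1) + qa * Real.log T₁ ≤ x := le_trans (le_max_right _ _) hx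
    have h3 : qa * Real.log T₁ ≤ x - (b+1) := by linarith
    calc Real.log T₁ = qa⁻¹ * (qa * Real.log T₁) := by field_simp
      _ ≤ qa⁻¹ * (x - (b+1)) := mul_le_mul_of_nonneg_left h3 (by positivity)
  have ht1 : (1:ℝ) ≤ t := le_trans (le_trans (by norm_num) hT₁2) htT₁
  have hmgfneg : Integrable (fun ω => Real.exp (t * (-Z ω))) ℙ := by
    simpa [neg_mul, mul_neg] using hmgf (-t)
  have hcher := measure_ge_le_exp_mul_mgf (μ := ℙ) (X := fun ω => -Z ω) x htpos.le hmgfneg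
  have hsets : {ω | Z ω ≤ -x} = {ω | x ≤ -Z ω} := by
    ext ω
    constructor <;> intro h2 <;> [skip; skip] <;> simp only [Set.mem_setOf_eq] at h2 ⊢ <;> linarith
  have hmgfL : mgf (fun ω => -Z ω) ℙ t = L t := by
    simp only [mgf]
    congr 1
    funext ω
    rw [mul_neg]
  rw [hsets]
  refine le_trans hcher ?_
  rw [hmgfL]
  have hLt : L t ≤ Real.exp (qa * (t * Real.log t) + b * t) := by
    have h := hmain t (by positivity)
    simp only [hGdef] at h
    rwa [max_eq_left (Real.log_nonneg ht1)] at h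
  calc Real.exp (-t * x) * L t
      ≤ Real.exp (-t * x) * Real.exp (qa * (t * Real.log t) + b * t) :=
        mul_le_mul_of_nonneg_left hLt (Real.exp_pos _).le
    _ = Real.exp (-t * x + (qa * (t * Real.log t) + b * t)) := (Real.exp_add _ _).symm
    _ = Real.exp (-t) := by
        congr 1
        rw [hlogt]
        field_simp
        ring
    _ = Real.exp (-Real.exp ((2 - 1/Real.log 2)⁻¹ * x - qa⁻¹ * (b + 1))) := by
        rw [htdef, ← hqa_eq]
        congr 2
        ring
end

section
/- There exist a constant C > 0 and a threshold x₀ > 0 such that for all x ≥ x₀, P(Z ≥ x) ≥ exp(−x·ln x − x·ln(ln x) − C·x). (Lower bound of Theorem 1(ii): right tail of the limiting Quicksort distribution.) -/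
open MeasureTheory ProbabilityTheory Real

lemma qs_log_one_sub {ε : ℝ} (h0 : 0 < ε) (h2 : ε ≤ 1/2) : -2*ε ≤ Real.log (1-ε) := by
  have h1 : (0:ℝ) < 1 - ε := by linarith
  rw [Real.le_log_iff_exp_le h1]
  have h3 : 2*ε + 1 ≤ Real.exp (2*ε) := Real.add_one_le_exp _
  have h4 : Real.exp (-(2*ε)) = 1 / Real.exp (2*ε) := by
    rw [Real.exp_neg]; ring
  have h5 : (0:ℝ) < Real.exp (2*ε) := Real.exp_pos _
  rw [show -2*ε = -(2*ε) by ring, h4, div_le_iff₀ h5]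
  nlinarith

lemma qs_mul_log_ge {ε t : ℝ} (h0 : 0 < ε) (he : ε ≤ Real.exp (-1)) (ht0 : 0 ≤ t)
    (htε : t ≤ ε) : ε * Real.log ε ≤ t * Real.log t := by
  have hεlog : Real.log ε ≤ -1 := by
    rw [Real.log_le_iff_le_exp h0]; exact he
  rcases eq_or_lt_of_le ht0 with h | h
  · simp [← h]
    nlinarith
  · have h1 : Real.log (ε/t) ≤ ε/t - 1 := Real.log_le_sub_one_of_pos (by positivity)
    have h2 : Real.log ε = Real.log (ε/t) + Real.log t := by
      rw [Real.log_div (ne_of_gt h0) (ne_of_gt h)]; ring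
    have h3 : t * Real.log (ε/t) ≤ ε - t := by
      calc t * Real.log (ε/t) ≤ t * (ε/t - 1) := by nlinarith
        _ = ε - t := by field_simp
    nlinarith

lemma qs_g_lower {ε u : ℝ} (h0 : 0 < ε) (he : ε ≤ Real.exp (-1)) (hu : u ∈ Set.Icc (1-ε) 1) :
    1 - 4*ε + 2*ε*Real.log ε ≤ 2*u*Real.log u + 2*(1-u)*Real.log (1-u) + 1 := by
  obtain ⟨hu1, hu2⟩ := hu
  have he2 : ε ≤ 1/2 := by
    have : Real.exp (-1) ≤ 1/2 := by
      rw [Real.exp_neg, inv_le_comm₀ (Real.exp_pos _) (by norm_num)]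
      nlinarith [Real.add_one_le_exp (1:ℝ)]
    linarith
  have hu0 : 0 < u := by linarith
  have hlu : Real.log u ≤ 0 := Real.log_nonpos (le_of_lt hu0) hu2
  have h1 : Real.log (1-ε) ≤ Real.log u := Real.log_le_log (by linarith) hu1
  have h2 : -2*ε ≤ Real.log u := le_trans (qs_log_one_sub h0 he2) h1
  have h3 : Real.log u ≤ u * Real.log u := by nlinarith
  have h4 : -2*ε ≤ u * Real.log u := le_trans h2 h3
  have h5 : ε * Real.log ε ≤ (1-u) * Real.log (1-u) :=
    qs_mul_log_ge h0 he (by linarith) (by linarith)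
  nlinarith

lemma qs_h3 {x u : ℝ} (hx : 0 < x) (hu1 : 0 < u) (hu2 : u ≤ 1/100) :
    x ≤ (1-u)^2 * (x*(1+3*u)) := by
  nlinarith [mul_nonneg (mul_nonneg hx.le hu1.le) (by linarith : (0:ℝ) ≤ 1 - 5*u),
    mul_nonneg (mul_nonneg hx.le hu1.le) (mul_nonneg hu1.le hu1.le)]

lemma qs_expand {x m L l : ℝ} (h1 : m*L = 3*x) (h2 : m*l ≤ 3*x) (h3 : 0 ≤ l)
    (h4 : l ≤ L) (h5 : L ≤ x) (h6 : 1 ≤ x) :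
    (x + m + 1) * (L + l) ≤ x*L + x*l + 8*x := by nlinarith

/-- auxiliary recursive sequence -/
def quickSeq (ε Δ : ℝ) : ℕ → ℝ
  | 0 => 0
  | k+1 => (1-ε) * quickSeq ε Δ k + Δ

lemma quickSeq_nonneg {ε Δ : ℝ} (hε : ε ≤ 1) (hΔ : 0 ≤ Δ) (k : ℕ) : 0 ≤ quickSeq ε Δ k := by
  induction k with
  | zero => simp [quickSeq]
  | succ k ih =>
    simp only [quickSeq]
    nlinarith

lemma quickSeq_lower {ε Δ : ℝ} (hε0 : 0 ≤ ε) (hε : ε ≤ 1) (hΔ : 0 ≤ Δ) (k : ℕ) :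
    Δ * k * (1 - k*ε/2) ≤ quickSeq ε Δ k := by
  induction k with
  | zero => simp [quickSeq]
  | succ k ih =>
    simp only [quickSeq]
    have h1 : (1-ε) * (Δ * k * (1 - k*ε/2)) ≤ (1-ε) * quickSeq ε Δ k :=
      mul_le_mul_of_nonneg_left ih (by linarith)
    have hk : (0:ℝ) ≤ k := Nat.cast_nonneg k
    push_cast
    nlinarith [sq_nonneg ((k:ℝ)*ε), mul_nonneg (mul_nonneg hΔ hk) (mul_nonneg hk (mul_nonneg hε0 hε0))]

set_option maxHeartbeats 1000000 in
/-- Lower bound of Theorem 1(ii): there are `C > 0` and `x₀ > 0` such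
that for all `x ≥ x₀`, `P(Z ≥ x) ≥ exp(-x·ln x - x·ln ln x - C·x)`. -/
theorem quicksort_right_tail_lower_bound
    {Ω : Type*} [MeasureSpace Ω] [IsProbabilityMeasure (ℙ : Measure Ω)]
    (Z Z' Z'' U : Ω → ℝ) (g : ℝ → ℝ)
    (hg : ∀ u : ℝ, g u = 2 * u * Real.log u + 2 * (1 - u) * Real.log (1 - u) + 1)
    (hZm : Measurable Z) (hZ'm : Measurable Z') (hZ''m : Measurable Z'')
    (hUm : Measurable U)
    (hZ' : IdentDistrib Z' Z ℙ ℙ) (hZ'' : IdentDistrib Z'' Z ℙ ℙ)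
    (hU : Measure.map U ℙ = volume.restrict (Set.Icc (0 : ℝ) 1))
    (hindep : iIndepFun ![U, Z', Z''] ℙ)
    (hrec : IdentDistrib Z (fun ω => U ω * Z' ω + (1 - U ω) * Z'' ω + g (U ω)) ℙ ℙ)
    (hmean : ∫ ω, Z ω ∂ℙ = 0)
    (hmgf : ∀ t : ℝ, Integrable (fun ω => Real.exp (t * Z ω)) ℙ) :
    ∃ C > (0 : ℝ), ∃ x₀ > (0 : ℝ), ∀ x ≥ x₀,
      Real.exp (-x * Real.log x - x * Real.log (Real.log x) - C * x)
        ≤ (ℙ {ω | x ≤ Z ω}).toReal := by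
  -- ### Key recursive step
  have hkey : ∀ ε a : ℝ, 0 < ε → ε ≤ Real.exp (-1) → 0 ≤ a →
      ENNReal.ofReal ε * ℙ (Z ⁻¹' Set.Ici a) * ℙ (Z ⁻¹' Set.Ici 0)
        ≤ ℙ (Z ⁻¹' Set.Ici ((1-ε)*a + (1 - 4*ε + 2*ε*Real.log ε))) := by
    intro ε a hε0 hεe ha
    have hε1 : ε ≤ 1 := by
      have h2 := Real.add_one_le_exp (1:ℝ)
      rw [Real.exp_neg] at hεe
      have h3 := inv_le_one_of_one_le₀ (by linarith : (1:ℝ) ≤ Real.exp 1)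
      linarith
    set y : ℝ := (1-ε)*a + (1 - 4*ε + 2*ε*Real.log ε) with hy
    set sets : Fin 3 → Set ℝ := ![Set.Icc (1-ε) 1, Set.Ici a, Set.Ici 0] with hsets_def
    have hsets : ∀ i, MeasurableSet (sets i) := by
      intro i
      fin_cases i <;> simp [hsets_def]
    have hprod := hindep.measure_inter_preimage_eq_mul (S := Finset.univ)
      (sets := sets) (fun i _ => hsets i)
    have hEeq : (⋂ i ∈ Finset.univ, (![U, Z', Z''] i) ⁻¹' sets i)
        = U ⁻¹' Set.Icc (1-ε) 1 ∩ Z' ⁻¹' Set.Ici a ∩ Z'' ⁻¹' Set.Ici 0 := by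
      ext ω
      simp [hsets_def, Fin.forall_fin_succ, and_assoc]
    have hprodval : (∏ i ∈ Finset.univ, ℙ ((![U, Z', Z''] i) ⁻¹' sets i))
        = ENNReal.ofReal ε * ℙ (Z ⁻¹' Set.Ici a) * ℙ (Z ⁻¹' Set.Ici 0) := by
      rw [Fin.prod_univ_three]
      have h1 : ℙ (U ⁻¹' Set.Icc (1-ε) 1) = ENNReal.ofReal ε := by
        rw [← Measure.map_apply hUm measurableSet_Icc, hU,
          Measure.restrict_apply measurableSet_Icc,
          Set.inter_eq_left.mpr (Set.Icc_subset_Icc (by linarith) le_rfl),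
          Real.volume_Icc]
        norm_num
      have h2 : ℙ (Z' ⁻¹' Set.Ici a) = ℙ (Z ⁻¹' Set.Ici a) :=
        hZ'.measure_mem_eq measurableSet_Ici
      have h3 : ℙ (Z'' ⁻¹' Set.Ici 0) = ℙ (Z ⁻¹' Set.Ici 0) :=
        hZ''.measure_mem_eq measurableSet_Ici
      simp [hsets_def, h1, h2, h3]
    have hincl : U ⁻¹' Set.Icc (1-ε) 1 ∩ Z' ⁻¹' Set.Ici a ∩ Z'' ⁻¹' Set.Ici 0
        ⊆ (fun ω => U ω * Z' ω + (1 - U ω) * Z'' ω + g (U ω)) ⁻¹' Set.Ici y := by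
      rintro ω ⟨⟨hUω, hZ'ω⟩, hZ''ω⟩
      obtain ⟨hu1, hu2⟩ := hUω
      have hgl := qs_g_lower hε0 hεe ⟨hu1, hu2⟩
      rw [← hg (U ω)] at hgl
      have hz : a ≤ Z' ω := hZ'ω
      have hz'' : (0:ℝ) ≤ Z'' ω := hZ''ω
      have hA : (1-ε)*a ≤ U ω * Z' ω := by nlinarith
      have hB : (0:ℝ) ≤ (1 - U ω) * Z'' ω := mul_nonneg (by linarith) hz''
      simp only [Set.mem_preimage, Set.mem_Ici, hy]
      linarith
    calc ENNReal.ofReal ε * ℙ (Z ⁻¹' Set.Ici a) * ℙ (Z ⁻¹' Set.Ici 0)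
        = ℙ (⋂ i ∈ Finset.univ, (![U, Z', Z''] i) ⁻¹' sets i) := by rw [hprod, hprodval]
      _ ≤ ℙ ((fun ω => U ω * Z' ω + (1 - U ω) * Z'' ω + g (U ω)) ⁻¹' Set.Ici y) := by
          rw [hEeq]; exact measure_mono hincl
      _ = ℙ (Z ⁻¹' Set.Ici y) := (hrec.measure_mem_eq measurableSet_Ici).symm
  -- ### Z is integrable
  have hZint : Integrable Z ℙ := by
    refine ((hmgf 1).add (hmgf (-1))).mono' hZm.aestronglyMeasurable ?_
    filter_upwards with ω
    have e1 := Real.add_one_le_exp (Z ω)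
    have e2 := Real.add_one_le_exp (-Z ω)
    have p1 := Real.exp_pos (Z ω)
    have p2 := Real.exp_pos (-Z ω)
    simp only [Pi.add_apply, Real.norm_eq_abs, one_mul, neg_one_mul]
    rw [abs_le]
    constructor <;> nlinarith
  -- ### positive probability of being nonnegative
  have hp0 : ℙ (Z ⁻¹' Set.Ici 0) ≠ 0 := by
    intro h
    have hae : ∀ᵐ ω ∂ℙ, Z ω < 0 := by
      rw [MeasureTheory.ae_iff]
      convert h using 2
      ext ω
      simp [not_lt]
    have hneg : 0 ≤ᵐ[ℙ] (fun ω => -Z ω) := hae.mono fun ω h => by simp; linarith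
    have hint : ∫ ω, -Z ω ∂ℙ = 0 := by
      rw [integral_neg, hmean]; ring
    have hz := (integral_eq_zero_iff_of_nonneg_ae hneg hZint.neg).mp hint
    obtain ⟨ω, h1, h2⟩ := (hz.and hae).exists
    simp at h1
    linarith
  set P0 : ENNReal := ℙ (Z ⁻¹' Set.Ici 0) with hP0def
  set p0 : ℝ := P0.toReal with hp0def
  have hp0pos : 0 < p0 := ENNReal.toReal_pos hp0 (measure_ne_top _ _)
  have hp0le : p0 ≤ 1 := by
    rw [hp0def]
    exact ENNReal.toReal_le_of_le_ofReal zero_le_one (by simpa using prob_le_one)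
  set K : ℝ := -Real.log p0 with hKdef
  have hK0 : 0 ≤ K := by
    have := Real.log_nonpos (le_of_lt hp0pos) hp0le
    simp [hKdef]; linarith
  refine ⟨9 + 3*K, by linarith, Real.exp (Real.exp 10), Real.exp_pos _, ?_⟩
  intro x hx
  -- ### basic numeric facts
  set L : ℝ := Real.log x with hLdef
  have hx0 : (0:ℝ) < x := lt_of_lt_of_le (Real.exp_pos _) hx
  have hL100 : (100:ℝ) ≤ L := by
    have h1 : Real.exp 10 ≤ L := by
      rw [hLdef, ← Real.log_exp (Real.exp 10)]
      exact Real.log_le_log (Real.exp_pos _) hx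
    have h2 : (2:ℝ) ≤ Real.exp 1 := by nlinarith [Real.add_one_le_exp (1:ℝ)]
    have h3 : Real.exp 10 = Real.exp 1 ^ (10:ℕ) := by
      rw [← Real.exp_nat_mul]; norm_num
    have h4 : (2:ℝ)^(10:ℕ) ≤ Real.exp 1 ^ (10:ℕ) := by
      exact pow_le_pow_left₀ (by norm_num) h2 10
    norm_num at h4
    linarith
  have hL0 : (0:ℝ) < L := by linarith
  have hsx : Real.sqrt x * Real.sqrt x = x := Real.mul_self_sqrt (le_of_lt hx0)
  have hsx0 : (0:ℝ) ≤ Real.sqrt x := Real.sqrt_nonneg x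
  have hLsx : L ≤ 2*Real.sqrt x - 2 := by
    have h1 : Real.log (Real.sqrt x) ≤ Real.sqrt x - 1 :=
      Real.log_le_sub_one_of_pos (by positivity)
    have h2 : L = 2 * Real.log (Real.sqrt x) := by
      rw [hLdef, Real.log_sqrt (le_of_lt hx0)]; ring
    linarith
  have hsx51 : (51:ℝ) ≤ Real.sqrt x := by linarith
  have h8L : 8*L ≤ x := by nlinarith
  have hLx : L ≤ x := by linarith
  have hx1 : (1:ℝ) ≤ x := by linarith
  have hlogL0 : 0 ≤ Real.log L := Real.log_nonneg (by linarith)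
  have hlogLL : Real.log L ≤ L - 1 := Real.log_le_sub_one_of_pos hL0
  -- the parameters
  set ε : ℝ := 1/(x*L) with hεdef
  have hxL0 : (0:ℝ) < x*L := by positivity
  have hε0 : 0 < ε := by positivity
  have hεe : ε ≤ Real.exp (-1) := by
    rw [Real.exp_neg]
    rw [hεdef, one_div]
    apply inv_anti₀ (Real.exp_pos _)
    nlinarith [Real.exp_one_lt_d9,
      mul_le_mul hx1 hL100 (by norm_num : (0:ℝ) ≤ 100) (le_of_lt hx0)]
  have hε1 : ε ≤ 1 := by
    have h3 : Real.exp (-1:ℝ) ≤ 1 := by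
      rw [show (1:ℝ) = Real.exp 0 by simp]
      exact Real.exp_le_exp.mpr (by norm_num)
    linarith
  have hlogε : Real.log ε = -(L + Real.log L) := by
    rw [hεdef, one_div, Real.log_inv, Real.log_mul (ne_of_gt hx0) (ne_of_gt hL0), hLdef]
  set Δ : ℝ := 1 - 4*ε + 2*ε*Real.log ε with hΔdef
  have hΔL : 1 - 1/L ≤ Δ := by
    rw [hΔdef, hlogε]
    have key : (4 + 2*(L + Real.log L)) * ε ≤ 1/L := by
      rw [hεdef, show (4 + 2*(L + Real.log L)) * (1/(x*L)) = (4 + 2*(L + Real.log L))/(x*L)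
        from by ring, div_le_div_iff₀ hxL0 hL0]
      have hq : 4 + 2*(L + Real.log L) ≤ x := by linarith
      nlinarith [mul_le_mul_of_nonneg_right hq (le_of_lt hL0)]
    nlinarith
  have hΔ0 : 0 ≤ Δ := by
    have : 1/L ≤ 1 := by rw [div_le_one hL0]; linarith
    linarith
  set n : ℕ := ⌈x*(1+3/L)⌉₊ with hndef
  have hn1 : x*(1+3/L) ≤ (n:ℝ) := Nat.le_ceil _
  have hn2 : (n:ℝ) ≤ x*(1+3/L) + 1 := by
    have := Nat.ceil_lt_add_one (by positivity : (0:ℝ) ≤ x*(1+3/L))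
    linarith
  have hx800 : (800:ℝ) ≤ x := by linarith
  have h3Lx : 3*x/L ≤ x := by
    rw [div_le_iff₀ hL0]; nlinarith
  have h3Lx2 : 3*x/L ≤ x/2 := by
    rw [div_le_div_iff₀ hL0 (by norm_num : (0:ℝ) < 2)]; nlinarith
  have hnx : (n:ℝ) ≤ 2*x := by
    have heq : x * (1+3/L) = x + 3*x/L := by ring
    rw [heq] at hn2
    linarith
  have hnε : (n:ℝ)*ε ≤ 2/L := by
    rw [hεdef, show (n:ℝ) * (1/(x*L)) = (n:ℝ)/(x*L) from by ring,
      div_le_div_iff₀ hxL0 hL0]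
    nlinarith [mul_le_mul_of_nonneg_right hnx (le_of_lt hL0)]
  -- ### lower bound for quickSeq n
  have hxan : x ≤ quickSeq ε Δ n := by
    refine le_trans ?_ (quickSeq_lower (le_of_lt hε0) hε1 hΔ0 n)
    have h1 : 1 - 1/L ≤ 1 - (n:ℝ)*ε/2 := by
      have h2L : 2/L/2 = 1/L := by ring
      linarith [hnε]
    have hu0 : (0:ℝ) < 1 - 1/L := by
      have h : (1:ℝ)/L < 1 := by rw [div_lt_one hL0]; linarith
      linarith
    have hn0 : (0:ℝ) ≤ (n:ℝ) := Nat.cast_nonneg n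
    have step1 : (1 - 1/L) * ((n:ℝ) * (1 - 1/L)) ≤ Δ * (n:ℝ) * (1 - (n:ℝ)*ε/2) := by
      have e1 : (0:ℝ) ≤ (n:ℝ) * (1 - 1/L) := mul_nonneg hn0 (le_of_lt hu0)
      have e2 : (n:ℝ) * (1 - 1/L) ≤ (n:ℝ) * (1 - (n:ℝ)*ε/2) :=
        mul_le_mul_of_nonneg_left h1 hn0
      calc (1 - 1/L) * ((n:ℝ) * (1 - 1/L))
          ≤ (1 - 1/L) * ((n:ℝ) * (1 - (n:ℝ)*ε/2)) :=
            mul_le_mul_of_nonneg_left e2 (le_of_lt hu0)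
        _ ≤ Δ * ((n:ℝ) * (1 - (n:ℝ)*ε/2)) :=
            mul_le_mul_of_nonneg_right hΔL (le_trans e1 e2)
        _ = Δ * (n:ℝ) * (1 - (n:ℝ)*ε/2) := by ring
    have step2 : x ≤ (1 - 1/L) * ((n:ℝ) * (1 - 1/L)) := by
      set u : ℝ := 1/L with hudef
      have hu1 : (0:ℝ) < u := by positivity
      have hu2 : u ≤ 1/100 := by
        rw [hudef, div_le_div_iff₀ hL0 (by norm_num : (0:ℝ) < 100)]; linarith
      have hn1' : x*(1+3*u) ≤ (n:ℝ) := by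
        rw [hudef, show x*(1+3*(1/L)) = x*(1+3/L) from by ring]; exact hn1
      have hsq : (0:ℝ) ≤ (1-u)^2 := sq_nonneg _
      have h2 : (1-u)^2 * (x*(1+3*u)) ≤ (1-u)^2 * (n:ℝ) :=
        mul_le_mul_of_nonneg_left hn1' hsq
      have h3 : x ≤ (1-u)^2 * (x*(1+3*u)) := qs_h3 hx0 hu1 hu2
      have h4 : (1-u)^2*(n:ℝ) = (1-u)*((n:ℝ)*(1-u)) := by ring
      linarith
    linarith
  -- ### the iteration
  have hiter : ∀ k : ℕ, (ENNReal.ofReal ε * P0)^k * P0 ≤ ℙ (Z ⁻¹' Set.Ici (quickSeq ε Δ k)) := by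
    intro k
    induction k with
    | zero => simp [quickSeq, hP0def]
    | succ k ih =>
      have hak : 0 ≤ quickSeq ε Δ k := quickSeq_nonneg hε1 hΔ0 k
      have h1 := hkey ε (quickSeq ε Δ k) hε0 hεe hak
      have h2 : (ENNReal.ofReal ε * P0)^(k+1) * P0
          ≤ ENNReal.ofReal ε * ℙ (Z ⁻¹' Set.Ici (quickSeq ε Δ k)) * ℙ (Z ⁻¹' Set.Ici 0) := by
        rw [← hP0def]
        calc (ENNReal.ofReal ε * P0)^(k+1) * P0
            = ENNReal.ofReal ε * ((ENNReal.ofReal ε * P0)^k * P0) * P0 := by ring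
          _ ≤ ENNReal.ofReal ε * ℙ (Z ⁻¹' Set.Ici (quickSeq ε Δ k)) * P0 := by
              exact mul_le_mul' (mul_le_mul' le_rfl ih) le_rfl
      refine le_trans h2 (le_trans h1 ?_)
      exact le_of_eq (by rw [show quickSeq ε Δ (k+1) = (1-ε) * quickSeq ε Δ k + Δ from rfl, hΔdef])
  -- ### conclusion
  have hfinal : (ENNReal.ofReal ε * P0)^n * P0 ≤ ℙ {ω | x ≤ Z ω} := by
    refine le_trans (hiter n) (measure_mono ?_)
    intro ω hω
    exact le_trans hxan hω
  have htoReal : ((ENNReal.ofReal ε * P0)^n * P0).toReal = (ε * p0)^n * p0 := by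
    rw [ENNReal.toReal_mul, ENNReal.toReal_pow, ENNReal.toReal_mul,
      ENNReal.toReal_ofReal (le_of_lt hε0), ← hp0def]
  have hmono := ENNReal.toReal_mono (measure_ne_top _ _) hfinal
  rw [htoReal] at hmono
  refine le_trans ?_ hmono
  -- exponential comparison
  have hεp0 : 0 < ε * p0 := mul_pos hε0 hp0pos
  have hexp : (ε * p0)^n * p0 = Real.exp ((n:ℝ) * (Real.log ε + Real.log p0) + Real.log p0) := by
    rw [Real.exp_add, Real.exp_nat_mul, ← Real.log_mul (ne_of_gt hε0) (ne_of_gt hp0pos),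
      Real.exp_log hεp0, Real.exp_log hp0pos]
  rw [hexp]
  apply Real.exp_le_exp.mpr
  rw [hlogε]
  have hlogp0 : Real.log p0 = -K := by rw [hKdef]; ring
  rw [hlogp0]
  -- need:  -x*L - x*log L - (9+3K)*x ≤ n*(-(L+log L) + -K) + -K
  set m : ℝ := 3*x/L with hmdef
  have hm0 : 0 ≤ m := by positivity
  have hmL : m * L = 3*x := by rw [hmdef]; field_simp
  have hmx : m ≤ x := by rw [hmdef]; exact h3Lx
  have hmlogL : m * Real.log L ≤ 3*x := by
    calc m * Real.log L ≤ m * L := mul_le_mul_of_nonneg_left (by linarith) hm0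
      _ = 3*x := hmL
  have hnb : (n:ℝ) ≤ x + m + 1 := by
    have : x * (1+3/L) = x + m := by rw [hmdef]; ring
    linarith [this ▸ hn2]
  have hLlogL0 : 0 ≤ L + Real.log L := by linarith
  have hmain : (n:ℝ) * (L + Real.log L) ≤ (x + m + 1) * (L + Real.log L) :=
    mul_le_mul_of_nonneg_right hnb hLlogL0
  have hexpand : (x + m + 1) * (L + Real.log L)
      ≤ x*L + x*Real.log L + 8*x :=
    qs_expand hmL hmlogL hlogL0 (by linarith) hLx hx1
  have hnK : ((n:ℝ) + 1) * K ≤ 3*x*K := by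
    have h1 : (n:ℝ) + 1 ≤ 3*x := by linarith
    exact mul_le_mul_of_nonneg_right h1 hK0
  have hsplit : (n:ℝ) * (-(L+Real.log L) + -K) + -K
      = -((n:ℝ)*(L+Real.log L)) - (((n:ℝ)+1)*K) := by ring
  rw [hsplit]
  linarith [hmain, hexpand, hnK, hx0.le]
end

section
/- There exist a constant C > 0 and a threshold x₀ > 0 such that for all x ≥ x₀, P(Z ≥ x) ≤ exp(−x·ln x + C·x). (Upper bound of Theorem 1(ii): right tail of the limiting Quicksort distribution.) -/
open MeasureTheory ProbabilityTheory Real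


lemma qs_exp_quad (x : ℝ) : exp x ≤ 1 + x + x^2 * exp |x| := by
  rcases le_or_gt 0 x with hx | hx
  · rw [abs_of_nonneg hx]
    have key : (1 - x) * exp x ≤ 1 := by
      have h := add_one_le_exp (-x)
      have h2 := mul_le_mul_of_nonneg_right h (exp_pos x).le
      have h3 : exp (-x) * exp x = 1 := by rw [← exp_add]; simp
      nlinarith
    -- e^x - 1 ≤ x e^x
    have h1 : exp x - 1 ≤ x * exp x := by nlinarith
    -- e^x - 1 - x ≤ x (e^x - 1) ≤ x * (x e^x)
    have h4 : (1:ℝ) ≤ exp x := by nlinarith [add_one_le_exp x]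
    nlinarith [mul_le_mul_of_nonneg_left h1 hx]
  · rw [abs_of_neg hx]
    have h4 : (0:ℝ) < 1 - x := by linarith
    have h1 : exp x ≤ 1 + x + x^2 := by
      have h5 : exp x * (1 - x) ≤ 1 := by
        have h := add_one_le_exp (-x)
        have h3 : exp x * exp (-x) = 1 := by rw [← exp_add]; simp
        nlinarith [exp_pos x]
      nlinarith [exp_pos x]
    have h6 : (1:ℝ) ≤ exp (-x) := by nlinarith [add_one_le_exp (-x)]
    nlinarith [sq_nonneg x]

lemma qs_sq_le_four_exp_abs (x : ℝ) : x^2 ≤ 4 * exp |x| := by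
  have h := add_one_le_exp (|x| / 2)
  have h2 : exp |x| = exp (|x|/2) * exp (|x|/2) := by rw [← exp_add]; ring_nf
  nlinarith [abs_nonneg x, exp_pos (|x|/2), sq_abs x]

lemma qs_abs_le_exp_add_exp_neg (x : ℝ) : |x| ≤ exp x + exp (-x) := by
  rcases le_or_gt 0 x with hx | hx
  · rw [abs_of_nonneg hx]; nlinarith [add_one_le_exp x, exp_pos (-x)]
  · rw [abs_of_neg hx]; nlinarith [add_one_le_exp (-x), exp_pos x]

lemma qs_exp_abs_le (a : ℝ) (x : ℝ) : exp (a * |x|) ≤ exp (a * x) + exp (-(a * x)) := by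
  rcases le_or_gt 0 x with hx | hx
  · rw [abs_of_nonneg hx]; nlinarith [exp_pos (-(a*x))]
  · rw [abs_of_neg hx]
    have : a * -x = -(a*x) := by ring
    rw [this]; nlinarith [exp_pos (a*x)]


lemma qs_integral_equation
    {Ω : Type*} [MeasureSpace Ω] [IsProbabilityMeasure (ℙ : Measure Ω)]
    (Z Z' Z'' U : Ω → ℝ) (g : ℝ → ℝ)
    (hgm : Measurable g)
    (hZm : Measurable Z) (hZ'm : Measurable Z') (hZ''m : Measurable Z'')
    (hUm : Measurable U)
    (hZ' : IdentDistrib Z' Z ℙ ℙ) (hZ'' : IdentDistrib Z'' Z ℙ ℙ)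
    (hU : Measure.map U ℙ = volume.restrict (Set.Icc (0 : ℝ) 1))
    (hindep : iIndepFun ![U, Z', Z''] ℙ)
    (hrec : IdentDistrib Z (fun ω => U ω * Z' ω + (1 - U ω) * Z'' ω + g (U ω)) ℙ ℙ)
    (hmgf : ∀ t : ℝ, Integrable (fun ω => Real.exp (t * Z ω)) ℙ) (t : ℝ) :
    mgf Z ℙ t
      = ∫ u in Set.Ioo (0:ℝ) 1, exp (t * g u) * (mgf Z ℙ (t*u) * mgf Z ℙ (t*(1-u))) := by
  classical
  have hmeas3 : ∀ i, Measurable (![U, Z', Z''] i) := by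
    intro i; fin_cases i <;> simpa
  -- independence of U and (Z', Z'')
  have hPair : IndepFun (fun ω => (Z' ω, Z'' ω)) U ℙ := by
    have := hindep.indepFun_prodMk hmeas3 1 2 0 (by decide) (by decide)
    simpa using this
  have hZZ : IndepFun Z' Z'' ℙ := hindep.indepFun (i := 1) (j := 2) (by decide)
  set μZ : Measure ℝ := Measure.map Z ℙ with hμZ
  haveI : IsProbabilityMeasure μZ := Measure.isProbabilityMeasure_map hZm.aemeasurable
  haveI : IsProbabilityMeasure (Measure.map U ℙ) := Measure.isProbabilityMeasure_map hUm.aemeasurable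
  have hmapPair : Measure.map (fun ω => (Z' ω, Z'' ω)) ℙ = μZ.prod μZ := by
    rw [(indepFun_iff_map_prod_eq_prod_map_map hZ'm.aemeasurable hZ''m.aemeasurable).1 hZZ,
      hZ'.map_eq, hZ''.map_eq]
  have hmapJoint : Measure.map (fun ω => (U ω, (Z' ω, Z'' ω))) ℙ
      = (Measure.map U ℙ).prod (μZ.prod μZ) := by
    rw [(indepFun_iff_map_prod_eq_prod_map_map hUm.aemeasurable
      (hZ'm.prodMk hZ''m).aemeasurable).1 hPair.symm, hmapPair]
  -- the function on the product space
  set F : ℝ × (ℝ × ℝ) → ℝ :=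
    fun p => exp (t * (p.1 * p.2.1 + (1 - p.1) * p.2.2 + g p.1)) with hF
  have hFm : Measurable F := by
    apply measurable_exp.comp
    apply Measurable.const_mul
    exact ((measurable_fst.mul (measurable_fst.comp measurable_snd)).add
      ((measurable_const.sub measurable_fst).mul (measurable_snd.comp measurable_snd))).add
      (hgm.comp measurable_fst)
  have hφm : Measurable fun x : ℝ => exp (t * x) := by fun_prop
  have hIdent : IdentDistrib (fun ω => exp (t * Z ω))
      (fun ω => exp (t * (U ω * Z' ω + (1 - U ω) * Z'' ω + g (U ω)))) ℙ ℙ :=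
    hrec.comp hφm
  have hIntΩ : Integrable
      (fun ω => exp (t * (U ω * Z' ω + (1 - U ω) * Z'' ω + g (U ω)))) ℙ :=
    hIdent.integrable_iff.mp (hmgf t)
  have hJm : Measurable (fun ω => (U ω, (Z' ω, Z'' ω))) :=
    hUm.prodMk (hZ'm.prodMk hZ''m)
  have hIntF : Integrable F ((Measure.map U ℙ).prod (μZ.prod μZ)) := by
    rw [← hmapJoint]
    exact (integrable_map_measure hFm.aestronglyMeasurable hJm.aemeasurable).mpr hIntΩ
  have hmgf_map : ∀ s : ℝ, ∫ z, exp (s * z) ∂μZ = mgf Z ℙ s := by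
    intro s
    rw [hμZ, integral_map (f := fun z => exp (s * z)) hZm.aemeasurable
      (by fun_prop : Measurable fun z : ℝ => exp (s * z)).aestronglyMeasurable]
    rfl
  have step1 : mgf Z ℙ t = ∫ p, F p ∂((Measure.map U ℙ).prod (μZ.prod μZ)) := by
    rw [← hmapJoint, integral_map hJm.aemeasurable hFm.aestronglyMeasurable]
    exact hIdent.integral_eq
  have step2 : ∫ p, F p ∂((Measure.map U ℙ).prod (μZ.prod μZ))
      = ∫ u, (∫ q, F (u, q) ∂(μZ.prod μZ)) ∂(Measure.map U ℙ) :=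
    integral_prod F hIntF
  have step3 : ∀ u : ℝ, (∫ q, F (u, q) ∂(μZ.prod μZ))
      = exp (t * g u) * (mgf Z ℙ (t*u) * mgf Z ℙ (t*(1-u))) := by
    intro u
    have hpt : ∀ q : ℝ × ℝ, F (u, q)
        = exp (t * g u) * (exp ((t*u) * q.1) * exp ((t*(1-u)) * q.2)) := by
      intro q
      simp only [hF, ← exp_add]
      ring_nf
    calc (∫ q, F (u, q) ∂(μZ.prod μZ))
        = ∫ q : ℝ × ℝ, exp (t * g u) * (exp ((t*u) * q.1) * exp ((t*(1-u)) * q.2))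
            ∂(μZ.prod μZ) := by
          congr 1; funext q; exact hpt q
      _ = exp (t * g u) * ∫ q : ℝ × ℝ, exp ((t*u) * q.1) * exp ((t*(1-u)) * q.2)
            ∂(μZ.prod μZ) := integral_const_mul _ _
      _ = exp (t * g u) * ((∫ z, exp ((t*u) * z) ∂μZ) * (∫ z, exp ((t*(1-u)) * z) ∂μZ)) := by
          rw [integral_prod_mul (fun z => exp ((t*u) * z)) (fun z => exp ((t*(1-u)) * z))]
      _ = exp (t * g u) * (mgf Z ℙ (t*u) * mgf Z ℙ (t*(1-u))) := by
          rw [hmgf_map, hmgf_map]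
  rw [step1, step2]
  simp only [step3]
  rw [hU, ← Measure.restrict_congr_set Ioo_ae_eq_Icc]


lemma qs_mgf_continuous {Ω : Type*} [MeasureSpace Ω] [IsProbabilityMeasure (ℙ : Measure Ω)]
    (Z : Ω → ℝ) (hZm : Measurable Z)
    (hmgf : ∀ t : ℝ, Integrable (fun ω => Real.exp (t * Z ω)) ℙ) :
    Continuous (mgf Z ℙ) := by
  rw [continuous_iff_continuousAt]
  intro t₀
  have heq : mgf Z ℙ = fun t => ∫ ω, exp (t * Z ω) ∂ℙ := rfl
  rw [heq]
  apply continuousAt_of_dominated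
    (bound := fun ω => exp ((t₀+1) * Z ω) + exp ((t₀-1) * Z ω))
  · filter_upwards with t
    exact (by fun_prop : Measurable fun ω => exp (t * Z ω)).aestronglyMeasurable
  · have hnb : ∀ᶠ t in nhds t₀, t ∈ Set.Icc (t₀-1) (t₀+1) :=
      Icc_mem_nhds (by linarith) (by linarith)
    filter_upwards [hnb] with t ht
    filter_upwards with ω
    rw [Real.norm_eq_abs, abs_of_pos (exp_pos _)]
    rcases le_or_gt 0 (Z ω) with hz | hz
    · have : t * Z ω ≤ (t₀+1) * Z ω := mul_le_mul_of_nonneg_right ht.2 hz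
      have := exp_le_exp.2 this
      nlinarith [exp_pos ((t₀-1) * Z ω)]
    · have : t * Z ω ≤ (t₀-1) * Z ω := by nlinarith [ht.1]
      have := exp_le_exp.2 this
      nlinarith [exp_pos ((t₀+1) * Z ω)]
  · exact (hmgf _).add (hmgf _)
  · filter_upwards with ω
    exact (continuous_exp.comp (continuous_id.mul continuous_const)).continuousAt

lemma qs_mgf_base {Ω : Type*} [MeasureSpace Ω] [IsProbabilityMeasure (ℙ : Measure Ω)]
    (Z : Ω → ℝ) (hZm : Measurable Z) (hmean : ∫ ω, Z ω ∂ℙ = 0)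
    (hmgf : ∀ t : ℝ, Integrable (fun ω => Real.exp (t * Z ω)) ℙ) :
    Integrable (fun ω => (Z ω)^2 * exp (10 * |Z ω|)) ℙ ∧
    ∀ s ∈ Set.Icc (0:ℝ) 10,
      mgf Z ℙ s ≤ 1 + (∫ ω, (Z ω)^2 * exp (10 * |Z ω|) ∂ℙ) * s^2 := by
  have hBm : Measurable fun ω => (Z ω)^2 * exp (10 * |Z ω|) := by fun_prop
  have hintB : Integrable (fun ω => (Z ω)^2 * exp (10 * |Z ω|)) ℙ := by
    apply Integrable.mono' (((hmgf 11).add (hmgf (-11))).const_mul 4)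
      hBm.aestronglyMeasurable
    filter_upwards with ω
    have h1 : (Z ω)^2 ≤ 4 * exp |Z ω| := qs_sq_le_four_exp_abs (Z ω)
    have h2 : exp (11 * |Z ω|) ≤ exp (11 * Z ω) + exp (-(11 * Z ω)) :=
      qs_exp_abs_le 11 (Z ω)
    have h3 : exp |Z ω| * exp (10 * |Z ω|) = exp (11 * |Z ω|) := by
      rw [← exp_add]; ring_nf
    rw [Real.norm_eq_abs, abs_of_nonneg (by positivity)]
    have h4 : (Z ω)^2 * exp (10 * |Z ω|) ≤ 4 * exp (11 * |Z ω|) := by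
      calc (Z ω)^2 * exp (10 * |Z ω|) ≤ (4 * exp |Z ω|) * exp (10 * |Z ω|) := by
            apply mul_le_mul_of_nonneg_right h1 (exp_pos _).le
        _ = 4 * exp (11 * |Z ω|) := by rw [mul_assoc, h3]
    calc (Z ω)^2 * exp (10 * |Z ω|) ≤ 4 * exp (11 * |Z ω|) := h4
      _ ≤ 4 * (exp (11 * Z ω) + exp (-(11 * Z ω))) := by linarith
      _ = 4 * (exp (11 * Z ω) + exp (-11 * Z ω)) := by ring_nf
  have hintZ : Integrable Z ℙ := by
    apply Integrable.mono' ((hmgf 1).add (hmgf (-1))) hZm.aestronglyMeasurable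
    filter_upwards with ω
    rw [Real.norm_eq_abs]
    have := qs_abs_le_exp_add_exp_neg (Z ω)
    calc |Z ω| ≤ exp (Z ω) + exp (-Z ω) := this
      _ = exp (1 * Z ω) + exp (-1 * Z ω) := by ring_nf
  refine ⟨hintB, fun s hs => ?_⟩
  have hpt : ∀ ω, exp (s * Z ω) ≤ 1 + s * Z ω + (Z ω)^2 * exp (10 * |Z ω|) * s^2 := by
    intro ω
    have h := qs_exp_quad (s * Z ω)
    have h2 : |s * Z ω| = s * |Z ω| := by
      rw [abs_mul, abs_of_nonneg hs.1]
    have h3 : exp (s * |Z ω|) ≤ exp (10 * |Z ω|) :=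
      exp_le_exp.2 (mul_le_mul_of_nonneg_right hs.2 (abs_nonneg _))
    have h4 : (s * Z ω)^2 * exp |s * Z ω| ≤ (Z ω)^2 * exp (10 * |Z ω|) * s^2 := by
      rw [h2]
      calc (s * Z ω)^2 * exp (s * |Z ω|) ≤ (s * Z ω)^2 * exp (10 * |Z ω|) := by
            apply mul_le_mul_of_nonneg_left h3 (sq_nonneg _)
        _ = (Z ω)^2 * exp (10 * |Z ω|) * s^2 := by ring
    linarith
  have hRint : Integrable (fun ω => 1 + s * Z ω + (Z ω)^2 * exp (10 * |Z ω|) * s^2) ℙ := by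
    apply Integrable.add
    · exact (integrable_const 1).add (hintZ.const_mul s)
    · exact hintB.mul_const (s^2)

  calc mgf Z ℙ s = ∫ ω, exp (s * Z ω) ∂ℙ := rfl
    _ ≤ ∫ ω, (1 + s * Z ω + (Z ω)^2 * exp (10 * |Z ω|) * s^2) ∂ℙ :=
        integral_mono (hmgf s) hRint hpt
    _ = 1 + (∫ ω, (Z ω)^2 * exp (10 * |Z ω|) ∂ℙ) * s^2 := by
        have i1 : Integrable (fun ω => 1 + s * Z ω) ℙ :=
          (integrable_const 1).add (hintZ.const_mul s)
        rw [integral_add i1 (hintB.mul_const _), integral_add (integrable_const 1)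
          (hintZ.const_mul s), integral_const, integral_const_mul, integral_mul_const, hmean]
        simp


lemma qs_int_exp_neg (a : ℝ) (ha : 0 < a) :
    ∫ u in Set.Ioo (0:ℝ) 1, exp (-(a * u)) ≤ 1 / a := by
  have h1 : ∫ u in Set.Ioo (0:ℝ) 1, exp (-(a * u))
      = ∫ u in (0:ℝ)..1, exp (-(a * u)) := by
    rw [intervalIntegral.integral_of_le (by norm_num : (0:ℝ) ≤ 1),
      Measure.restrict_congr_set Ioo_ae_eq_Ioc]
  have h2 : ∫ u in (0:ℝ)..1, exp (-(a * u)) = (1 - exp (-a)) / a := by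
    have heq : ∀ u : ℝ, exp (-(a * u)) = exp ((-a) * u) := by intro u; ring_nf
    simp_rw [heq]
    rw [intervalIntegral.integral_comp_mul_left (fun x => exp x) (by linarith : (-a) ≠ 0)]
    rw [mul_zero, mul_one, integral_exp, smul_eq_mul]
    rw [exp_zero]
    have hane : a ≠ 0 := ne_of_gt ha
    have h4 : a * a⁻¹ = 1 := mul_inv_cancel₀ hane
    field_simp
    linear_combination (0:ℝ) * h4
  rw [h1, h2]
  have := exp_pos (-a)
  rw [div_le_div_iff₀ ha ha]
  nlinarith

lemma qs_I2_eq (a : ℝ) : ∫ u in Set.Ioo (0:ℝ) 1, exp (-(a * (1-u)))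
    = ∫ u in Set.Ioo (0:ℝ) 1, exp (-(a * u)) := by
  rw [Measure.restrict_congr_set Ioo_ae_eq_Ioc,
    ← intervalIntegral.integral_of_le (by norm_num : (0:ℝ) ≤ 1),
    ← intervalIntegral.integral_of_le (by norm_num : (0:ℝ) ≤ 1)]
  have := intervalIntegral.integral_comp_sub_left (a := (0:ℝ)) (b := 1)
    (fun x => exp (-(a * x))) 1
  simpa using this

set_option maxHeartbeats 1000000 in
lemma qs_step (c t : ℝ) (hc : 10 ≤ c) (ht : 10 ≤ t) :
    ∃ H : ℝ → ℝ, IntegrableOn H (Set.Ioo (0:ℝ) 1) volume ∧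
      (∀ u ∈ Set.Ioo (0:ℝ) 1,
        exp (t * (2*u*Real.log u + 2*(1-u)*Real.log (1-u) + 1))
            * (exp (c*(exp (t*u) - 1)) * exp (c*(exp (t*(1-u)) - 1)))
          ≤ exp (c*(exp t - 1)) * H u) ∧
      (∫ u in Set.Ioo (0:ℝ) 1, H u) ≤ 1/2 := by
  set a : ℝ := c * t * exp (t-1) / 2 with ha_def
  have hexp_t1 : (2:ℝ) ≤ exp (t-1) := by
    have := add_one_le_exp (t-1); linarith
  have hexp_t2 : (6:ℝ) ≤ exp (t/2) := by
    have := add_one_le_exp (t/2); linarith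
  have ha : 0 < a := by positivity
  have hint1 : IntegrableOn (fun u => exp t * exp (-(a * u))) (Set.Ioo (0:ℝ) 1) volume :=
    ((continuous_const.mul (continuous_exp.comp (by fun_prop))).integrableOn_Icc).mono_set
      Set.Ioo_subset_Icc_self
  have hint2 : IntegrableOn (fun u => exp t * exp (-(a * (1-u)))) (Set.Ioo (0:ℝ) 1) volume :=
    ((continuous_const.mul (continuous_exp.comp (by fun_prop))).integrableOn_Icc).mono_set
      Set.Ioo_subset_Icc_self
  have hint3 : IntegrableOn (fun _ : ℝ => exp (t - c * exp (t/2) / 2))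
      (Set.Ioo (0:ℝ) 1) volume :=
    (continuous_const.integrableOn_Icc).mono_set Set.Ioo_subset_Icc_self
  refine ⟨fun u => exp t * exp (-(a * u)) + exp t * exp (-(a * (1-u)))
    + exp (t - c * exp (t/2) / 2), (hint1.add hint2).add hint3, ?_, ?_⟩
  · intro u hu
    obtain ⟨hu0, hu1⟩ := hu
    have ht0 : (0:ℝ) < t := by linarith
    have hg1 : 2*u*Real.log u + 2*(1-u)*Real.log (1-u) + 1 ≤ 1 := by
      have l1 : Real.log u ≤ 0 := Real.log_nonpos (by linarith) (by linarith)
      have l2 : Real.log (1-u) ≤ 0 := Real.log_nonpos (by linarith) (by linarith)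
      nlinarith
    have hgu : t * (2*u*Real.log u + 2*(1-u)*Real.log (1-u) + 1) ≤ t := by nlinarith
    have hEF : exp (t*u) * exp (t*(1-u)) = exp t := by rw [← exp_add]; ring_nf
    have hE1 : t*u ≤ exp (t*u) - 1 := by have := add_one_le_exp (t*u); linarith
    have hF1 : t*(1-u) ≤ exp (t*(1-u)) - 1 := by
      have := add_one_le_exp (t*(1-u)); linarith
    have hE0 : 0 < exp (t*u) - 1 := by nlinarith
    have hF0 : 0 < exp (t*(1-u)) - 1 := by nlinarith
    have hid : exp (c*(exp (t*u) - 1)) * exp (c*(exp (t*(1-u)) - 1))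
        = exp (c*(exp t - 1))
          * exp (-(c * ((exp (t*u)-1)*(exp (t*(1-u))-1)))) := by
      rw [← exp_add, ← exp_add]
      congr 1
      nlinarith [hEF]
    have key : exp (-(c * ((exp (t*u)-1)*(exp (t*(1-u))-1))))
        ≤ exp (-(a*u)) + exp (-(a*(1-u))) + exp (-(c * exp (t/2) / 2)) := by
      rcases le_or_gt (t*u) 1 with hcase1 | hcase1
      · have h1 : t - 1 ≤ t * (1-u) := by nlinarith
        have h2 : exp (t-1) / 2 ≤ exp (t*(1-u)) - 1 := by
          have := exp_le_exp.2 h1; linarith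
        have h3 : a * u ≤ c * ((exp (t*u)-1)*(exp (t*(1-u))-1)) := by
          have e1 : t * u * (exp (t-1)/2) ≤ (exp (t*u)-1)*(exp (t*(1-u))-1) :=
            mul_le_mul hE1 h2 (by positivity) (le_of_lt hE0)
          have : a * u = c * (t * u * (exp (t-1)/2)) := by rw [ha_def]; ring
          rw [this]
          nlinarith
        have := exp_le_exp.2 (neg_le_neg h3)
        have p2 := exp_pos (-(a*(1-u)))
        have p3 := exp_pos (-(c * exp (t/2)/2))
        linarith
      · rcases le_or_gt (t*(1-u)) 1 with hcase2 | hcase2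
        · have h1 : t - 1 ≤ t * u := by nlinarith
          have h2 : exp (t-1) / 2 ≤ exp (t*u) - 1 := by
            have := exp_le_exp.2 h1; linarith
          have h3 : a * (1-u) ≤ c * ((exp (t*u)-1)*(exp (t*(1-u))-1)) := by
            have e1 : (exp (t-1)/2) * (t * (1-u)) ≤ (exp (t*u)-1)*(exp (t*(1-u))-1) :=
              mul_le_mul h2 hF1 (le_of_lt (mul_pos ht0 (by linarith))) (le_of_lt hE0)
            have : a * (1-u) = c * ((exp (t-1)/2) * (t * (1-u))) := by rw [ha_def]; ring
            rw [this]
            nlinarith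
          have := exp_le_exp.2 (neg_le_neg h3)
          have p2 := exp_pos (-(a*u))
          have p3 := exp_pos (-(c * exp (t/2)/2))
          linarith
        · have h3 : c * exp (t/2) / 2 ≤ c * ((exp (t*u)-1)*(exp (t*(1-u))-1)) := by
            rcases le_or_gt (1/2 : ℝ) u with hhalf | hhalf
            · have e1 : exp (t/2) / 2 ≤ exp (t*u) - 1 := by
                have : exp (t/2) ≤ exp (t*u) := exp_le_exp.2 (by nlinarith)
                linarith
              have e2 : (1:ℝ) ≤ exp (t*(1-u)) - 1 := by linarith
              have := mul_le_mul e1 e2 (by norm_num) (le_of_lt hE0)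
              nlinarith
            · have e1 : exp (t/2) / 2 ≤ exp (t*(1-u)) - 1 := by
                have : exp (t/2) ≤ exp (t*(1-u)) := exp_le_exp.2 (by nlinarith)
                linarith
              have e2 : (1:ℝ) ≤ exp (t*u) - 1 := by linarith
              have := mul_le_mul e2 e1 (by positivity) (le_of_lt hE0)
              nlinarith
          have := exp_le_exp.2 (neg_le_neg h3)
          have p1 := exp_pos (-(a*u))
          have p2 := exp_pos (-(a*(1-u)))
          linarith
    calc exp (t * (2*u*Real.log u + 2*(1-u)*Real.log (1-u) + 1))
          * (exp (c*(exp (t*u) - 1)) * exp (c*(exp (t*(1-u)) - 1)))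
        ≤ exp t * (exp (c*(exp (t*u) - 1)) * exp (c*(exp (t*(1-u)) - 1))) :=
          mul_le_mul_of_nonneg_right (exp_le_exp.2 hgu) (by positivity)
      _ = exp (c*(exp t - 1))
            * (exp t * exp (-(c * ((exp (t*u)-1)*(exp (t*(1-u))-1))))) := by
          rw [hid]; ring
      _ ≤ exp (c*(exp t - 1)) * (exp t * (exp (-(a*u)) + exp (-(a*(1-u)))
            + exp (-(c * exp (t/2) / 2)))) :=
          mul_le_mul_of_nonneg_left
            (mul_le_mul_of_nonneg_left key (exp_pos t).le) (exp_pos _).le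
      _ = exp (c*(exp t - 1)) * (exp t * exp (-(a * u)) + exp t * exp (-(a * (1-u)))
            + exp (t - c * exp (t/2) / 2)) := by
          rw [sub_eq_add_neg t, exp_add]; ring
  · -- integral bound
    have ht0 : (0:ℝ) < t := by linarith
    set I : ℝ := ∫ u in Set.Ioo (0:ℝ) 1, exp (-(a * u)) with hI
    have hIpos : 0 ≤ I := setIntegral_nonneg measurableSet_Ioo (fun u _ => (exp_pos _).le)
    have hIle : I ≤ 1/a := qs_int_exp_neg a ha
    have hsplit : (∫ u in Set.Ioo (0:ℝ) 1, (exp t * exp (-(a * u))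
          + exp t * exp (-(a * (1-u))) + exp (t - c * exp (t/2) / 2)))
        = exp t * I + exp t * I + exp (t - c * exp (t/2) / 2) := by
      have i12 : IntegrableOn (fun u => exp t * exp (-(a * u))
          + exp t * exp (-(a * (1-u)))) (Set.Ioo (0:ℝ) 1) volume := hint1.add hint2
      rw [integral_add i12 hint3, integral_add hint1 hint2]
      rw [setIntegral_const]
      rw [integral_const_mul, integral_const_mul, qs_I2_eq, ← hI]
      simp [Real.volume_Ioo]
    rw [hsplit]
    have hterm : exp t * I ≤ 2 * exp 1 / (c * t) := by
      have h1 : exp t * I ≤ exp t * (1/a) :=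
        mul_le_mul_of_nonneg_left hIle (exp_pos t).le
      have h2 : exp t * (1/a) = 2 * exp 1 / (c * t) := by
        rw [ha_def]
        have h3 : exp t = exp 1 * exp (t-1) := by rw [← exp_add]; ring_nf
        rw [h3]
        field_simp
      linarith
    have hct : (100:ℝ) ≤ c * t := by nlinarith
    have hterm2 : 2 * exp 1 / (c * t) ≤ 2 * exp 1 / 100 := by
      apply div_le_div_of_nonneg_left (by positivity) (by norm_num) hct
    have hB : exp (t - c * exp (t/2) / 2) ≤ exp (-2 : ℝ) := by
      apply exp_le_exp.2
      have h5 : (1:ℝ) + t/2 ≤ exp (t/2) := by linarith [add_one_le_exp (t/2)]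
      nlinarith [mul_le_mul_of_nonneg_left h5 (by linarith : (0:ℝ) ≤ c)]
    have he1 : (2.7182818283:ℝ) < exp 1 := exp_one_gt_d9
    have he2 : exp 1 < 2.7182818286 := exp_one_lt_d9
    have hen : exp (-2:ℝ) * (exp 1 * exp 1) = 1 := by
      rw [← exp_add, ← exp_add]; norm_num
    have he3 : exp (-2:ℝ) ≤ 0.14 := by nlinarith [exp_pos (-2:ℝ)]
    nlinarith


/-- Upper bound of Theorem 1(ii): there are `C > 0` and `x₀ > 0` such
that for all `x ≥ x₀`, `P(Z ≥ x) ≤ exp(-x·ln x + C·x)`. -/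
theorem quicksort_right_tail_upper_bound
    {Ω : Type*} [MeasureSpace Ω] [IsProbabilityMeasure (ℙ : Measure Ω)]
    (Z Z' Z'' U : Ω → ℝ) (g : ℝ → ℝ)
    (hg : ∀ u : ℝ, g u = 2 * u * Real.log u + 2 * (1 - u) * Real.log (1 - u) + 1)
    (hZm : Measurable Z) (hZ'm : Measurable Z') (hZ''m : Measurable Z'')
    (hUm : Measurable U)
    (hZ' : IdentDistrib Z' Z ℙ ℙ) (hZ'' : IdentDistrib Z'' Z ℙ ℙ)
    (hU : Measure.map U ℙ = volume.restrict (Set.Icc (0 : ℝ) 1))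
    (hindep : iIndepFun ![U, Z', Z''] ℙ)
    (hrec : IdentDistrib Z (fun ω => U ω * Z' ω + (1 - U ω) * Z'' ω + g (U ω)) ℙ ℙ)
    (hmean : ∫ ω, Z ω ∂ℙ = 0)
    (hmgf : ∀ t : ℝ, Integrable (fun ω => Real.exp (t * Z ω)) ℙ) :
    ∃ C > (0 : ℝ), ∃ x₀ > (0 : ℝ), ∀ x ≥ x₀,
      (ℙ {ω | x ≤ Z ω}).toReal ≤ Real.exp (-x * Real.log x + C * x) := by
  obtain ⟨hintB, hbase⟩ := qs_mgf_base Z hZm hmean hmgf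
  set A : ℝ := ∫ ω, (Z ω)^2 * exp (10 * |Z ω|) ∂ℙ with hA
  have hA0 : 0 ≤ A := integral_nonneg fun ω => by positivity
  set c : ℝ := 10 * A + 10 with hc_def
  have hc10 : 10 ≤ c := by linarith
  have hc0 : 0 < c := by linarith
  set Φ : ℝ → ℝ := fun s => exp (c * (exp s - 1)) with hΦ
  have hgm : Measurable g := by
    have hgfun : g = fun u => 2 * u * Real.log u + 2 * (1 - u) * Real.log (1 - u) + 1 :=
      funext hg
    rw [hgfun]
    exact (((measurable_const.mul measurable_id).mul Real.measurable_log).add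
      ((measurable_const.mul (measurable_const.sub measurable_id)).mul
        (Real.measurable_log.comp (measurable_const.sub measurable_id)))).add measurable_const
  have hψcont : Continuous (mgf Z ℙ) := qs_mgf_continuous Z hZm hmgf
  have hbase' : ∀ s ∈ Set.Icc (0:ℝ) 10, mgf Z ℙ s ≤ Φ s := by
    intro s hs
    have h1 := hbase s hs
    have h2 : A * s^2 ≤ c * s := by
      nlinarith [hs.1, hs.2, mul_nonneg (mul_nonneg hA0 hs.1) (sub_nonneg.2 hs.2)]
    have h3 : c * s ≤ c * (exp s - 1) := by
      have := add_one_le_exp s; nlinarith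
    have h4 : 1 + c * (exp s - 1) ≤ exp (c * (exp s - 1)) := by
      linarith [add_one_le_exp (c * (exp s - 1))]
    calc mgf Z ℙ s ≤ 1 + A * s^2 := h1
      _ ≤ exp (c * (exp s - 1)) := by linarith
  have hstep : ∀ τ : ℝ, 10 ≤ τ → (∀ s, 0 ≤ s → s < τ → mgf Z ℙ s ≤ Φ s) →
      mgf Z ℙ τ ≤ Φ τ / 2 := by
    intro τ hτ hind
    obtain ⟨H, hHint, hHpt, hHle⟩ := qs_step c τ hc10 hτ
    have heq := qs_integral_equation Z Z' Z'' U g hgm hZm hZ'm hZ''m hUm hZ' hZ'' hU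
      hindep hrec hmgf τ
    rw [heq]
    have hτ0 : (0:ℝ) < τ := by linarith
    have hmono : ∫ u in Set.Ioo (0:ℝ) 1, exp (τ * g u) * (mgf Z ℙ (τ*u) * mgf Z ℙ (τ*(1-u)))
        ≤ ∫ u in Set.Ioo (0:ℝ) 1, Φ τ * H u := by
      apply integral_mono_of_nonneg
      · filter_upwards with u
        exact mul_nonneg (exp_pos _).le (mul_nonneg mgf_nonneg mgf_nonneg)
      · exact hHint.const_mul (Φ τ)
      · filter_upwards [ae_restrict_mem measurableSet_Ioo] with u hu
        obtain ⟨hu0, hu1⟩ := hu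
        have h1 : mgf Z ℙ (τ*u) ≤ Φ (τ*u) := by
          apply hind _ (by positivity)
          nlinarith
        have h2 : mgf Z ℙ (τ*(1-u)) ≤ Φ (τ*(1-u)) := by
          apply hind _ (by nlinarith)
          nlinarith
        calc exp (τ * g u) * (mgf Z ℙ (τ*u) * mgf Z ℙ (τ*(1-u)))
            ≤ exp (τ * g u) * (Φ (τ*u) * Φ (τ*(1-u))) := by
              apply mul_le_mul_of_nonneg_left _ (exp_pos _).le
              exact mul_le_mul h1 h2 mgf_nonneg (le_trans mgf_nonneg h1)
          _ ≤ Φ τ * H u := by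
              rw [hg u]
              exact hHpt u ⟨hu0, hu1⟩
    calc ∫ u in Set.Ioo (0:ℝ) 1, exp (τ * g u) * (mgf Z ℙ (τ*u) * mgf Z ℙ (τ*(1-u)))
        ≤ ∫ u in Set.Ioo (0:ℝ) 1, Φ τ * H u := hmono
      _ = Φ τ * ∫ u in Set.Ioo (0:ℝ) 1, H u := integral_const_mul _ _
      _ ≤ Φ τ * (1/2) := by
          apply mul_le_mul_of_nonneg_left hHle (exp_pos _).le
      _ = Φ τ / 2 := by ring
  have hglobal : ∀ t, 0 ≤ t → mgf Z ℙ t ≤ Φ t := by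
    by_contra hcon
    push_neg at hcon
    obtain ⟨t₁, ht₁0, ht₁⟩ := hcon
    set B : Set ℝ := {t : ℝ | 0 ≤ t ∧ Φ t < mgf Z ℙ t} with hB
    have hBne : B.Nonempty := ⟨t₁, ht₁0, ht₁⟩
    have hBbd : BddBelow B := ⟨0, fun b hb => hb.1⟩
    set τ := sInf B with hτdef
    have hτmem : ∀ b ∈ B, (10:ℝ) ≤ b := by
      intro b hb
      by_contra hb10
      push_neg at hb10
      exact absurd (hbase' b ⟨hb.1, hb10.le⟩) (not_le.2 hb.2)
    have hτ10 : 10 ≤ τ := le_csInf hBne hτmem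
    have hind : ∀ s, 0 ≤ s → s < τ → mgf Z ℙ s ≤ Φ s := by
      intro s hs0 hsτ
      by_contra hcon2
      push_neg at hcon2
      exact absurd (csInf_le hBbd ⟨hs0, hcon2⟩) (not_le.2 hsτ)
    have hτle := hstep τ hτ10 hind
    have hΦpos : 0 < Φ τ := exp_pos _
    have hlt : mgf Z ℙ τ < Φ τ := lt_of_le_of_lt hτle (by linarith)
    have hconts : Continuous fun t => Φ t - mgf Z ℙ t := by
      apply Continuous.sub _ hψcont
      exact continuous_exp.comp (continuous_const.mul (continuous_exp.sub continuous_const))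
    have hev : ∀ᶠ t in nhds τ, 0 < Φ t - mgf Z ℙ t := by
      have hca : ContinuousAt (fun t => Φ t - mgf Z ℙ t) τ := hconts.continuousAt
      exact continuousAt_const.eventually_lt hca (by simpa using sub_pos.2 hlt)
    obtain ⟨ε, hε, hball⟩ := Metric.eventually_nhds_iff.mp hev
    have hcontra : τ + ε ≤ τ := by
      rw [hτdef]
      apply le_csInf hBne
      intro b hb
      by_contra hblt
      push_neg at hblt
      have hbτ : τ ≤ b := csInf_le hBbd hb
      have hdist : dist b τ < ε := by
        rw [Real.dist_eq, abs_sub_lt_iff]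
        constructor <;> linarith
      have := hball hdist
      have := hb.2
      linarith
    linarith
  refine ⟨c, hc0, exp 10, exp_pos 10, fun x hx => ?_⟩
  have hx0 : 0 < x := lt_of_lt_of_le (exp_pos 10) hx
  have ht0 : 0 ≤ Real.log x := by
    calc (0:ℝ) ≤ 10 := by norm_num
      _ = Real.log (exp 10) := (Real.log_exp 10).symm
      _ ≤ Real.log x := Real.log_le_log (exp_pos 10) hx
  have hch := measure_ge_le_exp_mul_mgf (X := Z) (μ := ℙ) (t := Real.log x) x ht0 (hmgf _)
  calc (ℙ {ω | x ≤ Z ω}).toReal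
      ≤ exp (-(Real.log x) * x) * mgf Z ℙ (Real.log x) := hch
    _ ≤ exp (-(Real.log x) * x) * Φ (Real.log x) := by
        apply mul_le_mul_of_nonneg_left (hglobal _ ht0) (exp_pos _).le
    _ = exp (-(Real.log x) * x + c * (exp (Real.log x) - 1)) := by rw [← exp_add]
    _ = exp (-(Real.log x) * x + c * (x - 1)) := by rw [Real.exp_log hx0]
    _ ≤ exp (-x * Real.log x + c * x) := by
        apply exp_le_exp.2
        nlinarith [hc0]
end

section
/- There exists a constant C > 0 such that for all x ≥ 2, P(Z ≥ x) ≤ exp(−x·ln x + x + C·ln x). (Sharper right-tail upper bound obtained in the proof, equation (ql).) -/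
open MeasureTheory ProbabilityTheory Real

/-- `exp (t*u*z) ≤ 1 + exp (t*z)` for `0 ≤ t`, `u ∈ [0,1]`. -/
lemma qs_exp_interp {t u z : ℝ} (ht : 0 ≤ t) (hu0 : 0 ≤ u) (hu1 : u ≤ 1) :
    Real.exp (t * u * z) ≤ 1 + Real.exp (t * z) := by
  rcases le_total z 0 with hz | hz
  · have h1 : t * u * z ≤ 0 := mul_nonpos_of_nonneg_of_nonpos (mul_nonneg ht hu0) hz
    have h2 : Real.exp (t * u * z) ≤ 1 := Real.exp_le_one_iff.mpr h1
    linarith [Real.exp_pos (t * z)]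
  · have h1 : t * u * z ≤ t * z := by
      nlinarith [mul_nonneg (mul_nonneg ht hz) (sub_nonneg.mpr hu1)]
    have h2 := Real.exp_le_exp.mpr h1
    linarith

lemma qs_g_le_one {g : ℝ → ℝ}
    (hg : ∀ u : ℝ, g u = 2 * u * Real.log u + 2 * (1 - u) * Real.log (1 - u) + 1)
    {u : ℝ} (hu0 : 0 ≤ u) (hu1 : u ≤ 1) : g u ≤ 1 := by
  rw [hg]
  have l1 := Real.log_nonpos hu0 hu1
  have l2 := Real.log_nonpos (by linarith : (0:ℝ) ≤ 1 - u) (by linarith : 1 - u ≤ 1)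
  nlinarith

/-- Pointwise bound for the key integrand. -/
lemma qs_pointwise {t u : ℝ} (ht : (240:ℝ) ≤ t) (hu0 : 0 ≤ u) (hu1 : u ≤ 1) :
    Real.exp (Real.exp (t * u) + Real.exp (t * (1 - u))) ≤
      Real.exp (Real.exp t + 1) *
        (Real.exp (-(t * Real.exp (t - 1) / 2 * u)) +
          Real.exp (-(t * Real.exp (t - 1) / 2 * (1 - u))) +
          Real.exp (-Real.exp (t / 2))) := by
  have hid : Real.exp (t * u) + Real.exp (t * (1 - u))
      = Real.exp t + 1 - (Real.exp (t * u) - 1) * (Real.exp (t * (1 - u)) - 1) := by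
    have : Real.exp (t * u) * Real.exp (t * (1 - u)) = Real.exp t := by
      rw [← Real.exp_add]; ring_nf
    nlinarith [this]
  set P : ℝ := (Real.exp (t * u) - 1) * (Real.exp (t * (1 - u)) - 1) with hP
  have hsplit : Real.exp (Real.exp (t * u) + Real.exp (t * (1 - u)))
      = Real.exp (Real.exp t + 1) * Real.exp (-P) := by
    rw [← Real.exp_add, hid]; ring_nf
  rw [hsplit]
  have key : Real.exp (-P) ≤
      Real.exp (-(t * Real.exp (t - 1) / 2 * u)) +
      Real.exp (-(t * Real.exp (t - 1) / 2 * (1 - u))) +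
      Real.exp (-Real.exp (t / 2)) := by
    have ha0 : 0 ≤ t * u := by nlinarith
    have hb0 : 0 ≤ t * (1 - u) := by nlinarith
    have hea1 : 1 ≤ Real.exp (t * u) := by nlinarith [Real.add_one_le_exp (t * u)]
    have heb1 : 1 ≤ Real.exp (t * (1 - u)) := by nlinarith [Real.add_one_le_exp (t * (1 - u))]
    have p1 := Real.exp_pos (-(t * Real.exp (t - 1) / 2 * u))
    have p2 := Real.exp_pos (-(t * Real.exp (t - 1) / 2 * (1 - u)))
    have p3 := Real.exp_pos (-Real.exp (t / 2))
    by_cases h1 : t * u ≤ 1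
    · -- left edge
      have ea : t * u ≤ Real.exp (t * u) - 1 := by linarith [Real.add_one_le_exp (t * u)]
      have hb1 : t - 1 ≤ t * (1 - u) := by nlinarith
      have h2exp : (2:ℝ) ≤ Real.exp (t - 1) := by nlinarith [Real.add_one_le_exp (t - 1)]
      have eb : Real.exp (t - 1) / 2 ≤ Real.exp (t * (1 - u)) - 1 := by
        have := Real.exp_le_exp.mpr hb1; linarith
      have hPb : t * Real.exp (t - 1) / 2 * u ≤ P := by
        have h0 : t * Real.exp (t - 1) / 2 * u = (t * u) * (Real.exp (t - 1) / 2) := by ring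
        rw [h0, hP]
        exact mul_le_mul ea eb (by positivity) (by linarith)
      have := Real.exp_le_exp.mpr (neg_le_neg hPb)
      linarith
    · by_cases h2 : t * (1 - u) ≤ 1
      · -- right edge
        have ea : t * (1 - u) ≤ Real.exp (t * (1 - u)) - 1 := by
          linarith [Real.add_one_le_exp (t * (1 - u))]
        have hb1 : t - 1 ≤ t * u := by nlinarith
        have h2exp : (2:ℝ) ≤ Real.exp (t - 1) := by nlinarith [Real.add_one_le_exp (t - 1)]
        have eb : Real.exp (t - 1) / 2 ≤ Real.exp (t * u) - 1 := by
          have := Real.exp_le_exp.mpr hb1; linarith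
        have hPb : t * Real.exp (t - 1) / 2 * (1 - u) ≤ P := by
          have h0 : t * Real.exp (t - 1) / 2 * (1 - u)
              = (t * (1 - u)) * (Real.exp (t - 1) / 2) := by ring
          rw [h0, hP, mul_comm (Real.exp (t * u) - 1)]
          exact mul_le_mul ea eb (by positivity) (by linarith)
        have := Real.exp_le_exp.mpr (neg_le_neg hPb)
        linarith
      · -- middle
        push_neg at h1 h2
        have ht2 : t / 2 + 1 ≤ Real.exp (t / 2) := Real.add_one_le_exp (t / 2)
        have he1 : (2.7:ℝ) < Real.exp 1 := by
          have := Real.exp_one_gt_d9; norm_num at this ⊢; linarith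
        have hPb : Real.exp (t / 2) ≤ P := by
          rcases le_total (t / 2) (t * u) with hc | hc
          · have e1 : Real.exp (t / 2) ≤ Real.exp (t * u) := Real.exp_le_exp.mpr hc
            have e2 : Real.exp 1 ≤ Real.exp (t * (1 - u)) := Real.exp_le_exp.mpr h2.le
            rw [hP]; nlinarith [Real.exp_pos (t / 2)]
          · have hc' : t / 2 ≤ t * (1 - u) := by nlinarith
            have e1 : Real.exp (t / 2) ≤ Real.exp (t * (1 - u)) := Real.exp_le_exp.mpr hc'
            have e2 : Real.exp 1 ≤ Real.exp (t * u) := Real.exp_le_exp.mpr h1.le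
            rw [hP]; nlinarith [Real.exp_pos (t / 2)]
        have := Real.exp_le_exp.mpr (neg_le_neg hPb)
        linarith
  calc Real.exp (Real.exp t + 1) * Real.exp (-P)
      ≤ Real.exp (Real.exp t + 1) *
        (Real.exp (-(t * Real.exp (t - 1) / 2 * u)) +
          Real.exp (-(t * Real.exp (t - 1) / 2 * (1 - u))) +
          Real.exp (-Real.exp (t / 2))) :=
        mul_le_mul_of_nonneg_left key (Real.exp_pos _).le


lemma qs_intexp0 {c : ℝ} (hc : 0 < c) :
    ∫ u in (0:ℝ)..1, Real.exp (-(c * u)) ≤ 1 / c := by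
  have hd : ∀ x ∈ Set.uIcc (0:ℝ) 1,
      HasDerivAt (fun y : ℝ => -Real.exp (-(c * y)) / c) (Real.exp (-(c * x))) x := by
    intro x _
    have h1 : HasDerivAt (fun y : ℝ => -(c * y)) (-c) x := by
      simpa using ((hasDerivAt_id x).const_mul (-c))
    have h2 := (h1.exp.div_const c).fun_neg
    simp only [neg_div]
    refine h2.congr_deriv ?_
    rw [mul_neg, neg_div, neg_neg, mul_div_assoc, div_self hc.ne', mul_one]
  have hci : IntervalIntegrable (fun x : ℝ => Real.exp (-(c * x))) volume 0 1 :=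
    (Real.continuous_exp.comp (continuous_const.mul continuous_id).neg).intervalIntegrable 0 1
  rw [intervalIntegral.integral_eq_sub_of_hasDerivAt hd hci]
  have h1 := Real.exp_pos (-(c * 1))
  have h2 : Real.exp (-(c * 0)) = 1 := by norm_num
  rw [h2]
  have h3 : 0 ≤ Real.exp (-(c * 1)) / c := by positivity
  rw [neg_div, neg_div]
  linarith

lemma qs_intexp {c : ℝ} (hc : 0 < c) :
    ∫ u in Set.Icc (0:ℝ) 1, Real.exp (-(c * u)) ≤ 1 / c := by
  rw [MeasureTheory.integral_Icc_eq_integral_Ioc,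
    ← intervalIntegral.integral_of_le (zero_le_one)]
  exact qs_intexp0 hc

lemma qs_intexp' {c : ℝ} (hc : 0 < c) :
    ∫ u in Set.Icc (0:ℝ) 1, Real.exp (-(c * (1 - u))) ≤ 1 / c := by
  rw [MeasureTheory.integral_Icc_eq_integral_Ioc,
    ← intervalIntegral.integral_of_le (zero_le_one)]
  have h := intervalIntegral.integral_comp_sub_left
    (a := (0:ℝ)) (b := (1:ℝ)) (fun x : ℝ => Real.exp (-(c * x))) 1
  norm_num at h
  rw [h]
  exact qs_intexp0 hc


lemma qs_J {t : ℝ} (ht : (240:ℝ) ≤ t) :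
    ∫ u in Set.Icc (0:ℝ) 1, Real.exp (Real.exp (t * u) + Real.exp (t * (1 - u)))
      ≤ (1 / 2) * Real.exp (Real.exp t - t) := by
  have htpos : (0:ℝ) < t := by linarith
  set c : ℝ := t * Real.exp (t - 1) / 2 with hc_def
  have hcpos : 0 < c := by positivity
  -- continuity of the pieces
  have hcont1 : Continuous fun u : ℝ => Real.exp (Real.exp (t * u) + Real.exp (t * (1 - u))) := by
    fun_prop
  have hcont2 : Continuous fun u : ℝ =>
      Real.exp (Real.exp t + 1) *
        (Real.exp (-(c * u)) + Real.exp (-(c * (1 - u))) + Real.exp (-Real.exp (t / 2))) := by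
    fun_prop
  have hmono : ∫ u in Set.Icc (0:ℝ) 1, Real.exp (Real.exp (t * u) + Real.exp (t * (1 - u)))
      ≤ ∫ u in Set.Icc (0:ℝ) 1, Real.exp (Real.exp t + 1) *
          (Real.exp (-(c * u)) + Real.exp (-(c * (1 - u))) + Real.exp (-Real.exp (t / 2))) := by
    refine setIntegral_mono_on (hcont1.integrableOn_Icc) (hcont2.integrableOn_Icc)
      measurableSet_Icc ?_
    intro u hu
    simpa [hc_def] using qs_pointwise ht hu.1 hu.2
  refine hmono.trans ?_
  -- compute RHS
  have hint1 : IntegrableOn (fun u : ℝ => Real.exp (-(c * u))) (Set.Icc (0:ℝ) 1) := by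
    apply Continuous.integrableOn_Icc; fun_prop
  have hint2 : IntegrableOn (fun u : ℝ => Real.exp (-(c * (1 - u)))) (Set.Icc (0:ℝ) 1) := by
    apply Continuous.integrableOn_Icc; fun_prop
  have hsplit : ∫ u in Set.Icc (0:ℝ) 1, Real.exp (Real.exp t + 1) *
      (Real.exp (-(c * u)) + Real.exp (-(c * (1 - u))) + Real.exp (-Real.exp (t / 2)))
      = Real.exp (Real.exp t + 1) *
        ((∫ u in Set.Icc (0:ℝ) 1, Real.exp (-(c * u)))
          + (∫ u in Set.Icc (0:ℝ) 1, Real.exp (-(c * (1 - u))))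
          + Real.exp (-Real.exp (t / 2))) := by
    rw [MeasureTheory.integral_const_mul]
    congr 1
    have hint12 : IntegrableOn (fun u : ℝ => Real.exp (-(c * u)) + Real.exp (-(c * (1 - u))))
        (Set.Icc (0:ℝ) 1) := hint1.add hint2
    have hintc : IntegrableOn (fun _ : ℝ => Real.exp (-Real.exp (t / 2))) (Set.Icc (0:ℝ) 1) := by
      apply (integrableOn_const_iff).mpr (Or.inr ?_)
      rw [Real.volume_Icc]; norm_num
    rw [MeasureTheory.integral_add hint12 hintc,
      MeasureTheory.integral_add hint1 hint2, MeasureTheory.setIntegral_const]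
    simp [Real.volume_Icc]
  rw [hsplit]
  -- numeric estimates
  have hI1 := qs_intexp hcpos
  have hI2 := qs_intexp' hcpos
  have hS : (∫ u in Set.Icc (0:ℝ) 1, Real.exp (-(c * u)))
      + (∫ u in Set.Icc (0:ℝ) 1, Real.exp (-(c * (1 - u))))
      + Real.exp (-Real.exp (t / 2))
      ≤ 2 / c + Real.exp (-Real.exp (t / 2)) := by
    have h1 : (1:ℝ)/c + 1/c = 2/c := by ring
    linarith
  have hstep : Real.exp (Real.exp t + 1) *
      ((∫ u in Set.Icc (0:ℝ) 1, Real.exp (-(c * u)))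
        + (∫ u in Set.Icc (0:ℝ) 1, Real.exp (-(c * (1 - u))))
        + Real.exp (-Real.exp (t / 2)))
      ≤ Real.exp (Real.exp t + 1) * (2 / c + Real.exp (-Real.exp (t / 2))) :=
    mul_le_mul_of_nonneg_left hS (Real.exp_pos _).le
  refine hstep.trans ?_
  -- final numeric inequality
  have hsplit2 : Real.exp (Real.exp t + 1) = Real.exp (Real.exp t - t) * Real.exp (t + 1) := by
    rw [← Real.exp_add]; ring_nf
  rw [hsplit2, mul_assoc, mul_comm ((1:ℝ)/2) (Real.exp (Real.exp t - t))]
  refine mul_le_mul_of_nonneg_left ?_ (Real.exp_pos _).le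
  -- show exp (t+1) * (2/c + exp (-exp (t/2))) ≤ 1/2
  have hA : Real.exp (t + 1) * (2 / c) = 4 * Real.exp 2 / t := by
    rw [hc_def]
    have hx : Real.exp (t + 1) = Real.exp (t - 1) * Real.exp 2 := by
      rw [← Real.exp_add]; ring_nf
    rw [hx]; field_simp
    ring
  have hB : Real.exp (t + 1) * Real.exp (-Real.exp (t / 2)) ≤ Real.exp (-2 : ℝ) := by
    rw [← Real.exp_add]
    apply Real.exp_le_exp.mpr
    -- t + 1 - exp (t/2) ≤ -2  ⟸  exp (t/2) ≥ t + 3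
    have h4 : t / 4 + 1 ≤ Real.exp (t / 4) := Real.add_one_le_exp _
    have hq : Real.exp (t / 2) = Real.exp (t / 4) * Real.exp (t / 4) := by
      rw [← Real.exp_add]; ring_nf
    nlinarith [Real.exp_pos (t / 4)]
  have he2 : Real.exp 2 < 7.39 := by
    have h1 := Real.exp_one_lt_d9
    have : Real.exp 2 = Real.exp 1 * Real.exp 1 := by
      rw [← Real.exp_add]; norm_num
    rw [this]; nlinarith [Real.exp_pos 1]
  have hem2 : Real.exp (-2:ℝ) < 0.14 := by
    have h1 := Real.exp_one_gt_d9
    have h2 : Real.exp (-2:ℝ) = 1 / (Real.exp 1 * Real.exp 1) := by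
      rw [eq_div_iff (by positivity), ← Real.exp_add, ← Real.exp_add]; norm_num
    rw [h2, div_lt_iff₀ (by positivity)]
    nlinarith
  have hApart : 4 * Real.exp 2 / t ≤ 4 * 7.39 / 240 := by
    apply div_le_div₀ (by norm_num) (by nlinarith) (by norm_num) ht
  calc Real.exp (t + 1) * (2 / c + Real.exp (-Real.exp (t / 2)))
      = Real.exp (t + 1) * (2 / c) + Real.exp (t + 1) * Real.exp (-Real.exp (t / 2)) := by ring
    _ ≤ 4 * 7.39 / 240 + 0.14 := by rw [hA]; linarith
    _ ≤ 1 / 2 := by norm_num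


/-- Sharper right-tail upper bound (equation (ql)): there is `C > 0`
such that for all `x ≥ 2`, `P(Z ≥ x) ≤ exp(-x·ln x + x + C·ln x)`. -/
theorem quicksort_right_tail_upper_bound_sharp
    {Ω : Type*} [MeasureSpace Ω] [IsProbabilityMeasure (ℙ : Measure Ω)]
    (Z Z' Z'' U : Ω → ℝ) (g : ℝ → ℝ)
    (hg : ∀ u : ℝ, g u = 2 * u * Real.log u + 2 * (1 - u) * Real.log (1 - u) + 1)
    (hZm : Measurable Z) (hZ'm : Measurable Z') (hZ''m : Measurable Z'')
    (hUm : Measurable U)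
    (hZ' : IdentDistrib Z' Z ℙ ℙ) (hZ'' : IdentDistrib Z'' Z ℙ ℙ)
    (hU : Measure.map U ℙ = volume.restrict (Set.Icc (0 : ℝ) 1))
    (hindep : iIndepFun ![U, Z', Z''] ℙ)
    (hrec : IdentDistrib Z (fun ω => U ω * Z' ω + (1 - U ω) * Z'' ω + g (U ω)) ℙ ℙ)
    (hmean : ∫ ω, Z ω ∂ℙ = 0)
    (hmgf : ∀ t : ℝ, Integrable (fun ω => Real.exp (t * Z ω)) ℙ) :
    ∃ C > (0 : ℝ), ∀ x ≥ (2 : ℝ),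
      (ℙ {ω | x ≤ Z ω}).toReal
        ≤ Real.exp (-x * Real.log x + x + C * Real.log x) := by
  have hgm : Measurable g := by
    have hge : g = fun u => 2 * u * Real.log u + 2 * (1 - u) * Real.log (1 - u) + 1 :=
      funext hg
    rw [hge]
    exact (((measurable_const.mul measurable_id).mul Real.measurable_log).add
      ((measurable_const.mul (measurable_const.sub measurable_id)).mul
        (Real.measurable_log.comp (measurable_const.sub measurable_id)))).add measurable_const
  set ψ : ℝ → ℝ := mgf Z ℙ with hψdef
  have hψ_eq : ∀ s : ℝ, ψ s = ∫ ω, Real.exp (s * Z ω) ∂ℙ := fun s => rfl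
  set μ : Measure ℝ := Measure.map Z ℙ with hμdef
  have hμprob : IsProbabilityMeasure μ := Measure.isProbabilityMeasure_map hZm.aemeasurable
  have hμint : ∀ s : ℝ, Integrable (fun z => Real.exp (s * z)) μ := by
    intro s
    rw [hμdef, integrable_map_measure
      (by fun_prop : Measurable fun z : ℝ => Real.exp (s * z)).aestronglyMeasurable
      hZm.aemeasurable]
    exact hmgf s
  have hψμ : ∀ s : ℝ, ψ s = ∫ z, Real.exp (s * z) ∂μ := by
    intro s
    rw [hψ_eq, hμdef, integral_map hZm.aemeasurable
      (by fun_prop : Measurable fun z : ℝ => Real.exp (s * z)).aestronglyMeasurable]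
  -- Functional equation
  have hFE : ∀ t : ℝ, 0 ≤ t →
      ψ t = ∫ u in Set.Icc (0:ℝ) 1,
        Real.exp (t * g u) * ψ (t * u) * ψ (t * (1 - u)) := by
    intro t ht
    have hm : Measurable fun x : ℝ => Real.exp (t * x) := by fun_prop
    have h1 : ψ t = ∫ ω, Real.exp (t * (U ω * Z' ω + (1 - U ω) * Z'' ω + g (U ω))) ∂ℙ := by
      rw [hψ_eq]
      exact (hrec.comp hm).integral_eq
    have hmeasf : ∀ i, Measurable (![U, Z', Z''] i) := by
      intro i; fin_cases i <;> simpa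
    have hpair : IndepFun Z' Z'' ℙ := by
      have h := hindep.indepFun (show (1:Fin 3) ≠ 2 by decide)
      simpa using h
    have h12 : Measure.map (fun ω => (Z' ω, Z'' ω)) ℙ = μ.prod μ := by
      rw [(indepFun_iff_map_prod_eq_prod_map_map hZ'm.aemeasurable hZ''m.aemeasurable).mp hpair,
        hZ'.map_eq, hZ''.map_eq]
    have hU0 : IndepFun U (fun ω => (Z' ω, Z'' ω)) ℙ := by
      have h := (hindep.indepFun_prodMk hmeasf 1 2 0 (by decide) (by decide)).symm
      simpa using h
    have hVmap : Measure.map (fun ω => (U ω, (Z' ω, Z'' ω))) ℙ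
        = (volume.restrict (Set.Icc (0:ℝ) 1)).prod (μ.prod μ) := by
      rw [(indepFun_iff_map_prod_eq_prod_map_map hUm.aemeasurable
        (hZ'm.prodMk hZ''m).aemeasurable).mp hU0, h12, hU]
    have hφm : Measurable (fun p : ℝ × (ℝ × ℝ) =>
        Real.exp (t * (p.1 * p.2.1 + (1 - p.1) * p.2.2 + g p.1))) := by fun_prop
    have h2 : ∫ ω, Real.exp (t * (U ω * Z' ω + (1 - U ω) * Z'' ω + g (U ω))) ∂ℙ
        = ∫ p : ℝ × (ℝ × ℝ), Real.exp (t * (p.1 * p.2.1 + (1 - p.1) * p.2.2 + g p.1))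
            ∂((volume.restrict (Set.Icc (0:ℝ) 1)).prod (μ.prod μ)) := by
      rw [← hVmap, integral_map (hUm.prodMk (hZ'm.prodMk hZ''m)).aemeasurable
        hφm.aestronglyMeasurable]
    -- integrability on the product
    have hbound_int : Integrable (fun p : ℝ × (ℝ × ℝ) =>
        Real.exp t * ((1 + Real.exp (t * p.2.1)) * (1 + Real.exp (t * p.2.2))))
        ((volume.restrict (Set.Icc (0:ℝ) 1)).prod (μ.prod μ)) := by
      have hz1 : Integrable (fun z : ℝ => 1 + Real.exp (t * z)) μ :=
        (integrable_const 1).add (hμint t)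
      have hq : Integrable (fun q : ℝ × ℝ => (1 + Real.exp (t * q.1)) * (1 + Real.exp (t * q.2)))
          (μ.prod μ) := hz1.mul_prod hz1
      have hcu : Integrable (fun _ : ℝ => Real.exp t) (volume.restrict (Set.Icc (0:ℝ) 1)) := by
        apply integrable_const
      exact hcu.mul_prod hq
    have hae1 : ∀ᵐ p : ℝ × (ℝ × ℝ)
        ∂((volume.restrict (Set.Icc (0:ℝ) 1)).prod (μ.prod μ)), p.1 ∈ Set.Icc (0:ℝ) 1 := by
      have h0 : ((volume.restrict (Set.Icc (0:ℝ) 1)).prod (μ.prod μ))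
          {p : ℝ × (ℝ × ℝ) | p.1 ∉ Set.Icc (0:ℝ) 1} = 0 := by
        have hset : {p : ℝ × (ℝ × ℝ) | p.1 ∉ Set.Icc (0:ℝ) 1}
            = (Set.Icc (0:ℝ) 1)ᶜ ×ˢ (Set.univ : Set (ℝ × ℝ)) := by
          ext p; simp [Set.mem_prod]
        rw [hset, Measure.prod_prod, Measure.restrict_apply measurableSet_Icc.compl]
        simp
      rw [MeasureTheory.ae_iff]
      exact h0
    have hfint : Integrable (fun p : ℝ × (ℝ × ℝ) =>
        Real.exp (t * (p.1 * p.2.1 + (1 - p.1) * p.2.2 + g p.1)))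
        ((volume.restrict (Set.Icc (0:ℝ) 1)).prod (μ.prod μ)) := by
      refine hbound_int.mono' hφm.aestronglyMeasurable ?_
      filter_upwards [hae1] with p hp
      obtain ⟨hp0, hp1⟩ := hp
      rw [Real.norm_eq_abs, Real.abs_exp]
      have hexpand : Real.exp (t * (p.1 * p.2.1 + (1 - p.1) * p.2.2 + g p.1))
          = Real.exp (t * g p.1) * (Real.exp (t * p.1 * p.2.1) * Real.exp (t * (1 - p.1) * p.2.2)) := by
        rw [← Real.exp_add, ← Real.exp_add]; ring_nf
      rw [hexpand]
      have b1 : Real.exp (t * g p.1) ≤ Real.exp t :=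
        Real.exp_le_exp.mpr (by nlinarith [qs_g_le_one hg hp0 hp1])
      have b2 : Real.exp (t * p.1 * p.2.1) ≤ 1 + Real.exp (t * p.2.1) :=
        qs_exp_interp ht hp0 hp1
      have b3 : Real.exp (t * (1 - p.1) * p.2.2) ≤ 1 + Real.exp (t * p.2.2) :=
        qs_exp_interp ht (by linarith) (by linarith)
      have hb2nn : (0:ℝ) ≤ 1 + Real.exp (t * p.2.1) := by positivity
      refine mul_le_mul b1 ?_ (by positivity) (Real.exp_pos t).le
      exact mul_le_mul b2 b3 (Real.exp_pos _).le hb2nn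
    -- Fubini
    have h3 : ∫ p : ℝ × (ℝ × ℝ), Real.exp (t * (p.1 * p.2.1 + (1 - p.1) * p.2.2 + g p.1))
          ∂((volume.restrict (Set.Icc (0:ℝ) 1)).prod (μ.prod μ))
        = ∫ u in Set.Icc (0:ℝ) 1, ∫ q : ℝ × ℝ,
            Real.exp (t * (u * q.1 + (1 - u) * q.2 + g u)) ∂(μ.prod μ) :=
      MeasureTheory.integral_prod _ hfint
    have h4 : ∀ u : ℝ, ∫ q : ℝ × ℝ, Real.exp (t * (u * q.1 + (1 - u) * q.2 + g u)) ∂(μ.prod μ)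
        = Real.exp (t * g u) * ψ (t * u) * ψ (t * (1 - u)) := by
      intro u
      have hfun : (fun q : ℝ × ℝ => Real.exp (t * (u * q.1 + (1 - u) * q.2 + g u)))
          = fun q : ℝ × ℝ => Real.exp (t * g u) *
              ((fun z => Real.exp (t * u * z)) q.1 * (fun w => Real.exp (t * (1 - u) * w)) q.2) := by
        funext q
        rw [← Real.exp_add, ← Real.exp_add]; ring_nf
      have hpm := MeasureTheory.integral_prod_mul (μ := μ) (ν := μ)
        (fun z => Real.exp (t * u * z)) (fun w => Real.exp (t * (1 - u) * w))
      rw [hfun, MeasureTheory.integral_const_mul, hpm, hψμ (t * u), hψμ (t * (1 - u))]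
      ring
    rw [h1, h2, h3]
    exact MeasureTheory.setIntegral_congr_fun measurableSet_Icc (fun u _ => h4 u)

  -- continuity of the mgf
  have hψcont : Continuous ψ := by
    rw [continuous_iff_continuousAt]
    intro t₀
    have h : ContinuousAt (fun t : ℝ => ∫ ω, Real.exp (t * Z ω) ∂ℙ) t₀ := by
      apply MeasureTheory.continuousAt_of_dominated
        (bound := fun ω => Real.exp ((t₀ + 1) * Z ω) + Real.exp ((t₀ - 1) * Z ω))
      · exact Filter.Eventually.of_forall fun t =>
          ((by fun_prop : Measurable fun ω => Real.exp (t * Z ω))).aestronglyMeasurable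
      · filter_upwards [Metric.ball_mem_nhds t₀ one_pos] with t htb
        refine Filter.Eventually.of_forall fun ω => ?_
        have hd : |t - t₀| < 1 := by
          have := htb
          rwa [Metric.mem_ball, Real.dist_eq] at this
        rw [Real.norm_eq_abs, Real.abs_exp]
        have hd1 := abs_lt.mp hd
        rcases le_total (Z ω) 0 with hz | hz
        · have h1 : t * Z ω ≤ (t₀ - 1) * Z ω := by nlinarith
          have := Real.exp_le_exp.mpr h1
          linarith [Real.exp_pos ((t₀ + 1) * Z ω)]
        · have h1 : t * Z ω ≤ (t₀ + 1) * Z ω := by nlinarith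
          have := Real.exp_le_exp.mpr h1
          linarith [Real.exp_pos ((t₀ - 1) * Z ω)]
      · exact (hmgf (t₀ + 1)).add (hmgf (t₀ - 1))
      · refine Filter.Eventually.of_forall fun ω => ?_
        exact (Real.continuous_exp.comp (continuous_id.mul continuous_const)).continuousAt
    exact h
  have hψnonneg : ∀ s : ℝ, 0 ≤ ψ s := fun s => mgf_nonneg
  -- Z is integrable, and ψ 240 ≥ 1
  have hZint : Integrable Z ℙ := by
    refine ((hmgf 1).add (hmgf (-1))).mono' hZm.aestronglyMeasurable ?_
    refine Filter.Eventually.of_forall fun ω => ?_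
    rw [Real.norm_eq_abs]
    simp only [Pi.add_apply]
    rcases abs_cases (Z ω) with ⟨h1, _⟩ | ⟨h1, _⟩ <;> rw [h1] <;>
      nlinarith [Real.add_one_le_exp (1 * Z ω), Real.add_one_le_exp ((-1) * Z ω),
        Real.exp_pos (1 * Z ω), Real.exp_pos ((-1) * Z ω)]
  have hψ240 : (1:ℝ) ≤ ψ 240 := by
    have hint : Integrable (fun ω => 1 + 240 * Z ω) ℙ :=
      (integrable_const 1).add (hZint.const_mul 240)
    have hle := integral_mono hint (hmgf 240)
      (fun ω => by nlinarith [Real.add_one_le_exp (240 * Z ω)])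
    rw [integral_add (integrable_const 1) (hZint.const_mul 240), integral_const,
      MeasureTheory.integral_const_mul, hmean] at hle
    rw [hψ_eq 240]
    simpa using hle
  -- the comparison function
  set C₀ : ℝ := max 1 (ψ 240) with hC₀def
  have hC₀1 : (1:ℝ) ≤ C₀ := le_max_left _ _
  have hC₀ψ : ψ 240 ≤ C₀ := le_max_right _ _
  set F : ℝ → ℝ := fun s => Real.exp (Real.exp s + C₀ * s) with hFdef
  have hFcont : Continuous F := by
    apply Real.continuous_exp.comp
    exact Real.continuous_exp.add (continuous_const.mul continuous_id)
  -- base case on [0, 240]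
  have hbase : ∀ s : ℝ, 0 ≤ s → s ≤ 240 → ψ s ≤ F s := by
    intro s hs0 hs240
    have hθ0 : 0 ≤ s / 240 := by positivity
    have hθ1 : s / 240 ≤ 1 := by linarith
    have hpt : ∀ ω, Real.exp (s * Z ω) ≤ (1 - s / 240) + s / 240 * Real.exp (240 * Z ω) := by
      intro ω
      have hcvx := convexOn_exp.2 (Set.mem_univ (0:ℝ)) (Set.mem_univ (240 * Z ω))
        (by linarith : (0:ℝ) ≤ 1 - s / 240) hθ0 (by ring)
      have harg : (1 - s / 240) • (0:ℝ) + (s / 240) • (240 * Z ω) = s * Z ω := by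
        simp only [smul_eq_mul]; field_simp; ring
      rw [harg] at hcvx
      simpa [smul_eq_mul] using hcvx
    have hint : Integrable (fun ω => (1 - s / 240) + s / 240 * Real.exp (240 * Z ω)) ℙ :=
      (integrable_const _).add ((hmgf 240).const_mul _)
    have hle := integral_mono (hmgf s) hint hpt
    rw [integral_add (integrable_const _) ((hmgf 240).const_mul _), integral_const,
      MeasureTheory.integral_const_mul] at hle
    simp only [measure_univ, probReal_univ, ENNReal.toReal_one, smul_eq_mul, one_mul] at hle
    have hψs : ψ s ≤ (1 - s / 240) + s / 240 * ψ 240 := by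
      rw [hψ_eq s, hψ_eq 240]; exact hle
    have h2 : (1 - s / 240) + s / 240 * ψ 240 = 1 + s / 240 * (ψ 240 - 1) := by ring
    have h3 : 1 + s / 240 * (ψ 240 - 1) ≤ Real.exp (s / 240 * (ψ 240 - 1)) := by
      linarith [Real.add_one_le_exp (s / 240 * (ψ 240 - 1))]
    have h4 : s / 240 * (ψ 240 - 1) ≤ C₀ * s := by
      have hψ1 : 0 ≤ ψ 240 - 1 := by linarith
      have : s / 240 * (ψ 240 - 1) ≤ s * (ψ 240 - 1) := by
        apply mul_le_mul_of_nonneg_right _ hψ1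
        linarith
      have h5 : s * (ψ 240 - 1) ≤ s * C₀ := by
        apply mul_le_mul_of_nonneg_left _ hs0
        linarith
      calc s / 240 * (ψ 240 - 1) ≤ s * (ψ 240 - 1) := this
        _ ≤ s * C₀ := h5
        _ = C₀ * s := mul_comm _ _
    have h6 : Real.exp (s / 240 * (ψ 240 - 1)) ≤ Real.exp (Real.exp s + C₀ * s) := by
      apply Real.exp_le_exp.mpr
      have := Real.exp_pos s
      linarith
    calc ψ s ≤ 1 + s / 240 * (ψ 240 - 1) := by rw [← h2]; exact hψs
      _ ≤ Real.exp (s / 240 * (ψ 240 - 1)) := h3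
      _ ≤ F s := h6
  -- bootstrap: ψ ≤ F on [0, ∞)
  have hmain : ∀ s : ℝ, 0 ≤ s → ψ s ≤ F s := by
    by_contra hcon
    push_neg at hcon
    obtain ⟨s₀, hs₀, hlt⟩ := hcon
    set A : Set ℝ := {s | 0 ≤ s ∧ F s < ψ s} with hAdef
    have hA_ne : A.Nonempty := ⟨s₀, hs₀, hlt⟩
    have hA_bdd : BddBelow A := ⟨0, fun s hs => hs.1⟩
    set c : ℝ := sInf A with hcdef
    have hc240 : 240 ≤ c := by
      refine le_csInf hA_ne fun s hs => ?_
      by_contra hlt'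
      push_neg at hlt'
      exact absurd hs.2 (not_lt.mpr (hbase s hs.1 hlt'.le))
    have hc0 : 0 ≤ c := by linarith
    have hcmem : F c ≤ ψ c := by
      have h1 : c ∈ closure A := csInf_mem_closure hA_ne hA_bdd
      have h2 : IsClosed {s : ℝ | F s ≤ ψ s} := isClosed_le hFcont hψcont
      have h3 : A ⊆ {s : ℝ | F s ≤ ψ s} := fun s hs => hs.2.le
      exact h2.closure_subset ((closure_mono h3) h1)
    have hlower : ∀ s : ℝ, 0 ≤ s → s < c → ψ s ≤ F s := by
      intro s h0 hsc
      by_contra h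
      push_neg at h
      exact absurd (csInf_le hA_bdd ⟨h0, h⟩) (not_le.mpr hsc)
    have heq := hFE c hc0
    have hcpos : 0 < c := by linarith
    have hdomc : Continuous fun u : ℝ => Real.exp c * (F (c * u) * F (c * (1 - u))) := by
      apply continuous_const.mul
      apply Continuous.mul
      · exact hFcont.comp (continuous_const.mul continuous_id)
      · exact hFcont.comp (continuous_const.mul (continuous_const.sub continuous_id))
    have hmono2 : ψ c ≤ ∫ u in Set.Icc (0:ℝ) 1, Real.exp c * (F (c * u) * F (c * (1 - u))) := by
      rw [heq]
      refine integral_mono_of_nonneg ?_ hdomc.integrableOn_Icc ?_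
      · refine Filter.Eventually.of_forall fun u => ?_
        exact mul_nonneg (mul_nonneg (Real.exp_pos _).le (hψnonneg _)) (hψnonneg _)
      · have h1 : ∀ᵐ u : ℝ ∂(volume.restrict (Set.Icc (0:ℝ) 1)), u ∈ Set.Icc (0:ℝ) 1 :=
          ae_restrict_mem measurableSet_Icc
        have h2 : ∀ᵐ u : ℝ ∂(volume.restrict (Set.Icc (0:ℝ) 1)), u ≠ 0 := by
          refine (MeasureTheory.ae_iff).mpr ?_
          have : (volume.restrict (Set.Icc (0:ℝ) 1)) {u : ℝ | ¬u ≠ 0} ≤ volume {u : ℝ | ¬u ≠ 0} :=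
            Measure.restrict_le_self _
          have h0 : volume {u : ℝ | ¬u ≠ 0} = 0 := by
            have : {u : ℝ | ¬u ≠ 0} = {0} := by ext u; simp
            rw [this]; exact Real.volume_singleton
          exact le_antisymm (h0 ▸ this) (zero_le)
        have h3 : ∀ᵐ u : ℝ ∂(volume.restrict (Set.Icc (0:ℝ) 1)), u ≠ 1 := by
          refine (MeasureTheory.ae_iff).mpr ?_
          have : (volume.restrict (Set.Icc (0:ℝ) 1)) {u : ℝ | ¬u ≠ 1} ≤ volume {u : ℝ | ¬u ≠ 1} :=
            Measure.restrict_le_self _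
          have h0 : volume {u : ℝ | ¬u ≠ 1} = 0 := by
            have : {u : ℝ | ¬u ≠ 1} = {1} := by ext u; simp
            rw [this]; exact Real.volume_singleton
          exact le_antisymm (h0 ▸ this) (zero_le)
        filter_upwards [h1, h2, h3] with u hu hu0 hu1
        have hu0' : 0 < u := lt_of_le_of_ne hu.1 (Ne.symm hu0)
        have hu1' : u < 1 := lt_of_le_of_ne hu.2 hu1
        have l1 : ψ (c * u) ≤ F (c * u) := hlower _ (by positivity) (by nlinarith)
        have l2 : ψ (c * (1 - u)) ≤ F (c * (1 - u)) := hlower _ (by nlinarith) (by nlinarith)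
        have l0 : Real.exp (c * g u) ≤ Real.exp c :=
          Real.exp_le_exp.mpr (by nlinarith [qs_g_le_one hg hu.1 hu.2])
        have hF1 : 0 ≤ F (c * u) := (Real.exp_pos _).le
        calc Real.exp (c * g u) * ψ (c * u) * ψ (c * (1 - u))
            ≤ Real.exp c * F (c * u) * F (c * (1 - u)) := by
              apply mul_le_mul _ l2 (hψnonneg _) _
              · exact mul_le_mul l0 l1 (hψnonneg _) (Real.exp_pos _).le
              · exact mul_nonneg (Real.exp_pos _).le hF1
          _ = Real.exp c * (F (c * u) * F (c * (1 - u))) := by ring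
    have hnum : ∫ u in Set.Icc (0:ℝ) 1, Real.exp c * (F (c * u) * F (c * (1 - u)))
        ≤ (1 / 2) * F c := by
      have hpt : ∀ u : ℝ, Real.exp c * (F (c * u) * F (c * (1 - u)))
          = Real.exp ((1 + C₀) * c) * Real.exp (Real.exp (c * u) + Real.exp (c * (1 - u))) := by
        intro u
        rw [hFdef]
        simp only
        rw [← Real.exp_add, ← Real.exp_add, ← Real.exp_add]
        ring_nf
      simp only [hpt]
      rw [MeasureTheory.integral_const_mul]
      have hJ := qs_J hc240
      calc Real.exp ((1 + C₀) * c) *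
          ∫ u in Set.Icc (0:ℝ) 1, Real.exp (Real.exp (c * u) + Real.exp (c * (1 - u)))
          ≤ Real.exp ((1 + C₀) * c) * ((1 / 2) * Real.exp (Real.exp c - c)) :=
            mul_le_mul_of_nonneg_left hJ (Real.exp_pos _).le
        _ = (1 / 2) * F c := by
            have hFc : Real.exp ((1 + C₀) * c) * Real.exp (Real.exp c - c) = F c := by
              simp only [hFdef]
              rw [← Real.exp_add]
              ring_nf
            rw [← hFc]
            ring
    have hFpos : 0 < F c := Real.exp_pos _
    have := hmono2.trans hnum
    linarith
  -- conclusion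
  refine ⟨C₀ + Real.exp 240, by positivity, ?_⟩
  intro x hx
  have hx0 : (0:ℝ) < x := by linarith
  have hlogx : 0 < Real.log x := Real.log_pos (by linarith)
  rcases le_total x (Real.exp 240) with hsmall | hbig
  · have h1 : (ℙ {ω | x ≤ Z ω}).toReal ≤ 1 := by
      have h2 : (ℙ {ω | x ≤ Z ω}) ≤ 1 := prob_le_one
      calc (ℙ {ω | x ≤ Z ω}).toReal ≤ (1 : ENNReal).toReal :=
            ENNReal.toReal_mono ENNReal.one_ne_top h2
        _ = 1 := by simp
    refine h1.trans ?_
    rw [show (1:ℝ) = Real.exp 0 from Real.exp_zero.symm]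
    apply Real.exp_le_exp.mpr
    have hxC : x ≤ C₀ + Real.exp 240 := by linarith
    nlinarith
  · set t : ℝ := Real.log x with htdef
    have ht240 : (240:ℝ) ≤ t := by
      rw [htdef, Real.le_log_iff_exp_le hx0]
      exact hbig
    have hcher := measure_ge_le_exp_mul_mgf (X := Z) (μ := ℙ) (t := t) x
      (by linarith) (hmgf t)
    refine hcher.trans ?_
    have hψb : ψ t ≤ F t := hmain t (by linarith)
    have hexpt : Real.exp t = x := Real.exp_log hx0
    calc Real.exp (-t * x) * mgf Z ℙ t
        ≤ Real.exp (-t * x) * F t := mul_le_mul_of_nonneg_left hψb (Real.exp_pos _).le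
      _ = Real.exp (-t * x + (Real.exp t + C₀ * t)) := by
          simp only [hFdef]
          rw [← Real.exp_add]
      _ = Real.exp (-x * Real.log x + x + C₀ * Real.log x) := by
          rw [hexpt, htdef]; ring_nf
      _ ≤ Real.exp (-x * Real.log x + x + (C₀ + Real.exp 240) * Real.log x) := by
          apply Real.exp_le_exp.mpr
          nlinarith [Real.exp_pos (240:ℝ)]
end

section
/- With κ := 2 − 1/ln 2, there exists a constant a ≥ 0 such that for all t > 0, ψ(−t) < exp(κ·t·ln t + a·t + 1), where ψ(t) := E[exp(t·Z)]. (Lemma on the moment generating function on the negative axis.) -/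
open Real

lemma aux_xlog_ge (x : ℝ) (hx : 0 < x) : x - 1 ≤ x * Real.log x := by
  have h := Real.log_le_sub_one_of_pos (x := x⁻¹) (by positivity)
  rw [Real.log_inv] at h
  have hxx : x * x⁻¹ = 1 := mul_inv_cancel₀ hx.ne'
  nlinarith [mul_le_mul_of_nonneg_left h hx.le]

lemma aux_xlog_gt (x : ℝ) (hx : 0 < x) (h1 : x ≠ 1) : x - 1 < x * Real.log x := by
  have h := Real.log_lt_sub_one_of_pos (x := x⁻¹) (by positivity) (by
    simpa [inv_eq_one] using h1)
  rw [Real.log_inv] at h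
  have hxx : x * x⁻¹ = 1 := mul_inv_cancel₀ hx.ne'
  nlinarith [mul_lt_mul_of_pos_left h hx]

lemma aux_S_ge (u : ℝ) (hu : u ∈ Set.Icc (0:ℝ) 1) :
    -Real.log 2 ≤ u * Real.log u + (1-u) * Real.log (1-u) := by
  obtain ⟨h0, h1⟩ := hu
  rcases eq_or_lt_of_le h0 with rfl | h0'
  · simp; exact (Real.log_pos one_lt_two).le
  rcases eq_or_lt_of_le h1 with rfl | h1'
  · simp; exact (Real.log_pos one_lt_two).le
  have hu1 : 0 < 1 - u := by linarith
  have e1 : Real.log (2*u) = Real.log 2 + Real.log u := Real.log_mul two_ne_zero h0'.ne'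
  have e2 : Real.log (2*(1-u)) = Real.log 2 + Real.log (1-u) := Real.log_mul two_ne_zero hu1.ne'
  have k1 := aux_xlog_ge (2*u) (by linarith)
  have k2 := aux_xlog_ge (2*(1-u)) (by linarith)
  rw [e1] at k1; rw [e2] at k2
  nlinarith

lemma aux_S_gt (u : ℝ) (hu : u ∈ Set.Icc (0:ℝ) 1) (hne : u ≠ 1/2) :
    -Real.log 2 < u * Real.log u + (1-u) * Real.log (1-u) := by
  obtain ⟨h0, h1⟩ := hu
  rcases eq_or_lt_of_le h0 with rfl | h0'
  · simpa using Real.log_pos one_lt_two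
  rcases eq_or_lt_of_le h1 with rfl | h1'
  · simpa using Real.log_pos one_lt_two
  have hu1 : 0 < 1 - u := by linarith
  have e1 : Real.log (2*u) = Real.log 2 + Real.log u := Real.log_mul two_ne_zero h0'.ne'
  have e2 : Real.log (2*(1-u)) = Real.log 2 + Real.log (1-u) := Real.log_mul two_ne_zero hu1.ne'
  have k1 := aux_xlog_gt (2*u) (by linarith) (by intro h; apply hne; linarith)
  have k2 := aux_xlog_ge (2*(1-u)) (by linarith)
  rw [e1] at k1; rw [e2] at k2
  nlinarith

lemma aux_tlog_ge (t : ℝ) (ht : 0 < t) : -(1/2 : ℝ) ≤ t * Real.log t := by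
  rcases le_or_gt 1 t with h | h
  · have : 0 ≤ Real.log t := Real.log_nonneg h
    nlinarith
  · -- from log(1/(e t)) ≤ 1/(e t) - 1
    have he : (0:ℝ) < Real.exp 1 := Real.exp_pos 1
    have h2 := Real.log_le_sub_one_of_pos (x := (Real.exp 1 * t)⁻¹) (by positivity)
    rw [Real.log_inv, Real.log_mul (by positivity) ht.ne', Real.log_exp] at h2
    -- -(1 + log t) ≤ (e t)⁻¹ - 1, so -log t ≤ (e t)⁻¹, so -t log t ≤ 1/e ≤ 1/2
    have h3 : -Real.log t ≤ (Real.exp 1 * t)⁻¹ := by linarith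
    have h4 : t * (-Real.log t) ≤ t * (Real.exp 1 * t)⁻¹ := by
      exact mul_le_mul_of_nonneg_left h3 ht.le
    have h5 : t * (Real.exp 1 * t)⁻¹ = (Real.exp 1)⁻¹ := by
      field_simp
    have h6 : (Real.exp 1)⁻¹ ≤ 1/2 := by
      rw [inv_le_comm₀ he (by norm_num)]
      nlinarith [Real.exp_one_gt_d9]
    nlinarith
open Real MeasureTheory Filter

noncomputable def auxS (u : ℝ) : ℝ := u * Real.log u + (1-u) * Real.log (1-u)
noncomputable def auxE (u : ℝ) : ℝ := -(auxS u / Real.log 2) - 1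

lemma auxS_continuous : Continuous auxS := by
  unfold auxS
  exact (Real.continuous_mul_log).add
    ((Real.continuous_mul_log).comp (continuous_const.sub continuous_id))

lemma auxE_continuous : Continuous auxE := by
  unfold auxE
  exact ((auxS_continuous.div_const _).neg).sub continuous_const

lemma auxE_nonpos {u : ℝ} (hu : u ∈ Set.Icc (0:ℝ) 1) : auxE u ≤ 0 := by
  have hl : (0:ℝ) < Real.log 2 := Real.log_pos one_lt_two
  have hS : -Real.log 2 ≤ auxS u := aux_S_ge u hu
  have h2 : (-1:ℝ) ≤ auxS u / Real.log 2 := by rw [le_div_iff₀ hl]; linarith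
  unfold auxE; linarith

lemma auxE_neg {u : ℝ} (hu : u ∈ Set.Icc (0:ℝ) 1) (hne : u ≠ 1/2) : auxE u < 0 := by
  have hl : (0:ℝ) < Real.log 2 := Real.log_pos one_lt_two
  have hS : -Real.log 2 < auxS u := aux_S_gt u hu hne
  have h2 : (-1:ℝ) < auxS u / Real.log 2 := by rw [lt_div_iff₀ hl]; linarith
  unfold auxE; linarith

lemma auxJ : ∃ t₁ : ℝ, 1 ≤ t₁ ∧ ∀ t, t₁ ≤ t →
    (∫ u in Set.Icc (0:ℝ) 1, Real.exp (t * auxE u)) ≤ Real.exp (-2) := by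
  have hne : ∀ᵐ u ∂(volume.restrict (Set.Icc (0:ℝ) 1)), u ≠ 1/2 := by
    refine (ae_iff.2 ?_)
    have : {a : ℝ | ¬ a ≠ 1/2} = {(1/2 : ℝ)} := by ext x; simp
    rw [this, Measure.restrict_apply (measurableSet_singleton _)]
    exact measure_mono_null Set.inter_subset_left Real.volume_singleton
  have hmem : ∀ᵐ u ∂(volume.restrict (Set.Icc (0:ℝ) 1)), u ∈ Set.Icc (0:ℝ) 1 :=
    ae_restrict_mem measurableSet_Icc
  have hlim : Tendsto (fun n : ℕ => ∫ u in Set.Icc (0:ℝ) 1, Real.exp ((n:ℝ) * auxE u))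
      atTop (nhds 0) := by
    have hlim0 : Tendsto (fun n : ℕ => ∫ u in Set.Icc (0:ℝ) 1, Real.exp ((n:ℝ) * auxE u))
        atTop (nhds (∫ _u in Set.Icc (0:ℝ) 1, (0:ℝ))) := by
      apply tendsto_integral_of_dominated_convergence (fun _ => (1:ℝ))
      · intro n
        exact ((Real.continuous_exp.comp (continuous_const.mul auxE_continuous)).aestronglyMeasurable)
      · exact (integrableOn_const (by simp [Real.volume_Icc]) (by simp))
      · intro n
        filter_upwards [hmem] with u hu
        rw [Real.norm_eq_abs, abs_of_pos (Real.exp_pos _)]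
        exact Real.exp_le_one_iff.2
          (mul_nonpos_of_nonneg_of_nonpos (Nat.cast_nonneg n) (auxE_nonpos hu))
      · filter_upwards [hmem, hne] with u hu hu2
        have hE : auxE u < 0 := auxE_neg hu hu2
        have hrw : (fun n : ℕ => Real.exp ((n:ℝ) * auxE u)) = fun n => (Real.exp (auxE u))^n := by
          funext n; rw [← Real.exp_nat_mul]
        rw [hrw]
        exact tendsto_pow_atTop_nhds_zero_of_lt_one (Real.exp_pos _).le
          (Real.exp_lt_one_iff.2 hE)
    simpa using hlim0
  have hpos : (0:ℝ) < Real.exp (-2) := Real.exp_pos _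
  obtain ⟨n, hn⟩ := (hlim.eventually (gt_mem_nhds hpos)).exists
  refine ⟨max (n:ℝ) 1, le_max_right _ _, fun t ht => ?_⟩
  have hnt : (n:ℝ) ≤ t := le_trans (le_max_left _ _) ht
  have hint : ∀ s : ℝ, IntegrableOn (fun u => Real.exp (s * auxE u)) (Set.Icc (0:ℝ) 1) volume :=
    fun s => (Real.continuous_exp.comp (continuous_const.mul auxE_continuous)).integrableOn_Icc
  calc (∫ u in Set.Icc (0:ℝ) 1, Real.exp (t * auxE u))
      ≤ ∫ u in Set.Icc (0:ℝ) 1, Real.exp ((n:ℝ) * auxE u) := by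
        refine setIntegral_mono_on (hint t) (hint (n:ℝ)) measurableSet_Icc fun u hu => ?_
        exact Real.exp_le_exp.2 (mul_le_mul_of_nonpos_right hnt (auxE_nonpos hu))
    _ ≤ Real.exp (-2) := hn.le
open Real MeasureTheory ProbabilityTheory Filter

lemma aux_exponent (a t u : ℝ) (ht : 0 < t) (hu0 : 0 < u) (hu1 : u < 1) :
    ((2 - 1/Real.log 2)*(t*u)*Real.log (t*u) + a*(t*u) + 1)
      + ((2 - 1/Real.log 2)*(t*(1-u))*Real.log (t*(1-u)) + a*(t*(1-u)) + 1)
      + (-t) * (2*u*Real.log u + 2*(1-u)*Real.log (1-u) + 1)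
    = (2 - 1/Real.log 2)*t*Real.log t + a*t + 2 + t * auxE u := by
  have h1u : (0:ℝ) < 1 - u := by linarith
  have hl2 : Real.log 2 ≠ 0 := (Real.log_pos one_lt_two).ne'
  rw [Real.log_mul ht.ne' hu0.ne', Real.log_mul ht.ne' h1u.ne']
  unfold auxE auxS
  field_simp
  ring

lemma psi_continuous {Ω : Type*} [MeasureSpace Ω] [IsProbabilityMeasure (ℙ : Measure Ω)]
    (Z : Ω → ℝ) (hZm : Measurable Z)
    (hmgf : ∀ t : ℝ, Integrable (fun ω => Real.exp (t * Z ω)) ℙ) :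
    Continuous (fun t : ℝ => ∫ ω, Real.exp (t * Z ω) ∂ℙ) := by
  rw [continuous_iff_continuousAt]
  intro t₀
  apply continuousAt_of_dominated (bound := fun ω => Real.exp ((t₀+1) * Z ω) + Real.exp ((t₀-1) * Z ω))
  · exact Eventually.of_forall fun t =>
      (Real.measurable_exp.comp (measurable_const.mul hZm)).aestronglyMeasurable
  · filter_upwards [Ioo_mem_nhds (by linarith : t₀ - 1 < t₀) (by linarith : t₀ < t₀ + 1)]
      with t ht
    refine Eventually.of_forall fun ω => ?_
    rw [Real.norm_eq_abs, abs_of_pos (Real.exp_pos _)]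
    rcases le_or_gt 0 (Z ω) with hz | hz
    · have : t * Z ω ≤ (t₀+1) * Z ω := mul_le_mul_of_nonneg_right ht.2.le hz
      have h2 : Real.exp (t * Z ω) ≤ Real.exp ((t₀+1) * Z ω) := Real.exp_le_exp.2 this
      nlinarith [Real.exp_pos ((t₀-1) * Z ω)]
    · have : t * Z ω ≤ (t₀-1) * Z ω := mul_le_mul_of_nonpos_right ht.1.le hz.le
      have h2 : Real.exp (t * Z ω) ≤ Real.exp ((t₀-1) * Z ω) := Real.exp_le_exp.2 this
      nlinarith [Real.exp_pos ((t₀+1) * Z ω)]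
  · exact (hmgf _).add (hmgf _)
  · exact Eventually.of_forall fun ω =>
      (Real.continuous_exp.comp (continuous_id.mul continuous_const)).continuousAt
open Real MeasureTheory ProbabilityTheory Filter

lemma quicksort_recursion {Ω : Type*} [MeasureSpace Ω] [IsProbabilityMeasure (ℙ : Measure Ω)]
    (Z Z' Z'' U : Ω → ℝ) (g : ℝ → ℝ) (hgc : Continuous g)
    (hZm : Measurable Z) (hZ'm : Measurable Z') (hZ''m : Measurable Z'')
    (hUm : Measurable U)
    (hZ' : IdentDistrib Z' Z ℙ ℙ) (hZ'' : IdentDistrib Z'' Z ℙ ℙ)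
    (hU : Measure.map U ℙ = volume.restrict (Set.Icc (0 : ℝ) 1))
    (hindep : iIndepFun (m := fun _ : Fin 3 => Real.measurableSpace) ![U, Z', Z''] ℙ)
    (hrec : IdentDistrib Z (fun ω => U ω * Z' ω + (1 - U ω) * Z'' ω + g (U ω)) ℙ ℙ)
    (hmgf : ∀ t : ℝ, Integrable (fun ω => Real.exp (t * Z ω)) ℙ) (t : ℝ) :
    (∫ ω, Real.exp (t * Z ω) ∂ℙ)
      = ∫ u in Set.Icc (0:ℝ) 1,
          (∫ ω, Real.exp ((t*u) * Z ω) ∂ℙ) * (∫ ω, Real.exp ((t*(1-u)) * Z ω) ∂ℙ)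
            * Real.exp (t * g u) := by
  have hmeas : ∀ i, Measurable (![U, Z', Z''] i) := by
    intro i; fin_cases i <;> simpa
  haveI : IsProbabilityMeasure (Measure.map U ℙ) := Measure.isProbabilityMeasure_map hUm.aemeasurable
  haveI : IsProbabilityMeasure (Measure.map Z' ℙ) := Measure.isProbabilityMeasure_map hZ'm.aemeasurable
  haveI : IsProbabilityMeasure (Measure.map Z'' ℙ) := Measure.isProbabilityMeasure_map hZ''m.aemeasurable
  set W : Ω → ℝ := fun ω => U ω * Z' ω + (1 - U ω) * Z'' ω + g (U ω) with hW
  have hexp : ∀ s : ℝ, Measurable fun x : ℝ => Real.exp (s * x) := fun s =>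
    Real.measurable_exp.comp (measurable_const.mul measurable_id)
  have step1 : (∫ ω, Real.exp (t * Z ω) ∂ℙ) = ∫ ω, Real.exp (t * W ω) ∂ℙ :=
    (hrec.comp (hexp t)).integral_eq
  have hintW : Integrable (fun ω => Real.exp (t * W ω)) ℙ :=
    ((hrec.comp (hexp t)).integrable_iff).1 (hmgf t)
  -- joint law of the triple is a product measure
  have hpair : IndepFun (fun ω => (Z' ω, Z'' ω)) U ℙ := by
    have := hindep.indepFun_prodMk hmeas 1 2 0 (by decide) (by decide)
    simpa using this
  have h12 : IndepFun Z' Z'' ℙ := by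
    have := hindep.indepFun (show (1 : Fin 3) ≠ 2 by decide)
    simpa using this
  have hmapZZ : Measure.map (fun ω => (Z' ω, Z'' ω)) ℙ = (Measure.map Z' ℙ).prod (Measure.map Z'' ℙ) :=
    (indepFun_iff_map_prod_eq_prod_map_map hZ'm.aemeasurable hZ''m.aemeasurable).1 h12
  have hmapTriple : Measure.map (fun ω => (U ω, (Z' ω, Z'' ω))) ℙ
      = (Measure.map U ℙ).prod ((Measure.map Z' ℙ).prod (Measure.map Z'' ℙ)) := by
    rw [(indepFun_iff_map_prod_eq_prod_map_map hUm.aemeasurable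
      (hZ'm.prodMk hZ''m).aemeasurable).1 hpair.symm, hmapZZ]
  set F : ℝ × ℝ × ℝ → ℝ :=
    fun p => Real.exp (t * (p.1 * p.2.1 + (1 - p.1) * p.2.2 + g p.1)) with hF
  have c1 : Continuous fun p : ℝ × ℝ × ℝ => p.1 := continuous_fst
  have c2 : Continuous fun p : ℝ × ℝ × ℝ => p.2.1 := continuous_fst.comp continuous_snd
  have c3 : Continuous fun p : ℝ × ℝ × ℝ => p.2.2 := continuous_snd.comp continuous_snd
  have hFc : Continuous F :=
    Real.continuous_exp.comp (continuous_const.mul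
      (((c1.mul c2).add ((continuous_const.sub c1).mul c3)).add (hgc.comp c1)))
  have hVm : Measurable fun ω => (U ω, (Z' ω, Z'' ω)) := hUm.prodMk (hZ'm.prodMk hZ''m)
  have step2 : ∫ p, F p ∂(Measure.map (fun ω => (U ω, (Z' ω, Z'' ω))) ℙ) = ∫ ω, Real.exp (t * W ω) ∂ℙ :=
    integral_map hVm.aemeasurable hFc.aestronglyMeasurable
  have hFint : Integrable F ((Measure.map U ℙ).prod ((Measure.map Z' ℙ).prod (Measure.map Z'' ℙ))) := by
    rw [← hmapTriple,
      integrable_map_measure hFc.aestronglyMeasurable hVm.aemeasurable]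
    exact hintW
  -- Fubini
  have step3 : ∫ p, F p ∂((Measure.map U ℙ).prod ((Measure.map Z' ℙ).prod (Measure.map Z'' ℙ)))
      = ∫ u, (∫ q, F (u, q) ∂((Measure.map Z' ℙ).prod (Measure.map Z'' ℙ))) ∂(Measure.map U ℙ) :=
    integral_prod F hFint
  -- inner integral computation, for every u
  have inner : ∀ u : ℝ, (∫ q, F (u, q) ∂((Measure.map Z' ℙ).prod (Measure.map Z'' ℙ)))
      = (∫ ω, Real.exp ((t*u) * Z ω) ∂ℙ) * (∫ ω, Real.exp ((t*(1-u)) * Z ω) ∂ℙ)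
          * Real.exp (t * g u) := by
    intro u
    have hFq : ∀ q : ℝ × ℝ, F (u, q)
        = (Real.exp ((t*u) * q.1) * Real.exp ((t*(1-u)) * q.2)) * Real.exp (t * g u) := by
      intro q
      rw [hF]
      simp only [← Real.exp_add]
      congr 1
      ring
    calc (∫ q, F (u, q) ∂((Measure.map Z' ℙ).prod (Measure.map Z'' ℙ)))
        = ∫ q : ℝ × ℝ, (Real.exp ((t*u) * q.1) * Real.exp ((t*(1-u)) * q.2))
            * Real.exp (t * g u) ∂((Measure.map Z' ℙ).prod (Measure.map Z'' ℙ)) := by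
          exact integral_congr_ae (Eventually.of_forall hFq)
      _ = (∫ q : ℝ × ℝ, Real.exp ((t*u) * q.1) * Real.exp ((t*(1-u)) * q.2)
            ∂((Measure.map Z' ℙ).prod (Measure.map Z'' ℙ))) * Real.exp (t * g u) := by
          exact integral_mul_const _ _
      _ = ((∫ z, Real.exp ((t*u) * z) ∂(Measure.map Z' ℙ)) * (∫ w, Real.exp ((t*(1-u)) * w) ∂(Measure.map Z'' ℙ)))
            * Real.exp (t * g u) := by
          exact congrArg (· * Real.exp (t * g u)) (integral_prod_mul (μ := Measure.map Z' ℙ) (ν := Measure.map Z'' ℙ) (fun z => Real.exp ((t*u) * z)) (fun w => Real.exp ((t*(1-u)) * w)))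
      _ = (∫ ω, Real.exp ((t*u) * Z ω) ∂ℙ) * (∫ ω, Real.exp ((t*(1-u)) * Z ω) ∂ℙ)
            * Real.exp (t * g u) := by
          rw [integral_map hZ'm.aemeasurable (hexp (t*u)).aestronglyMeasurable,
            integral_map hZ''m.aemeasurable (hexp (t*(1-u))).aestronglyMeasurable]
          have e1 := (hZ'.comp (hexp (t*u))).integral_eq
          have e2 := (hZ''.comp (hexp (t*(1-u)))).integral_eq
          simp only [Function.comp] at e1 e2
          rw [e1, e2]
  calc (∫ ω, Real.exp (t * Z ω) ∂ℙ)
      = ∫ p, F p ∂((Measure.map U ℙ).prod ((Measure.map Z' ℙ).prod (Measure.map Z'' ℙ))) := by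
        rw [← hmapTriple, step2, step1]
    _ = ∫ u, (∫ q, F (u, q) ∂((Measure.map Z' ℙ).prod (Measure.map Z'' ℙ))) ∂(Measure.map U ℙ) := step3
    _ = ∫ u, ((∫ ω, Real.exp ((t*u) * Z ω) ∂ℙ) * (∫ ω, Real.exp ((t*(1-u)) * Z ω) ∂ℙ)
          * Real.exp (t * g u)) ∂(Measure.map U ℙ) := integral_congr_ae (Eventually.of_forall inner)
    _ = ∫ u in Set.Icc (0:ℝ) 1,
          (∫ ω, Real.exp ((t*u) * Z ω) ∂ℙ) * (∫ ω, Real.exp ((t*(1-u)) * Z ω) ∂ℙ)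
            * Real.exp (t * g u) := by rw [hU]

/-- Lemma on the MGF on the negative axis: with `κ := 2 - 1/ln 2`,
there is `a ≥ 0` such that for all `t > 0`, `ψ(-t) < exp(κ·t·ln t + a·t + 1)`. -/
theorem quicksort_mgf_negative_axis
    {Ω : Type*} [MeasureSpace Ω] [IsProbabilityMeasure (ℙ : Measure Ω)]
    (Z Z' Z'' U : Ω → ℝ) (g : ℝ → ℝ)
    (hg : ∀ u : ℝ, g u = 2 * u * Real.log u + 2 * (1 - u) * Real.log (1 - u) + 1)
    (hZm : Measurable Z) (hZ'm : Measurable Z') (hZ''m : Measurable Z'')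
    (hUm : Measurable U)
    (hZ' : IdentDistrib Z' Z ℙ ℙ) (hZ'' : IdentDistrib Z'' Z ℙ ℙ)
    (hU : Measure.map U ℙ = volume.restrict (Set.Icc (0 : ℝ) 1))
    (hindep : iIndepFun (m := fun _ : Fin 3 => Real.measurableSpace) ![U, Z', Z''] ℙ)
    (hrec : IdentDistrib Z (fun ω => U ω * Z' ω + (1 - U ω) * Z'' ω + g (U ω)) ℙ ℙ)
    (hmean : ∫ ω, Z ω ∂ℙ = 0)
    (hmgf : ∀ t : ℝ, Integrable (fun ω => Real.exp (t * Z ω)) ℙ) :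
    ∃ a ≥ (0 : ℝ), ∀ t > (0 : ℝ),
      (∫ ω, Real.exp (-t * Z ω) ∂ℙ)
        < Real.exp ((2 - 1 / Real.log 2) * t * Real.log t + a * t + 1) := by
  have hgc : Continuous g := by
    have hgeq : g = fun u => 2*(u*Real.log u) + 2*((1-u)*Real.log (1-u)) + 1 := by
      funext u; rw [hg u]; ring
    rw [hgeq]
    exact ((continuous_const.mul Real.continuous_mul_log).add
      (continuous_const.mul (Real.continuous_mul_log.comp
        (continuous_const.sub continuous_id)))).add continuous_const
  set ψ : ℝ → ℝ := fun s => ∫ ω, Real.exp (s * Z ω) ∂ℙ with hψdef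
  have hψc : Continuous ψ := psi_continuous Z hZm hmgf
  have hψpos : ∀ s : ℝ, 0 < ψ s := fun s => ProbabilityTheory.mgf_pos (hmgf s)
  have hψ0 : ψ 0 = 1 := by simp [hψdef]
  -- numerics on log 2
  have hl2 : (0:ℝ) < Real.log 2 := Real.log_pos one_lt_two
  have hl2half : (1:ℝ)/2 < Real.log 2 := by
    have := Real.log_two_gt_d9; linarith
  have hl2one : Real.log 2 < 1 := by
    have := Real.log_two_lt_d9; linarith
  have hκpos : (0:ℝ) < 2 - 1 / Real.log 2 := by
    have h1 : 1 / Real.log 2 < 2 := by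
      rw [div_lt_iff₀ hl2]; linarith
    linarith
  have hκlt1 : 2 - 1 / Real.log 2 < 1 := by
    have h1 : 1 < 1 / Real.log 2 := by
      rw [lt_div_iff₀ hl2]; linarith
    linarith
  -- κ t log t ≥ -1/2 for all t > 0
  have hklog : ∀ t : ℝ, 0 < t → -(1/2 : ℝ) ≤ (2 - 1 / Real.log 2) * t * Real.log t := by
    intro t ht
    have h1 := aux_tlog_ge t ht
    have h2 : (2 - 1 / Real.log 2) * t * Real.log t = (2 - 1/Real.log 2) * (t * Real.log t) := by
      ring
    rw [h2]
    rcases le_or_gt 0 (t * Real.log t) with h | h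
    · nlinarith
    · nlinarith
  -- small-t region from continuity
  have hεex : ∃ ε : ℝ, 0 < ε ∧ ε ≤ 1 ∧ ∀ t : ℝ, 0 < t → t ≤ ε → ψ (-t) < Real.exp (1/2) := by
    have hcont : ContinuousAt (fun s : ℝ => ψ (-s)) 0 := (hψc.comp continuous_neg).continuousAt
    have hval : ψ (-(0:ℝ)) < Real.exp (1/2) := by
      rw [neg_zero, hψ0]
      nlinarith [Real.add_one_le_exp (1/2 : ℝ)]
    have hev : ∀ᶠ s in nhds (0:ℝ), ψ (-s) < Real.exp (1/2) :=
      hcont.tendsto.eventually (gt_mem_nhds hval)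
    obtain ⟨δ, hδ, hδ2⟩ := Metric.eventually_nhds_iff.1 hev
    refine ⟨min (δ/2) 1, by positivity, min_le_right _ _, fun t ht htε => ?_⟩
    apply hδ2
    rw [Real.dist_eq, sub_zero, abs_of_pos ht]
    have h1 : t ≤ min (δ/2) 1 := htε
    have h2 : min (δ/2) 1 ≤ δ/2 := min_le_left _ _
    linarith
  obtain ⟨ε, hε0, hε1, hεsmall⟩ := hεex
  obtain ⟨t₁, ht₁1, hJ⟩ := auxJ
  -- uniform bound on [0, t₁]
  obtain ⟨M, hM⟩ := isCompact_Icc.exists_bound_of_continuousOn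
    (f := fun t : ℝ => ψ (-t)) (s := Set.Icc 0 t₁) ((hψc.comp continuous_neg).continuousOn)
  have hM1 : (1:ℝ) ≤ M := by
    have h0 : (0:ℝ) ∈ Set.Icc (0:ℝ) t₁ := ⟨le_refl _, by linarith⟩
    have := hM 0 h0
    rw [Real.norm_eq_abs, neg_zero, hψ0] at this
    calc (1:ℝ) = |(1:ℝ)| := by norm_num
      _ ≤ M := this
  have hMψ : ∀ t ∈ Set.Icc (0:ℝ) t₁, ψ (-t) ≤ M := fun t ht =>
    le_trans (le_abs_self _) (hM t ht)
  set a : ℝ := max 0 ((Real.log (M+1) + 1)/ε) with hadef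
  have ha0 : (0:ℝ) ≤ a := le_max_left _ _
  have haε : Real.log (M+1) + 1 ≤ a * ε := by
    have h1 : (Real.log (M+1) + 1)/ε ≤ a := le_max_right _ _
    rw [div_le_iff₀ hε0] at h1
    linarith [mul_comm a ε]
  -- the claim on (0, t₁]
  have hsmall : ∀ t : ℝ, 0 < t → t ≤ t₁ →
      ψ (-t) < Real.exp ((2 - 1/Real.log 2)*t*Real.log t + a*t + 1) := by
    intro t ht htt₁
    rcases le_or_gt t ε with hte | hte
    · calc ψ (-t) < Real.exp (1/2) := hεsmall t ht hte
        _ ≤ Real.exp ((2 - 1/Real.log 2)*t*Real.log t + a*t + 1) := by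
          apply Real.exp_le_exp.2
          have := hklog t ht
          nlinarith
    · have h1 : ψ (-t) ≤ M := hMψ t ⟨ht.le, htt₁⟩
      have h2 : a * ε ≤ a * t := mul_le_mul_of_nonneg_left hte.le ha0
      have h3 : Real.log (M+1) < (2 - 1/Real.log 2)*t*Real.log t + a*t + 1 := by
        have := hklog t ht
        linarith
      calc ψ (-t) ≤ M := h1
        _ < M + 1 := by linarith
        _ = Real.exp (Real.log (M+1)) := (Real.exp_log (by linarith)).symm
        _ < Real.exp ((2 - 1/Real.log 2)*t*Real.log t + a*t + 1) := Real.exp_lt_exp.2 h3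
  refine ⟨a, ha0, fun t ht => ?_⟩
  show ψ (-t) < Real.exp ((2 - 1/Real.log 2)*t*Real.log t + a*t + 1)
  by_contra hcon
  push_neg at hcon
  -- the failure set
  set Sset : Set ℝ := {s : ℝ | t₁ ≤ s ∧
    Real.exp ((2 - 1/Real.log 2)*s*Real.log s + a*s + 1) ≤ ψ (-s)} with hSdef
  have hcont2 : Continuous fun s : ℝ =>
      Real.exp ((2 - 1/Real.log 2)*s*Real.log s + a*s + 1) := by
    have heq : (fun s : ℝ => Real.exp ((2 - 1/Real.log 2)*s*Real.log s + a*s + 1))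
        = fun s : ℝ => Real.exp ((2 - 1/Real.log 2)*(s*Real.log s) + (a*s + 1)) := by
      funext s; ring_nf
    rw [heq]
    exact Real.continuous_exp.comp ((continuous_const.mul Real.continuous_mul_log).add
      ((continuous_const.mul continuous_id).add continuous_const))
  have hclosed : IsClosed Sset := by
    have : Sset = Set.Ici t₁ ∩ {s : ℝ |
        Real.exp ((2 - 1/Real.log 2)*s*Real.log s + a*s + 1) ≤ ψ (-s)} := rfl
    rw [this]
    exact isClosed_Ici.inter (isClosed_le hcont2 (hψc.comp continuous_neg))
  have hne : Sset.Nonempty := by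
    refine ⟨t, ?_, hcon⟩
    by_contra htlt
    push_neg at htlt
    exact absurd hcon (not_le.2 (hsmall t ht htlt.le))
  have hbdd : BddBelow Sset := ⟨t₁, fun x hx => hx.1⟩
  set T : ℝ := sInf Sset with hTdef
  have hTmem : T ∈ Sset := hclosed.csInf_mem hne hbdd
  have hTt₁ : t₁ < T := by
    rcases lt_or_eq_of_le hTmem.1 with h | h
    · exact h
    · exfalso
      exact absurd hTmem.2 (not_le.2 (hsmall T (by rw [← h]; linarith) (le_of_eq h.symm)))
  have hTpos : (0:ℝ) < T := by linarith
  -- the claim holds strictly below T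
  have hbelow : ∀ s : ℝ, 0 < s → s < T →
      ψ (-s) < Real.exp ((2 - 1/Real.log 2)*s*Real.log s + a*s + 1) := by
    intro s hs hsT
    rcases le_or_gt s t₁ with h | h
    · exact hsmall s hs h
    · by_contra hc
      push_neg at hc
      exact absurd (csInf_le hbdd ⟨h.le, hc⟩) (not_le.2 hsT)
  -- a.e. facts on [0,1]
  have hae_ne : ∀ c : ℝ, ∀ᵐ u ∂(volume.restrict (Set.Icc (0:ℝ) 1)), u ≠ c := by
    intro c
    refine ae_restrict_of_ae (ae_iff.2 ?_)
    have : {u : ℝ | ¬ u ≠ c} = {c} := by ext x; simp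
    rw [this]
    exact Real.volume_singleton
  -- the recursion at -T
  have hrecT := quicksort_recursion Z Z' Z'' U g hgc hZm hZ'm hZ''m hUm hZ' hZ'' hU hindep
    hrec hmgf (-T)
  -- a.e. bound on the integrand
  have hbound : ∀ᵐ u ∂(volume.restrict (Set.Icc (0:ℝ) 1)),
      ψ ((-T)*u) * ψ ((-T)*(1-u)) * Real.exp ((-T) * g u)
        ≤ Real.exp ((2 - 1/Real.log 2)*T*Real.log T + a*T + 2 + T * auxE u) := by
    filter_upwards [ae_restrict_mem measurableSet_Icc, hae_ne 0, hae_ne 1] with u hu hu0 hu1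
    have hu0' : 0 < u := lt_of_le_of_ne hu.1 (Ne.symm hu0)
    have hu1' : u < 1 := lt_of_le_of_ne hu.2 hu1
    have h1u : 0 < 1 - u := by linarith
    have b1 : ψ (-(T*u)) < Real.exp ((2 - 1/Real.log 2)*(T*u)*Real.log (T*u) + a*(T*u) + 1) :=
      hbelow (T*u) (by positivity) (by nlinarith)
    have b2 : ψ (-(T*(1-u))) <
        Real.exp ((2 - 1/Real.log 2)*(T*(1-u))*Real.log (T*(1-u)) + a*(T*(1-u)) + 1) :=
      hbelow (T*(1-u)) (by positivity) (by nlinarith)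
    have hprod : ψ ((-T)*u) * ψ ((-T)*(1-u))
        < Real.exp ((2 - 1/Real.log 2)*(T*u)*Real.log (T*u) + a*(T*u) + 1)
          * Real.exp ((2 - 1/Real.log 2)*(T*(1-u))*Real.log (T*(1-u)) + a*(T*(1-u)) + 1) := by
      rw [neg_mul, neg_mul]
      exact mul_lt_mul'' b1 b2 (hψpos _).le (hψpos _).le
    have hmul : ψ ((-T)*u) * ψ ((-T)*(1-u)) * Real.exp ((-T) * g u)
        ≤ Real.exp ((2 - 1/Real.log 2)*(T*u)*Real.log (T*u) + a*(T*u) + 1)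
          * Real.exp ((2 - 1/Real.log 2)*(T*(1-u))*Real.log (T*(1-u)) + a*(T*(1-u)) + 1)
          * Real.exp ((-T) * g u) :=
      mul_le_mul_of_nonneg_right hprod.le (Real.exp_pos _).le
    refine le_trans hmul (le_of_eq ?_)
    rw [← Real.exp_add, ← Real.exp_add]
    congr 1
    rw [hg u]
    exact aux_exponent a T u hTpos hu0' hu1'
  -- integrate the bound
  have hint1 : IntegrableOn
      (fun u => ψ ((-T)*u) * ψ ((-T)*(1-u)) * Real.exp ((-T) * g u))
      (Set.Icc (0:ℝ) 1) volume := by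
    apply Continuous.integrableOn_Icc
    exact (((hψc.comp (continuous_const.mul continuous_id)).mul
      (hψc.comp (continuous_const.mul (continuous_const.sub continuous_id)))).mul
      (Real.continuous_exp.comp (continuous_const.mul hgc)))
  have hint2 : IntegrableOn
      (fun u => Real.exp ((2 - 1/Real.log 2)*T*Real.log T + a*T + 2 + T * auxE u))
      (Set.Icc (0:ℝ) 1) volume := by
    apply Continuous.integrableOn_Icc
    exact Real.continuous_exp.comp (continuous_const.add (continuous_const.mul auxE_continuous))
  have hstep : ψ (-T) ≤ Real.exp ((2 - 1/Real.log 2)*T*Real.log T + a*T) := by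
    have h1 : ψ (-T) ≤ ∫ u in Set.Icc (0:ℝ) 1,
        Real.exp ((2 - 1/Real.log 2)*T*Real.log T + a*T + 2 + T * auxE u) := by
      calc ψ (-T) = ∫ u in Set.Icc (0:ℝ) 1,
            ψ ((-T)*u) * ψ ((-T)*(1-u)) * Real.exp ((-T) * g u) := hrecT
        _ ≤ _ := integral_mono_ae hint1 hint2 hbound
    have h2 : (∫ u in Set.Icc (0:ℝ) 1,
        Real.exp ((2 - 1/Real.log 2)*T*Real.log T + a*T + 2 + T * auxE u))
        = Real.exp ((2 - 1/Real.log 2)*T*Real.log T + a*T + 2)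
          * ∫ u in Set.Icc (0:ℝ) 1, Real.exp (T * auxE u) := by
      rw [← integral_const_mul]
      exact integral_congr_ae (Filter.Eventually.of_forall fun u => by simp [← Real.exp_add])
    have h3 : Real.exp ((2 - 1/Real.log 2)*T*Real.log T + a*T + 2)
          * (∫ u in Set.Icc (0:ℝ) 1, Real.exp (T * auxE u))
        ≤ Real.exp ((2 - 1/Real.log 2)*T*Real.log T + a*T + 2) * Real.exp (-2) :=
      mul_le_mul_of_nonneg_left (hJ T hTt₁.le) (Real.exp_pos _).le
    rw [h2] at h1
    refine le_trans (le_trans h1 h3) (le_of_eq ?_)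
    rw [← Real.exp_add]
    ring_nf
  -- contradiction
  have hfinal : Real.exp ((2 - 1/Real.log 2)*T*Real.log T + a*T + 1) ≤
      Real.exp ((2 - 1/Real.log 2)*T*Real.log T + a*T) :=
    le_trans hTmem.2 hstep
  have := Real.exp_lt_exp.2 (show (2 - 1/Real.log 2)*T*Real.log T + a*T
      < (2 - 1/Real.log 2)*T*Real.log T + a*T + 1 by linarith)
  linarith
end

section
/- The moment generating function ψ(t) := E[exp(t·Z)] satisfies the functional equation ψ(t) = ∫₀¹ ψ(u·t)·ψ((1−u)·t)·exp(t·g(u)) du for every real t. -/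
open MeasureTheory ProbabilityTheory Real

/-- The MGF `ψ(t) := E[exp(t·Z)]` satisfies
`ψ(t) = ∫₀¹ ψ(u·t)·ψ((1-u)·t)·exp(t·g(u)) du` for every real `t`. -/
theorem quicksort_mgf_functional_equation
    {Ω : Type*} [MeasureSpace Ω] [IsProbabilityMeasure (ℙ : Measure Ω)]
    (Z Z' Z'' U : Ω → ℝ) (g : ℝ → ℝ)
    (hg : ∀ u : ℝ, g u = 2 * u * Real.log u + 2 * (1 - u) * Real.log (1 - u) + 1)
    (hZm : Measurable Z) (hZ'm : Measurable Z') (hZ''m : Measurable Z'')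
    (hUm : Measurable U)
    (hZ' : IdentDistrib Z' Z ℙ ℙ) (hZ'' : IdentDistrib Z'' Z ℙ ℙ)
    (hU : Measure.map U ℙ = volume.restrict (Set.Icc (0 : ℝ) 1))
    (hindep : iIndepFun (m := fun _ : Fin 3 => Real.measurableSpace) ![U, Z', Z''] ℙ)
    (hrec : IdentDistrib Z (fun ω => U ω * Z' ω + (1 - U ω) * Z'' ω + g (U ω)) ℙ ℙ)
    (hmean : ∫ ω, Z ω ∂ℙ = 0)
    (hmgf : ∀ t : ℝ, Integrable (fun ω => Real.exp (t * Z ω)) ℙ) :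
    ∀ t : ℝ,
      (∫ ω, Real.exp (t * Z ω) ∂ℙ)
        = ∫ u in (0 : ℝ)..1,
            (∫ ω, Real.exp (u * t * Z ω) ∂ℙ) * (∫ ω, Real.exp ((1 - u) * t * Z ω) ∂ℙ)
              * Real.exp (t * g u) := by
  intro t
  -- g is measurable
  have hgm : Measurable g := by
    have : g = fun u => 2 * u * Real.log u + 2 * (1 - u) * Real.log (1 - u) + 1 :=
      funext hg
    have m1 : Measurable fun u : ℝ => 2 * u * Real.log u :=
      (measurable_const.mul measurable_id).mul Real.measurable_log
    have m2 : Measurable fun u : ℝ => 2 * (1 - u) * Real.log (1 - u) :=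
      (measurable_const.mul (measurable_const.sub measurable_id)).mul
        (Real.measurable_log.comp (measurable_const.sub measurable_id))
    rw [this]; exact (m1.add m2).add measurable_const
  have hmeas : ∀ i, Measurable (![U, Z', Z''] i) := by
    intro i; fin_cases i <;> simpa
  -- independence of Z', Z''
  have hZZ : IndepFun Z' Z'' ℙ := by
    have := hindep.indepFun (i := 1) (j := 2) (by decide)
    simpa using this
  -- independence of U and (Z', Z'')
  have hUW : IndepFun U (fun ω => (Z' ω, Z'' ω)) ℙ := by
    have := (hindep.indepFun_prodMk hmeas 1 2 0 (by decide) (by decide)).symm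
    simpa using this
  -- joint law is a product
  have hmapW : Measure.map (fun ω => (Z' ω, Z'' ω)) ℙ = ((Measure.map Z' ℙ)).prod ((Measure.map Z'' ℙ)) :=
    (indepFun_iff_map_prod_eq_prod_map_map hZ'm.aemeasurable hZ''m.aemeasurable).mp hZZ
  have hWm : Measurable (fun ω => (Z' ω, Z'' ω)) := hZ'm.prodMk hZ''m
  have hmap : Measure.map (fun ω => (U ω, (Z' ω, Z'' ω))) ℙ
      = ((Measure.map U ℙ)).prod (((Measure.map Z' ℙ)).prod ((Measure.map Z'' ℙ))) := by
    rw [← hmapW]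
    exact (indepFun_iff_map_prod_eq_prod_map_map hUm.aemeasurable hWm.aemeasurable).mp hUW
  set F : ℝ × ℝ × ℝ → ℝ :=
    fun p => Real.exp (t * (p.1 * p.2.1 + (1 - p.1) * p.2.2 + g p.1)) with hF
  have hFm : Measurable F := by
    apply Measurable.exp; fun_prop
  have hTm : Measurable (fun ω => (U ω, (Z' ω, Z'' ω))) := hUm.prodMk hWm
  -- Step 1: rewrite LHS using hrec
  have h1 : (∫ ω, Real.exp (t * Z ω) ∂ℙ)
      = ∫ ω, F (U ω, (Z' ω, Z'' ω)) ∂ℙ := by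
    have := (hrec.comp (u := fun x => Real.exp (t * x)) (by fun_prop)).integral_eq
    simpa [hF] using this
  -- integrability of the composed function
  have hint : Integrable (fun ω => F (U ω, (Z' ω, Z'' ω))) ℙ := by
    have := (hrec.comp (u := fun x => Real.exp (t * x)) (by fun_prop)).integrable_iff.mp
      (hmgf t)
    simpa [hF, Function.comp_def] using this
  -- Step 2: push to the product measure
  have h2 : (∫ ω, F (U ω, (Z' ω, Z'' ω)) ∂ℙ)
      = ∫ p, F p ∂(((Measure.map U ℙ)).prod (((Measure.map Z' ℙ)).prod ((Measure.map Z'' ℙ)))) := by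
    rw [← hmap, integral_map hTm.aemeasurable hFm.aestronglyMeasurable]
  have hintF : Integrable F (((Measure.map U ℙ)).prod (((Measure.map Z' ℙ)).prod ((Measure.map Z'' ℙ)))) := by
    rw [← hmap]
    exact (integrable_map_measure hFm.aestronglyMeasurable hTm.aemeasurable).mpr hint
  -- Step 3: Fubini on the outer product
  have h3 : (∫ p, F p ∂(((Measure.map U ℙ)).prod (((Measure.map Z' ℙ)).prod ((Measure.map Z'' ℙ)))))
      = ∫ u, (∫ q, F (u, q) ∂(((Measure.map Z' ℙ)).prod ((Measure.map Z'' ℙ)))) ∂((Measure.map U ℙ)) :=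
    integral_prod F hintF
  -- Step 4: compute the inner integral for each u
  have h4 : ∀ u : ℝ, (∫ q, F (u, q) ∂(((Measure.map Z' ℙ)).prod ((Measure.map Z'' ℙ))))
      = (∫ ω, Real.exp (u * t * Z ω) ∂ℙ) * (∫ ω, Real.exp ((1 - u) * t * Z ω) ∂ℙ)
        * Real.exp (t * g u) := by
    intro u
    have mexp : ∀ c : ℝ, AEStronglyMeasurable (fun z : ℝ => Real.exp (c * z))
        (Measure.map Z' ℙ) ∧ AEStronglyMeasurable (fun z : ℝ => Real.exp (c * z))
        (Measure.map Z'' ℙ) := fun c =>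
      ⟨((measurable_const.mul measurable_id').exp).aestronglyMeasurable,
       ((measurable_const.mul measurable_id').exp).aestronglyMeasurable⟩
    have hfun : (fun q : ℝ × ℝ => F (u, q))
        = fun q => (fun z => Real.exp (u * t * z)) q.1 *
            (fun z => Real.exp ((1 - u) * t * z) * Real.exp (t * g u)) q.2 := by
      funext q
      simp only [hF, ← Real.exp_add]
      ring_nf
    rw [hfun]
    rw [show (∫ q : ℝ × ℝ, (fun z => Real.exp (u * t * z)) q.1 *
        (fun z => Real.exp ((1 - u) * t * z) * Real.exp (t * g u)) q.2
          ∂((Measure.map Z' ℙ)).prod ((Measure.map Z'' ℙ)))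
      = (∫ z, Real.exp (u * t * z) ∂(Measure.map Z' ℙ)) *
        ∫ z, Real.exp ((1 - u) * t * z) * Real.exp (t * g u) ∂(Measure.map Z'' ℙ)
      from integral_prod_mul (fun z => Real.exp (u * t * z)) (fun z => Real.exp ((1 - u) * t * z) * Real.exp (t * g u))]
    have e1 : (∫ z, Real.exp (u * t * z) ∂((Measure.map Z' ℙ)))
        = ∫ ω, Real.exp (u * t * Z ω) ∂ℙ := by
      rw [integral_map hZ'm.aemeasurable (mexp (u * t)).1]
      exact (hZ'.comp (u := fun x => Real.exp (u * t * x)) (by fun_prop)).integral_eq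
    have e2 : (∫ z, Real.exp ((1 - u) * t * z) * Real.exp (t * g u) ∂((Measure.map Z'' ℙ)))
        = (∫ ω, Real.exp ((1 - u) * t * Z ω) ∂ℙ) * Real.exp (t * g u) := by
      rw [integral_mul_const, integral_map hZ''m.aemeasurable (mexp ((1 - u) * t)).2]
      congr 1
      exact (hZ''.comp (u := fun x => Real.exp ((1 - u) * t * x)) (by fun_prop)).integral_eq
    rw [e1, e2]
    ring
  -- Step 5: the law of U is uniform on [0,1]
  rw [h1, h2, h3, hU]
  simp only [h4]
  rw [intervalIntegral.integral_of_le (by norm_num), ← integral_Icc_eq_integral_Ioc]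
end

section
/- Let ε > 0 be such that g(1/2 + ε) < 0, and set a := −g(1/2 + ε) > 0. Then for every real z, P(Z ≤ −z − a) ≥ 2ε · P(Z ≤ −z)². (Recursive inequality for the left tail.) -/
open MeasureTheory ProbabilityTheory Real

private lemma g_combo {x y c d : ℝ} (hx : 0 ≤ x) (hx1 : x ≤ 1) (hy : 0 ≤ y) (hy1 : y ≤ 1)
    (hc : 0 ≤ c) (hd : 0 ≤ d) (hcd : c + d = 1) :
    2 * (c*x + d*y) * Real.log (c*x + d*y) + 2 * (1 - (c*x + d*y)) * Real.log (1 - (c*x + d*y)) + 1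
      ≤ c * (2 * x * Real.log x + 2 * (1 - x) * Real.log (1 - x) + 1)
        + d * (2 * y * Real.log y + 2 * (1 - y) * Real.log (1 - y) + 1) := by
  have h1 := Real.convexOn_mul_log.2 (Set.mem_Ici.2 hx) (Set.mem_Ici.2 hy) hc hd hcd
  have h2 := Real.convexOn_mul_log.2 (Set.mem_Ici.2 (by linarith : (0:ℝ) ≤ 1 - x))
    (Set.mem_Ici.2 (by linarith : (0:ℝ) ≤ 1 - y)) hc hd hcd
  simp only [smul_eq_mul] at h1 h2
  have e : 1 - (c*x + d*y) = c*(1-x) + d*(1-y) := by linear_combination -hcd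
  rw [e]
  nlinarith [h1, h2]

/-- Recursive inequality for the left tail: if `ε > 0`,
`g(1/2 + ε) < 0` and `a := -g(1/2 + ε)`, then for every real `z`,
`P(Z ≤ -z - a) ≥ 2ε · P(Z ≤ -z)²`. -/
theorem quicksort_left_tail_recursive_inequality
    {Ω : Type*} [MeasureSpace Ω] [IsProbabilityMeasure (ℙ : Measure Ω)]
    (Z Z' Z'' U : Ω → ℝ) (g : ℝ → ℝ)
    (hg : ∀ u : ℝ, g u = 2 * u * Real.log u + 2 * (1 - u) * Real.log (1 - u) + 1)
    (hZm : Measurable Z) (hZ'm : Measurable Z') (hZ''m : Measurable Z'')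
    (hUm : Measurable U)
    (hZ' : IdentDistrib Z' Z ℙ ℙ) (hZ'' : IdentDistrib Z'' Z ℙ ℙ)
    (hU : Measure.map U ℙ = volume.restrict (Set.Icc (0 : ℝ) 1))
    (hindep : iIndepFun ![U, Z', Z''] ℙ)
    (hrec : IdentDistrib Z (fun ω => U ω * Z' ω + (1 - U ω) * Z'' ω + g (U ω)) ℙ ℙ)
    (hmean : ∫ ω, Z ω ∂ℙ = 0)
    (hmgf : ∀ t : ℝ, Integrable (fun ω => Real.exp (t * Z ω)) ℙ)
    (ε a : ℝ) (hε : 0 < ε) (hgε : g (1 / 2 + ε) < 0) (ha : a = -g (1 / 2 + ε)) :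
    ∀ z : ℝ,
      2 * ε * (ℙ {ω | Z ω ≤ -z}).toReal ^ 2 ≤ (ℙ {ω | Z ω ≤ -z - a}).toReal := by
  intro z
  -- First, `ε < 1/2`, since `g ≥ 1` on `[1, ∞)`.
  have hεhalf : ε < 1/2 := by
    by_contra h
    push_neg at h
    set v : ℝ := 1/2 + ε with hv
    have hv1 : (1:ℝ) ≤ v := by rw [hv]; linarith
    have hlog : Real.log (1 - v) = Real.log (v - 1) := by
      rw [show (1:ℝ) - v = -(v-1) by ring, Real.log_neg_eq_log]
    have h1 : (v-1) * Real.log (v-1) ≤ v * Real.log v := by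
      rcases le_or_gt (v-1) 1 with hle | hlt
      · have hnp : Real.log (v-1) ≤ 0 := Real.log_nonpos (by linarith) hle
        have h2 : (v-1) * Real.log (v-1) ≤ 0 :=
          mul_nonpos_of_nonneg_of_nonpos (by linarith) hnp
        have h3 : 0 ≤ v * Real.log v := mul_nonneg (by linarith) (Real.log_nonneg hv1)
        linarith
      · have hlog2 : Real.log (v-1) ≤ Real.log v := Real.log_le_log (by linarith) (by linarith)
        have h4 : (v-1) * Real.log (v-1) ≤ (v-1) * Real.log v :=
          mul_le_mul_of_nonneg_left hlog2 (by linarith)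
        have h5 : 0 ≤ Real.log v := Real.log_nonneg hv1
        nlinarith
    have : 0 ≤ g v := by rw [hg, hlog]; nlinarith
    linarith
  -- Symmetry: `g (1/2 - ε) = g (1/2 + ε)`.
  have hsym : g (1/2 - ε) = g (1/2 + ε) := by
    rw [hg, hg, show (1:ℝ) - (1/2 - ε) = 1/2 + ε by ring,
      show (1:ℝ) - (1/2 + ε) = 1/2 - ε by ring]
    ring
  -- Convexity: `g u ≤ g (1/2 + ε)` on `[1/2 - ε, 1/2 + ε]`.
  have hgmono : ∀ u : ℝ, 1/2 - ε ≤ u → u ≤ 1/2 + ε → g u ≤ g (1/2 + ε) := by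
    intro u h1 h2
    set c : ℝ := ((1/2 + ε) - u) / (2*ε) with hc'
    set d : ℝ := (u - (1/2 - ε)) / (2*ε) with hd'
    have hc : 0 ≤ c := div_nonneg (by linarith) (by linarith)
    have hd : 0 ≤ d := div_nonneg (by linarith) (by linarith)
    have hcd : c + d = 1 := by rw [hc', hd']; field_simp; ring
    have hu : c * (1/2 - ε) + d * (1/2 + ε) = u := by rw [hc', hd']; field_simp; ring
    have key : g u ≤ c * g (1/2 - ε) + d * g (1/2 + ε) := by
      rw [hg u, hg (1/2 - ε), hg (1/2 + ε), ← hu]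
      exact g_combo (by linarith) (by linarith) (by linarith) (by linarith) hc hd hcd
    rw [hsym, ← add_mul, hcd, one_mul] at key
    exact key
  -- Probabilistic part.
  set p := ℙ {ω | Z ω ≤ -z} with hp
  set S0 : Set ℝ := Set.Icc (1/2 - ε) (1/2 + ε) with hS0
  have hPU : ℙ (U ⁻¹' S0) = ENNReal.ofReal (2*ε) := by
    rw [hS0, ← Measure.map_apply hUm measurableSet_Icc, hU,
      Measure.restrict_apply measurableSet_Icc,
      Set.inter_eq_left.mpr (Set.Icc_subset_Icc (by linarith) (by linarith)),
      Real.volume_Icc]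
    congr 1; ring
  have hPZ' : ℙ (Z' ⁻¹' Set.Iic (-z)) = p := hZ'.measure_mem_eq measurableSet_Iic
  have hPZ'' : ℙ (Z'' ⁻¹' Set.Iic (-z)) = p := hZ''.measure_mem_eq measurableSet_Iic
  have hindep' := (ProbabilityTheory.iIndepFun_iff_measure_inter_preimage_eq_mul.mp hindep)
    Finset.univ (sets := ![S0, Set.Iic (-z), Set.Iic (-z)])
    (fun i _ => by fin_cases i <;>
      simp [hS0, measurableSet_Icc, measurableSet_Iic])
  have hsetue : (⋂ i ∈ Finset.univ, ![U, Z', Z''] i ⁻¹' ![S0, Set.Iic (-z), Set.Iic (-z)] i)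
      = U ⁻¹' S0 ∩ Z' ⁻¹' Set.Iic (-z) ∩ Z'' ⁻¹' Set.Iic (-z) := by
    ext ω
    simp [Set.mem_iInter, Fin.forall_fin_succ, and_assoc]
  rw [hsetue, Fin.prod_univ_three] at hindep'
  simp only [Matrix.cons_val_zero, Matrix.cons_val_one, Matrix.head_cons,
    Matrix.cons_val_two, Matrix.tail_cons] at hindep'
  rw [hPU, hPZ', hPZ''] at hindep'
  -- The intersection event forces `Z ≤ -z - a` for the recursion.
  have hsub : U ⁻¹' S0 ∩ Z' ⁻¹' Set.Iic (-z) ∩ Z'' ⁻¹' Set.Iic (-z)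
      ⊆ (fun ω => U ω * Z' ω + (1 - U ω) * Z'' ω + g (U ω)) ⁻¹' Set.Iic (-z - a) := by
    rintro ω ⟨⟨hU0, h1⟩, h2⟩
    simp only [Set.mem_preimage, Set.mem_Iic] at h1 h2 ⊢
    rw [hS0, Set.mem_preimage, Set.mem_Icc] at hU0
    obtain ⟨ha1, ha2⟩ := hU0
    have hga : g (U ω) ≤ -a := by
      rw [ha, neg_neg]; exact hgmono (U ω) ha1 ha2
    have e1 : U ω * Z' ω ≤ U ω * (-z) := mul_le_mul_of_nonneg_left h1 (by linarith)
    have e2 : (1 - U ω) * Z'' ω ≤ (1 - U ω) * (-z) :=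
      mul_le_mul_of_nonneg_left h2 (by linarith)
    nlinarith [e1, e2, hga]
  have hmain : ENNReal.ofReal (2*ε) * p * p ≤ ℙ {ω | Z ω ≤ -z - a} := by
    rw [show {ω | Z ω ≤ -z - a} = Z ⁻¹' Set.Iic (-z - a) from rfl,
      hrec.measure_mem_eq measurableSet_Iic]
    rw [← hindep']
    exact measure_mono hsub
  have htr : (ENNReal.ofReal (2*ε) * p * p).toReal = 2 * ε * p.toReal ^ 2 := by
    rw [ENNReal.toReal_mul, ENNReal.toReal_mul, ENNReal.toReal_ofReal (by positivity)]
    ring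
  calc 2 * ε * p.toReal ^ 2 = (ENNReal.ofReal (2*ε) * p * p).toReal := htr.symm
    _ ≤ (ℙ {ω | Z ω ≤ -z - a}).toReal := ENNReal.toReal_mono (measure_ne_top _ _) hmain
end
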